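/- arXiv:1108.2825 — 6 statements merged into one kernel-verified Lean document; each statement's English description precedes it below -/
import Mathlib

section
/- Let α ∈ (0,∞) be non-integer, n = ⌊α⌋ + 1, and let x : (0,∞) → ℝ be a non-constant T-periodic function of class C^n (T > 0). Then the Caputo fractional derivative of x of order α, defined by (C_D^α x)(t) = (1/Γ(n-α)) ∫₀^t (t-s)^{n-α-1} x^(n)(s) ds, is not a T-periodic function. -/
open Set MeasureTheory intervalIntegral Polynomial
open scoped Interval

lemma sq_int_zero {T : ℝ} (hT : 0 < T) (ψ : ℝ → ℝ) (hψ : ContinuousOn ψ (Icc 0 T))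
    (hz : ∫ s in (0:ℝ)..T, (ψ s)^2 = 0) : ∀ s ∈ Icc (0:ℝ) T, ψ s = 0 := by
  have hint : ∀ a b : ℝ, 0 ≤ a → a ≤ b → b ≤ T →
      IntervalIntegrable (fun s => (ψ s)^2) volume a b := by
    intro a b ha hab hb
    exact ContinuousOn.intervalIntegrable_of_Icc hab
      (((hψ.mono (Icc_subset_Icc ha hb))).pow 2)
  by_contra hcon
  push_neg at hcon
  obtain ⟨s₀, hs₀, hne⟩ := hcon
  have hc : 0 < |ψ s₀| := abs_pos.mpr hne
  have hcont := hψ s₀ hs₀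
  rw [Metric.continuousWithinAt_iff] at hcont
  obtain ⟨δ, hδ, hcl⟩ := hcont _ hc
  set u₁ := max 0 (s₀ - δ/2) with hu₁
  set u₂ := min T (s₀ + δ/2) with hu₂
  have h01 : (0:ℝ) ≤ u₁ := le_max_left _ _
  have h2T : u₂ ≤ T := min_le_left _ _
  have h12 : u₁ < u₂ := by
    rcases lt_or_ge s₀ T with h | h
    · apply max_lt
      · exact lt_min hT (by linarith [hs₀.1])
      · exact lt_min (by linarith [hs₀.2]) (by linarith)
    · have hsT : s₀ = T := le_antisymm hs₀.2 h
      have h2 : u₂ = T := by rw [hu₂, hsT]; exact min_eq_left (by linarith)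
      rw [h2]
      exact max_lt hT (by rw [hsT]; linarith)
  have hpos : ∀ s ∈ Ioo u₁ u₂, 0 < (ψ s)^2 := by
    intro s hs
    have hsIcc : s ∈ Icc (0:ℝ) T := ⟨le_trans h01 hs.1.le, le_trans hs.2.le h2T⟩
    have hdist : dist s s₀ < δ := by
      rw [Real.dist_eq, abs_sub_lt_iff]
      have hA := lt_of_lt_of_le hs.2 (min_le_right T (s₀ + δ/2))
      have hB := lt_of_le_of_lt (le_max_right 0 (s₀ - δ/2)) hs.1
      constructor <;> linarith
    have hlt := hcl hsIcc hdist
    rw [Real.dist_eq] at hlt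
    have habs : |ψ s₀| - |ψ s| < |ψ s₀| := by
      have h1 := abs_sub_abs_le_abs_sub (ψ s₀) (ψ s)
      rw [abs_sub_comm] at hlt
      linarith
    have hψs : ψ s ≠ 0 := by
      intro h0; rw [h0, abs_zero] at habs; linarith
    positivity
  have hmid : 0 < ∫ s in u₁..u₂, (ψ s)^2 :=
    intervalIntegral_pos_of_pos_on (hint _ _ h01 h12.le h2T) hpos h12
  have hleft : 0 ≤ ∫ s in (0:ℝ)..u₁, (ψ s)^2 :=
    intervalIntegral.integral_nonneg h01 (fun s _ => sq_nonneg _)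
  have hright : 0 ≤ ∫ s in u₂..T, (ψ s)^2 :=
    intervalIntegral.integral_nonneg h2T (fun s _ => sq_nonneg _)
  have hsplit : (∫ s in (0:ℝ)..T, (ψ s)^2) =
      (∫ s in (0:ℝ)..u₁, (ψ s)^2) + (∫ s in u₁..u₂, (ψ s)^2) + (∫ s in u₂..T, (ψ s)^2) := by
    rw [integral_add_adjacent_intervals (hint 0 u₁ le_rfl h01 (le_trans h12.le h2T))
      (hint u₁ u₂ h01 h12.le h2T),
      integral_add_adjacent_intervals
        (hint 0 u₂ le_rfl (le_trans h01 h12.le) h2T) (hint u₂ T (le_trans h01 h12.le) h2T le_rfl)]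
  rw [hsplit] at hz
  linarith

lemma moment_zero {T : ℝ} (hT : 0 < T) (ψ : ℝ → ℝ) (hψ : ContinuousOn ψ (Icc 0 T))
    (hm : ∀ k : ℕ, ∫ s in (0:ℝ)..T, ψ s * ((2*T - s)⁻¹)^k = 0) :
    ∀ s ∈ Icc (0:ℝ) T, ψ s = 0 := by
  have hbase : ∀ s ∈ Icc (0:ℝ) T, T ≤ 2*T - s ∧ 2*T - s ≤ 2*T := by
    intro s hs; exact ⟨by linarith [hs.2], by linarith [hs.1]⟩
  have hne : ∀ s ∈ Icc (0:ℝ) T, 2*T - s ≠ 0 := fun s hs =>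
    ne_of_gt (lt_of_lt_of_le hT (hbase s hs).1)
  have cInv : ContinuousOn (fun s => (2*T - s)⁻¹) (Icc 0 T) :=
    ((continuous_const.sub continuous_id).continuousOn).inv₀ hne
  have hIψ2 : IntervalIntegrable (fun s => (ψ s)^2) volume 0 T :=
    ContinuousOn.intervalIntegrable_of_Icc hT.le (hψ.pow 2)
  -- integral against any polynomial in the inverse variable vanishes
  have hP : ∀ p : ℝ[X], ∫ s in (0:ℝ)..T, ψ s * p.eval ((2*T - s)⁻¹) = 0 := by
    intro p
    have hfun : ∀ s : ℝ, ψ s * p.eval ((2*T - s)⁻¹)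
        = ∑ i ∈ Finset.range (p.natDegree + 1), p.coeff i * (ψ s * ((2*T - s)⁻¹)^i) := by
      intro s
      rw [eval_eq_sum_range, Finset.mul_sum]
      exact Finset.sum_congr rfl fun i _ => by ring
    have hIi : ∀ i : ℕ, IntervalIntegrable
        (fun s => p.coeff i * (ψ s * ((2*T - s)⁻¹)^i)) volume 0 T := by
      intro i
      exact ContinuousOn.intervalIntegrable_of_Icc hT.le
        (continuousOn_const.mul (hψ.mul (cInv.pow i)))
    calc ∫ s in (0:ℝ)..T, ψ s * p.eval ((2*T - s)⁻¹)
        = ∫ s in (0:ℝ)..T, ∑ i ∈ Finset.range (p.natDegree + 1),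
            p.coeff i * (ψ s * ((2*T - s)⁻¹)^i) := by
          exact intervalIntegral.integral_congr fun s _ => hfun s
      _ = ∑ i ∈ Finset.range (p.natDegree + 1),
            ∫ s in (0:ℝ)..T, p.coeff i * (ψ s * ((2*T - s)⁻¹)^i) := by
          exact intervalIntegral.integral_finset_sum (fun i _ => hIi i)
      _ = 0 := by
          refine Finset.sum_eq_zero fun i _ => ?_
          rw [intervalIntegral.integral_const_mul, hm i, mul_zero]
  -- bound of ψ
  obtain ⟨M, hM⟩ := IsCompact.exists_bound_of_continuousOn isCompact_Icc hψ
  have hM0 : 0 ≤ M := le_trans (norm_nonneg _) (hM 0 ⟨le_rfl, hT.le⟩)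
  -- the squared integral is zero
  have hsq : ∫ s in (0:ℝ)..T, (ψ s)^2 = 0 := by
    have key : ∀ ε > (0:ℝ), |∫ s in (0:ℝ)..T, (ψ s)^2| ≤ (M * ε) * T := by
      intro ε hε
      have hφ : ContinuousOn (fun v => ψ (2*T - v⁻¹)) (Icc (2*T)⁻¹ T⁻¹) := by
        apply hψ.comp
        · exact continuous_const.continuousOn.sub
            (continuousOn_id.inv₀ fun v hv => ne_of_gt (lt_of_lt_of_le (by positivity) hv.1))
        · intro v hv
          have hv0 : 0 < v := lt_of_lt_of_le (by positivity) hv.1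
          have h1 : T ≤ v⁻¹ := by
            rw [le_inv_comm₀ hT hv0]; exact hv.2
          have h2 : v⁻¹ ≤ 2*T := by
            rw [inv_le_comm₀ hv0 (by positivity)]; exact hv.1
          exact ⟨by linarith, by linarith⟩
      obtain ⟨p, hp⟩ := exists_polynomial_near_of_continuousOn ((2*T)⁻¹) (T⁻¹) _ hφ ε hε
      have hpt : ∀ s ∈ Icc (0:ℝ) T, |ψ s - p.eval ((2*T - s)⁻¹)| ≤ ε := by
        intro s hs
        have h1 := (hbase s hs).1
        have h2 := (hbase s hs).2
        have hpos : (0:ℝ) < 2*T - s := lt_of_lt_of_le hT h1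
        have hv : (2*T - s)⁻¹ ∈ Icc ((2*T)⁻¹) (T⁻¹) := by
          constructor
          · exact inv_anti₀ (by positivity) h2 |>.trans_eq rfl |> fun h => h
          · exact inv_anti₀ hT h1
        have hpe := hp _ hv
        rw [inv_inv] at hpe
        have hval : (2*T - (2*T - s)) = s := by ring
        rw [hval] at hpe
        rw [abs_sub_comm]
        exact le_of_lt hpe
      have hIψq : IntervalIntegrable (fun s => ψ s * p.eval ((2*T - s)⁻¹)) volume 0 T :=
        ContinuousOn.intervalIntegrable_of_Icc hT.le (hψ.mul (Polynomial.continuous p |>.comp_continuousOn cInv))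
      have heq : (∫ s in (0:ℝ)..T, (ψ s)^2)
          = ∫ s in (0:ℝ)..T, ψ s * (ψ s - p.eval ((2*T - s)⁻¹)) := by
        have hfun : (fun s => ψ s * (ψ s - p.eval ((2*T - s)⁻¹)))
            = fun s => (ψ s)^2 - ψ s * p.eval ((2*T - s)⁻¹) := funext fun s => by ring
        rw [hfun, intervalIntegral.integral_sub hIψ2 hIψq, hP p, sub_zero]
      rw [heq]
      have hb := intervalIntegral.norm_integral_le_of_norm_le_const
        (C := M * ε) (f := fun s => ψ s * (ψ s - p.eval ((2*T - s)⁻¹)))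
        (a := 0) (b := T) (fun s hs => by
          rw [uIoc_of_le hT.le] at hs
          have hsIcc : s ∈ Icc (0:ℝ) T := ⟨hs.1.le, hs.2⟩
          have := hpt s hsIcc
          have hMx := hM s hsIcc
          rw [Real.norm_eq_abs] at hMx ⊢
          rw [abs_mul]
          exact mul_le_mul hMx this (abs_nonneg _) hM0)
      rw [Real.norm_eq_abs] at hb
      calc |∫ s in (0:ℝ)..T, ψ s * (ψ s - p.eval ((2*T - s)⁻¹))|
          ≤ M * ε * |T - 0| := hb
        _ = M * ε * T := by rw [sub_zero, abs_of_pos hT]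
    by_contra hne'
    have hpos : 0 < |∫ s in (0:ℝ)..T, (ψ s)^2| := abs_pos.mpr hne'
    set c := |∫ s in (0:ℝ)..T, (ψ s)^2| with hc
    have hMT : 0 < M * T + 1 := by positivity
    have := key (c / (2 * (M * T + 1))) (by positivity)
    have h2 : M * (c / (2 * (M * T + 1))) * T ≤ c / 2 := by
      have heq2 : M * (c / (2 * (M * T + 1))) * T = (M*T*c) / (2*(M*T+1)) := by ring
      rw [heq2, div_le_div_iff₀ (by positivity) two_pos]
      nlinarith [hpos.le, hM0, hT.le]
    linarith
  exact sq_int_zero hT ψ hψ hsq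

lemma const_on_Ioi {f : ℝ → ℝ} (hf : ∀ s ∈ Ioi (0:ℝ), HasDerivAt f 0 s) :
    ∀ ⦃s t : ℝ⦄, 0 < s → 0 < t → f s = f t := by
  intro s t hs ht
  apply (convex_Ioi (0:ℝ)).is_const_of_fderivWithin_eq_zero (𝕜 := ℝ)
    (f := f) (fun u hu => ((hf u hu).differentiableAt).differentiableWithinAt)
    (fun u hu => ?_) hs ht
  rw [fderivWithin_of_isOpen isOpen_Ioi hu]
  have h1 : fderiv ℝ f u = ContinuousLinearMap.smulRight (1 : ℝ →L[ℝ] ℝ) 0 :=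
    (hf u hu).hasFDerivAt.fderiv
  rw [h1]
  ext
  simp

lemma itdw_open {f : ℝ → ℝ} {s : Set ℝ} (hs : IsOpen s) (k : ℕ) :
    Set.EqOn (iteratedDerivWithin k f s) (iteratedDeriv k f) s := by
  intro u hu
  rw [iteratedDerivWithin, iteratedDeriv, iteratedFDerivWithin_of_isOpen k hs hu]

lemma hasDeriv_iter {n : ℕ} {x : ℝ → ℝ} (hC : ContDiffOn ℝ n x (Ioi 0))
    {j : ℕ} (hj : j < n) {s : ℝ} (hs : s ∈ Ioi (0:ℝ)) :
    HasDerivAt (iteratedDeriv j x) (iteratedDeriv (j+1) x s) s := by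
  have hd : DifferentiableOn ℝ (iteratedDerivWithin j x (Ioi 0)) (Ioi 0) :=
    hC.differentiableOn_iteratedDerivWithin (by exact_mod_cast hj) (uniqueDiffOn_Ioi 0)
  have hda : DifferentiableAt ℝ (iteratedDerivWithin j x (Ioi 0)) s :=
    (hd s hs).differentiableAt (isOpen_Ioi.mem_nhds hs)
  have hev : iteratedDerivWithin j x (Ioi 0) =ᶠ[nhds s] iteratedDeriv j x :=
    Filter.eventuallyEq_of_mem (isOpen_Ioi.mem_nhds hs) (itdw_open isOpen_Ioi j)
  have hda' : DifferentiableAt ℝ (iteratedDeriv j x) s := hda.congr_of_eventuallyEq hev.symm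
  have := hda'.hasDerivAt
  rwa [iteratedDeriv_succ]

lemma x_const {n : ℕ} (hn1 : 1 ≤ n) {T : ℝ} (hT : 0 < T) {x : ℝ → ℝ}
    (hC : ContDiffOn ℝ n x (Ioi 0))
    (hper : ∀ k : ℕ, ∀ s > (0:ℝ), iteratedDeriv k x (s+T) = iteratedDeriv k x s)
    (hzero : ∀ s > (0:ℝ), iteratedDeriv n x s = 0) :
    ∀ ⦃s t : ℝ⦄, 0 < s → 0 < t → x s = x t := by
  have key : ∀ m i : ℕ, (i+1) + m = n → ∀ s > (0:ℝ), iteratedDeriv (i+1) x s = 0 := by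
    intro m
    induction m with
    | zero => intro i hi s hs; rw [← Nat.add_zero (i+1), hi] at *; exact hzero s hs
    | succ m IH =>
      intro i hi s hs
      have hz2 : ∀ s > (0:ℝ), iteratedDeriv (i+2) x s = 0 := IH (i+1) (by omega)
      have hconst : ∀ ⦃a b : ℝ⦄, 0 < a → 0 < b →
          iteratedDeriv (i+1) x a = iteratedDeriv (i+1) x b := by
        apply const_on_Ioi
        intro u hu
        have := hasDeriv_iter hC (j := i+1) (by omega) hu
        rwa [hz2 u hu] at this
      set c := iteratedDeriv (i+1) x T with hc
      have hgder : ∀ u ∈ Ioi (0:ℝ), HasDerivAt (fun v => iteratedDeriv i x v - c * v) 0 u := by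
        intro u hu
        have h1 : HasDerivAt (iteratedDeriv i x) c u := by
          have := hasDeriv_iter hC (j := i) (by omega) hu
          rwa [hconst hu hT] at this
        have h2 : HasDerivAt (fun v : ℝ => c * v) c u := by
          simpa using (hasDerivAt_id u).const_mul c
        simpa using h1.fun_sub h2
      have hgc := const_on_Ioi hgder (s := T + T) (t := T) (by linarith) hT
      have hgTT : iteratedDeriv i x (T + T) = iteratedDeriv i x T := hper i T hT
      have hc0 : c = 0 := by
        rw [hgTT] at hgc
        have : c * (T + T) - c * T = 0 := by linarith
        have hcT : c * T = 0 := by ring_nf at this ⊢; linarith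
        exact (mul_eq_zero.mp hcT).resolve_right (ne_of_gt hT)
      rw [hconst hs hT, ← hc, hc0]
  intro s t hs ht
  have h1 : ∀ s > (0:ℝ), iteratedDeriv 1 x s = 0 := key (n-1) 0 (by omega)
  apply const_on_Ioi (f := x) ?_ hs ht
  intro u hu
  have := hasDeriv_iter hC (j := 0) (by omega) hu
  rw [iteratedDeriv_zero] at this
  rwa [h1 u hu] at this

lemma Mstep {T β : ℝ} (hT : 0 < T) (hβ : β < 1) {y : ℝ → ℝ}
    (hy : ContinuousOn y (Icc 0 T)) (k : ℕ)
    (hk : ∀ τ > T, (∫ s in (0:ℝ)..T, (τ - s) ^ (β - 1 - k) * y s) = 0) :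
    ∀ τ > T, (∫ s in (0:ℝ)..T, (τ - s) ^ (β - 1 - (k+1:ℕ)) * y s) = 0 := by
  intro τ₀ hτ₀
  set p : ℝ := β - 1 - k with hp
  have hδ : (0:ℝ) < (τ₀ - T)/2 := by linarith
  set δ := (τ₀ - T)/2 with hδdef
  obtain ⟨B, hB⟩ := IsCompact.exists_bound_of_continuousOn isCompact_Icc hy
  have hB0 : 0 ≤ B := le_trans (norm_nonneg _) (hB 0 ⟨le_rfl, hT.le⟩)
  set F : ℝ → ℝ → ℝ := fun τ s => (τ - s) ^ p * y s with hF
  set F' : ℝ → ℝ → ℝ := fun τ s => (p * (τ - s) ^ (p - 1)) * y s with hF'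
  -- positivity of τ - s for τ in the ball and s in the interval
  have hpos : ∀ τ ∈ Metric.ball τ₀ δ, ∀ s ∈ Ι (0:ℝ) T, δ < τ - s := by
    intro τ hτ s hs
    rw [uIoc_of_le hT.le] at hs
    rw [Metric.mem_ball, Real.dist_eq, abs_sub_lt_iff] at hτ
    have := hs.2
    simp only [hδdef] at *
    linarith
  have hmeasF : ∀ᶠ τ in nhds τ₀, AEStronglyMeasurable (F τ) (volume.restrict (Ι (0:ℝ) T)) := by
    filter_upwards [Metric.ball_mem_nhds τ₀ hδ] with τ hτ
    apply ContinuousOn.aestronglyMeasurable _ measurableSet_uIoc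
    apply ContinuousOn.mul
    · apply ContinuousOn.rpow_const (continuous_const.sub continuous_id).continuousOn
      intro s hs
      exact Or.inl (ne_of_gt (by simpa [id_eq] using lt_trans hδ (hpos τ hτ s hs)))
    · apply hy.mono
      rw [uIoc_of_le hT.le]; exact Ioc_subset_Icc_self
  have hintF : IntervalIntegrable (F τ₀) volume 0 T := by
    apply ContinuousOn.intervalIntegrable_of_Icc hT.le
    apply ContinuousOn.mul _ hy
    apply ContinuousOn.rpow_const (continuous_const.sub continuous_id).continuousOn
    intro s hs
    have : s ≤ T := hs.2
    exact Or.inl (ne_of_gt (by simp only [Pi.sub_apply, id_eq]; linarith))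
  have hmeasF' : AEStronglyMeasurable (F' τ₀) (volume.restrict (Ι (0:ℝ) T)) := by
    apply ContinuousOn.aestronglyMeasurable _ measurableSet_uIoc
    rw [uIoc_of_le hT.le]
    apply ContinuousOn.mul
    · apply ContinuousOn.mul continuousOn_const
      apply ContinuousOn.rpow_const (continuous_const.sub continuous_id).continuousOn
      intro s hs
      have : s ≤ T := hs.2
      exact Or.inl (ne_of_gt (by simp only [Pi.sub_apply, id_eq]; linarith))
    · exact hy.mono Ioc_subset_Icc_self
  have hbound : ∀ᵐ s ∂volume, s ∈ Ι (0:ℝ) T → ∀ τ ∈ Metric.ball τ₀ δ,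
      ‖F' τ s‖ ≤ |p| * δ ^ (p - 1) * B := by
    filter_upwards with s hs τ hτ
    have hδτ := hpos τ hτ s hs
    have hsIcc : s ∈ Icc (0:ℝ) T := by
      rw [uIoc_of_le hT.le] at hs; exact ⟨hs.1.le, hs.2⟩
    have h1 : (τ - s) ^ (p - 1) ≤ δ ^ (p - 1) := by
      apply Real.rpow_le_rpow_of_nonpos hδ hδτ.le
      have : (0:ℝ) ≤ (k:ℝ) := Nat.cast_nonneg k
      simp only [hp]; linarith
    have h2 : (0:ℝ) ≤ (τ - s) ^ (p - 1) := Real.rpow_nonneg (by linarith) _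
    rw [hF']
    simp only [norm_mul, Real.norm_eq_abs, abs_mul]
    rw [abs_of_nonneg h2]
    have hBs := hB s hsIcc
    rw [Real.norm_eq_abs] at hBs
    apply mul_le_mul _ hBs (abs_nonneg _) (by positivity)
    exact mul_le_mul_of_nonneg_left h1 (abs_nonneg _)
  have hbint : IntervalIntegrable (fun _ : ℝ => |p| * δ ^ (p - 1) * B) volume 0 T :=
    intervalIntegrable_const
  have hdiff : ∀ᵐ s ∂volume, s ∈ Ι (0:ℝ) T → ∀ τ ∈ Metric.ball τ₀ δ,
      HasDerivAt (fun τ => F τ s) (F' τ s) τ := by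
    filter_upwards with s hs τ hτ
    have hδτ := hpos τ hτ s hs
    have h1 : HasDerivAt (fun τ : ℝ => τ - s) 1 τ := (hasDerivAt_id τ).sub_const s
    have h2 : HasDerivAt (fun z : ℝ => z ^ p) (p * (τ - s) ^ (p - 1)) (τ - s) :=
      Real.hasDerivAt_rpow_const (Or.inl (ne_of_gt (by linarith)))
    have h3 := (h2.comp τ h1).mul_const (y s)
    simpa [hF, hF'] using h3
  have hD := (intervalIntegral.hasDerivAt_integral_of_dominated_loc_of_deriv_le (Metric.ball_mem_nhds τ₀ hδ)
    hmeasF hintF hmeasF' hbound hbint hdiff).2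
  -- the integral function is locally zero, so its derivative vanishes
  have hloc : (fun τ => ∫ s in (0:ℝ)..T, F τ s) =ᶠ[nhds τ₀] (fun _ => (0:ℝ)) := by
    filter_upwards [Metric.ball_mem_nhds τ₀ hδ] with τ hτ
    rw [Metric.mem_ball, Real.dist_eq, abs_sub_lt_iff] at hτ
    exact hk τ (by simp only [hδdef] at hτ; linarith [hτ.1, hτ.2])
  have hD0 : HasDerivAt (fun _ : ℝ => (0:ℝ)) (∫ s in (0:ℝ)..T, F' τ₀ s) τ₀ :=
    hD.congr_of_eventuallyEq hloc.symm
  have hzero : (∫ s in (0:ℝ)..T, F' τ₀ s) = 0 :=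
    hD0.unique (hasDerivAt_const τ₀ 0)
  have hrw : (∫ s in (0:ℝ)..T, F' τ₀ s)
      = p * ∫ s in (0:ℝ)..T, (τ₀ - s) ^ (p - 1) * y s := by
    rw [← intervalIntegral.integral_const_mul]
    apply intervalIntegral.integral_congr
    intro s _
    simp only [hF']; ring
  rw [hrw] at hzero
  have hpne : p ≠ 0 := by
    have : (0:ℝ) ≤ (k:ℝ) := Nat.cast_nonneg k
    simp only [hp]; intro h; nlinarith [h]
  have hfinal := (mul_eq_zero.mp hzero).resolve_left hpne
  have hexp : β - 1 - ((k:ℕ)+1:ℕ) = p - 1 := by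
    simp only [hp]; push_cast; ring
  rw [hexp]
  exact hfinal


theorem caputo_deriv_not_periodic
    (α : ℝ) (hα : 0 < α) (hαnotint : ∀ m : ℕ, α ≠ m)
    (n : ℕ) (hn : n = ⌊α⌋₊ + 1)
    (T : ℝ) (hT : 0 < T) (x : ℝ → ℝ)
    (hC : ContDiffOn ℝ n x (Ioi 0))
    (hnc : ¬ ∃ c : ℝ, ∀ t > (0:ℝ), x t = c)
    (hper : ∀ t > (0:ℝ), x (t + T) = x t) :
    ¬ ∀ t ≥ (0:ℝ),
        (1 / Real.Gamma (n - α)) *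
            ∫ s in (0:ℝ)..(t + T), (t + T - s) ^ ((n : ℝ) - α - 1) * iteratedDeriv n x s
          = (1 / Real.Gamma (n - α)) *
            ∫ s in (0:ℝ)..t, (t - s) ^ ((n : ℝ) - α - 1) * iteratedDeriv n x s := by
  intro H
  set β : ℝ := (n:ℝ) - α with hβdef
  set q : ℝ := β - 1 with hqdef
  have hn1 : 1 ≤ n := by omega
  have hβ0 : 0 < β := by
    rw [hβdef, hn]; push_cast; linarith [Nat.lt_floor_add_one α]
  have hβ1 : β < 1 := by
    have h1 : (⌊α⌋₊:ℝ) ≤ α := Nat.floor_le hα.le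
    have h2 : α ≠ (⌊α⌋₊:ℝ) := hαnotint ⌊α⌋₊
    rw [hβdef, hn]; push_cast
    have := lt_of_le_of_ne h1 (fun h => h2 h.symm)
    linarith
  have hq : -1 < q := by rw [hqdef]; linarith
  have hΓ : 0 < Real.Gamma β := Real.Gamma_pos_of_pos hβ0
  -- periodicity of all iterated derivatives
  have hEq : Set.EqOn (fun z => x (z + T)) x (Ioi 0) := fun z hz => hper z hz
  have per : ∀ k : ℕ, ∀ s > (0:ℝ), iteratedDeriv k x (s + T) = iteratedDeriv k x s := by
    intro k s hs
    have h1 := hEq.iteratedDeriv_of_isOpen isOpen_Ioi k hs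
    rw [iteratedDeriv_comp_add_const k x T] at h1
    exact h1
  set g : ℝ → ℝ := iteratedDeriv n x with hgdef
  set y : ℝ → ℝ := fun s => g (s + T) with hydef
  have hgcont : ContinuousOn g (Ioi 0) := by
    have h1 := hC.continuousOn_iteratedDerivWithin le_rfl (uniqueDiffOn_Ioi 0)
    exact h1.congr fun u hu => (itdw_open isOpen_Ioi n hu).symm
  have hycont : ContinuousOn y (Ici 0) := by
    apply hgcont.comp ((continuous_id.add continuous_const).continuousOn)
    intro s hs
    have h0 : (0:ℝ) ≤ s := hs
    simp only [mem_Ioi, Pi.add_apply, id_eq]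
    linarith
  have hyg : ∀ s > (0:ℝ), y s = g s := fun s hs => per n s hs
  have hyper : ∀ s > (-T), y (s + T) = y s := by
    intro s hs
    have := per n (s + T) (by linarith)
    simpa [hydef] using this
  -- integrability
  have hInt : ∀ a b c : ℝ, 0 ≤ a → a ≤ b →
      IntervalIntegrable (fun s => (c - s) ^ q * y s) volume a b := by
    intro a b c ha hab
    have h1 : IntervalIntegrable (fun z : ℝ => z ^ q) volume (c - a) (c - b) :=
      intervalIntegrable_rpow' hq
    have h2 := h1.comp_sub_left c
    simp only [sub_sub_cancel] at h2
    apply h2.mul_continuousOn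
    apply hycont.mono
    rw [uIcc_of_le hab]
    exact fun u hu => le_trans ha hu.1
  -- the basic equation with y
  have hyint : ∀ a b c : ℝ, 0 ≤ a → a ≤ b →
      (∫ s in a..b, (c - s) ^ q * iteratedDeriv n x s) = ∫ s in a..b, (c - s) ^ q * y s := by
    intro a b c ha hab
    apply intervalIntegral.integral_congr_ae
    filter_upwards with s hs
    rw [uIoc_of_le hab] at hs
    rw [hyg s (lt_of_le_of_lt ha hs.1)]
  have key : ∀ τ > T, (∫ s in (0:ℝ)..T, (τ - s) ^ q * y s) = 0 := by
    intro τ hτ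
    set t : ℝ := τ - T with htdef
    have ht : 0 ≤ t := by rw [htdef]; linarith
    have htT : τ = t + T := by rw [htdef]; ring
    have hH := H t ht
    have hE : (∫ s in (0:ℝ)..(t+T), (t+T - s) ^ q * y s)
        = ∫ s in (0:ℝ)..t, (t - s) ^ q * y s := by
      have hcan := mul_left_cancel₀ (one_div_ne_zero (ne_of_gt hΓ)) hH
      rw [hyint 0 (t+T) (t+T) le_rfl (by linarith), hyint 0 t t le_rfl ht] at hcan
      exact hcan
    have hsplit : (∫ s in (0:ℝ)..(t+T), (t+T - s) ^ q * y s)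
        = (∫ s in (0:ℝ)..T, (t+T - s) ^ q * y s)
          + ∫ s in T..(t+T), (t+T - s) ^ q * y s :=
      (integral_add_adjacent_intervals (hInt 0 T (t+T) le_rfl hT.le)
        (hInt T (t+T) (t+T) hT.le (by linarith))).symm
    have hshift : (∫ s in T..(t+T), (t+T - s) ^ q * y s)
        = ∫ u in (0:ℝ)..t, (t - u) ^ q * y u := by
      have h1 := intervalIntegral.integral_comp_add_right
        (a := (0:ℝ)) (b := t) (fun s => (t+T - s) ^ q * y s) T
      rw [zero_add] at h1
      rw [← h1]
      apply intervalIntegral.integral_congr_ae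
      filter_upwards with u hu
      rw [uIoc_of_le ht] at hu
      rw [hyper u (by linarith [hu.1])]
      ring_nf
    rw [hsplit, hshift] at hE
    rw [htT]
    linarith
  -- all "moments" vanish
  have hkey0 : ∀ τ > T, (∫ s in (0:ℝ)..T, (τ - s) ^ (β - 1 - ((0:ℕ):ℝ)) * y s) = 0 := by
    intro τ hτ
    have := key τ hτ
    simpa [hqdef] using this
  have hyIcc : ContinuousOn y (Icc 0 T) := hycont.mono Icc_subset_Ici_self
  have hMk : ∀ k : ℕ, ∀ τ > T, (∫ s in (0:ℝ)..T, (τ - s) ^ (β - 1 - (k:ℝ)) * y s) = 0 := by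
    intro k
    induction k with
    | zero => exact hkey0
    | succ k IH => exact Mstep hT hβ1 hyIcc k IH
  -- reformulate as polynomial moments at τ = 2T
  set ψ : ℝ → ℝ := fun s => (2*T - s) ^ q * y s with hψdef
  have hψcont : ContinuousOn ψ (Icc 0 T) := by
    apply ContinuousOn.mul _ hyIcc
    apply ContinuousOn.rpow_const (continuous_const.sub continuous_id).continuousOn
    intro s hs
    have : s ≤ T := hs.2
    exact Or.inl (ne_of_gt (by simp only [Pi.sub_apply, id_eq]; linarith))
  have hmom : ∀ k : ℕ, ∫ s in (0:ℝ)..T, ψ s * ((2*T - s)⁻¹)^k = 0 := by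
    intro k
    have h2T : T < 2*T := by linarith
    calc (∫ s in (0:ℝ)..T, ψ s * ((2*T - s)⁻¹)^k)
        = ∫ s in (0:ℝ)..T, (2*T - s) ^ (β - 1 - (k:ℝ)) * y s := ?_
      _ = 0 := hMk k (2*T) h2T
    apply intervalIntegral.integral_congr
    intro s hs
    rw [uIcc_of_le hT.le] at hs
    have hpos : (0:ℝ) < 2*T - s := by linarith [hs.2]
    rw [hψdef]
    show (2*T - s) ^ q * y s * ((2*T - s)⁻¹)^k = (2*T - s) ^ (β - 1 - (k:ℝ)) * y s
    rw [show β - 1 - (k:ℝ) = q + (-(k:ℝ)) by rw [hqdef]; ring,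
      Real.rpow_add hpos, Real.rpow_neg hpos.le, Real.rpow_natCast, inv_pow]
    ring
  have hψ0 := moment_zero hT ψ hψcont hmom
  have hy0 : ∀ s ∈ Icc (0:ℝ) T, y s = 0 := by
    intro s hs
    have := hψ0 s hs
    have hpos : (0:ℝ) < 2*T - s := by linarith [hs.2]
    have hrp : (0:ℝ) < (2*T - s) ^ q := Real.rpow_pos_of_pos hpos q
    rw [hψdef] at this
    simp only at this
    exact (mul_eq_zero.mp this).resolve_left (ne_of_gt hrp)
  -- g vanishes on (0, ∞)
  have hg0 : ∀ s > (0:ℝ), g s = 0 := by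
    have hstep : ∀ m : ℕ, ∀ s : ℝ, 0 < s → s ≤ (m+1) * T → g s = 0 := by
      intro m
      induction m with
      | zero =>
        intro s hs hsT
        have hsT' : s ≤ T := by push_cast at hsT; linarith
        rw [← hyg s hs]
        exact hy0 s ⟨hs.le, hsT'⟩
      | succ m IH =>
        intro s hs hsT
        rcases le_or_gt s ((m+1) * T) with h | h
        · exact IH s hs h
        · have h1 : 0 < s - T := by
            have : (1:ℝ) * T ≤ (m+1) * T := by
              apply mul_le_mul_of_nonneg_right _ hT.le
              push_cast; linarith [Nat.cast_nonneg (α := ℝ) m]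
            linarith
          have h2 : s - T ≤ (m+1) * T := by push_cast at hsT ⊢; linarith
          have hIH := IH (s - T) h1 h2
          have hgs : g (s - T) = g s := by
            have hps := per n (s - T) h1
            rw [sub_add_cancel] at hps
            exact hps.symm
          rw [← hgs]
          exact hIH
    intro s hs
    obtain ⟨m, hm⟩ := exists_nat_ge (s / T)
    apply hstep m s hs
    rw [div_le_iff₀ hT] at hm
    nlinarith [hT.le]
  -- conclude x is constant, contradiction
  have hxc := x_const hn1 hT hC per (fun s hs => hg0 s hs)
  exact hnc ⟨x T, fun t ht => hxc ht hT⟩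
end

section
/- Let α ∈ (0,∞) be non-integer, n = ⌊α⌋ + 1, T > 0, and suppose x : (0,∞) → ℝ is C^n with x^(n) being T-periodic. If (1/Γ(n-α)) ∫₀^t (t-s)^{n-α-1} x^(n)(s) ds is T-periodic in t, then ∫₀^T (t + T - s)^{n-α-1} x^(n)(s) ds = 0 for all t > 0. -/
open Set

lemma caputo_aux_integrable (f : ℝ → ℝ) (hf : ContinuousOn f (Ioi 0)) {γ : ℝ}
    (hγ : -1 < γ) {M a b c : ℝ} (ha : 0 ≤ a) (hab : a ≤ b) (hbc : b ≤ c)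
    (hM : ∀ s ∈ Ioc (0:ℝ) c, |f s| ≤ M) :
    IntervalIntegrable (fun s => (c - s) ^ γ * f s) MeasureTheory.volume a b := by
  rw [intervalIntegrable_iff_integrableOn_Ioc_of_le hab]
  have hw : MeasureTheory.IntegrableOn (fun s => (c - s) ^ γ) (Ioc a b) := by
    have h1 : IntervalIntegrable (fun x : ℝ => x ^ γ) MeasureTheory.volume (c - a) (c - b) :=
      intervalIntegral.intervalIntegrable_rpow' hγ
    have h2 := h1.comp_sub_left c
    simp only [sub_sub_cancel] at h2
    rwa [intervalIntegrable_iff_integrableOn_Ioc_of_le hab] at h2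
  have hsub : Ioc a b ⊆ Ioi (0:ℝ) := fun s hs => lt_of_le_of_lt ha hs.1
  have hmeas : MeasureTheory.AEStronglyMeasurable f
      (MeasureTheory.volume.restrict (Ioc a b)) :=
    (hf.mono hsub).aestronglyMeasurable measurableSet_Ioc
  have hbdd : ∀ᵐ s ∂(MeasureTheory.volume.restrict (Ioc a b)), ‖f s‖ ≤ M := by
    filter_upwards [MeasureTheory.ae_restrict_mem measurableSet_Ioc] with s hs
    exact hM s ⟨lt_of_le_of_lt ha hs.1, hs.2.trans hbc⟩
  have := MeasureTheory.Integrable.bdd_mul hw hmeas hbdd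
  exact this.congr (Filter.Eventually.of_forall fun s => mul_comm _ _)

theorem caputo_periodicity_reduction
    (α : ℝ) (hα : 0 < α) (hαnotint : ∀ m : ℕ, α ≠ m)
    (n : ℕ) (hn : n = ⌊α⌋₊ + 1)
    (T : ℝ) (hT : 0 < T) (x : ℝ → ℝ)
    (hC : ContDiffOn ℝ n x (Ioi 0))
    (hpern : ∀ t > (0:ℝ), iteratedDeriv n x (t + T) = iteratedDeriv n x t)
    (hcaputo : ∀ t ≥ (0:ℝ),
      (1 / Real.Gamma (n - α)) *
          ∫ s in (0:ℝ)..(t + T), (t + T - s) ^ ((n : ℝ) - α - 1) * iteratedDeriv n x s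
        = (1 / Real.Gamma (n - α)) *
          ∫ s in (0:ℝ)..t, (t - s) ^ ((n : ℝ) - α - 1) * iteratedDeriv n x s) :
    ∀ t > (0:ℝ),
      ∫ s in (0:ℝ)..T, (t + T - s) ^ ((n : ℝ) - α - 1) * iteratedDeriv n x s = 0 := by
  intro t ht
  set γ : ℝ := (n : ℝ) - α - 1 with hγdef
  set f : ℝ → ℝ := iteratedDeriv n x with hfdef
  have hαn : α < (n : ℝ) := by
    rw [hn]
    push_cast
    exact Nat.lt_floor_add_one α
  have hγ : -1 < γ := by simp only [hγdef]; linarith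
  have hΓ : Real.Gamma ((n : ℝ) - α) ≠ 0 :=
    (Real.Gamma_pos_of_pos (by linarith)).ne'
  -- continuity of f on (0, ∞)
  have hfc : ContinuousOn f (Ioi 0) := by
    have h1 : ContinuousOn (iteratedDerivWithin n x (Ioi 0)) (Ioi 0) :=
      hC.continuousOn_iteratedDerivWithin le_rfl (uniqueDiffOn_Ioi 0)
    refine h1.congr fun y hy => ?_
    rw [hfdef, iteratedDeriv_eq_iteratedFDeriv, iteratedDerivWithin_eq_iteratedFDerivWithin,
      iteratedFDerivWithin_of_isOpen n isOpen_Ioi hy]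
  -- a bound for f on (0, t+T]
  obtain ⟨M, hM⟩ : ∃ M, ∀ s ∈ Icc T (t + 2 * T), ‖f s‖ ≤ M :=
    isCompact_Icc.exists_bound_of_continuousOn
      (hfc.mono fun s hs => lt_of_lt_of_le hT hs.1)
  have hMall : ∀ s ∈ Ioc (0:ℝ) (t + T), |f s| ≤ M := by
    intro s hs
    rcases le_or_gt T s with h | h
    · have := hM s ⟨h, by linarith [hs.2]⟩
      rwa [Real.norm_eq_abs] at this
    · have heq : f (s + T) = f s := hpern s hs.1
      rw [← heq]
      have := hM (s + T) ⟨by linarith [hs.1], by linarith⟩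
      rwa [Real.norm_eq_abs] at this
  -- integrability on the pieces
  have h1 : IntervalIntegrable (fun s => (t + T - s) ^ γ * f s) MeasureTheory.volume 0 T :=
    caputo_aux_integrable f hfc hγ le_rfl hT.le (by linarith) hMall
  have h2 : IntervalIntegrable (fun s => (t + T - s) ^ γ * f s) MeasureTheory.volume T (t + T) :=
    caputo_aux_integrable f hfc hγ hT.le (by linarith) le_rfl hMall
  -- cancel the Gamma factor
  have key : (∫ s in (0:ℝ)..(t + T), (t + T - s) ^ γ * f s)
      = ∫ s in (0:ℝ)..t, (t - s) ^ γ * f s :=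
    mul_left_cancel₀ (one_div_ne_zero hΓ) (hcaputo t ht.le)
  -- split the integral
  have hsplit : (∫ s in (0:ℝ)..T, (t + T - s) ^ γ * f s)
      + (∫ s in T..(t + T), (t + T - s) ^ γ * f s)
      = ∫ s in (0:ℝ)..(t + T), (t + T - s) ^ γ * f s :=
    intervalIntegral.integral_add_adjacent_intervals h1 h2
  -- change of variables and periodicity
  have hshift : (∫ s in T..(t + T), (t + T - s) ^ γ * f s)
      = ∫ s in (0:ℝ)..t, (t - s) ^ γ * f s := by
    have hcv := intervalIntegral.integral_comp_add_right (a := (0:ℝ)) (b := t)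
      (fun s => (t + T - s) ^ γ * f s) T
    rw [zero_add] at hcv
    rw [← hcv]
    apply intervalIntegral.integral_congr_ae
    filter_upwards with u hu
    rw [uIoc_of_le ht.le] at hu
    have hper : f (u + T) = f u := hpern u hu.1
    have harith : t + T - (u + T) = t - u := by ring
    rw [harith, hper]
  linarith [hsplit, key, hshift]
end

section
/- Let β ∈ (0,1), T > 0, and let φ : [0,T] → ℝ be continuous. If ∫₀^T (t + T - s)^{β-1} φ(s) ds = 0 for all t > 0, then φ ≡ 0 on [0,T]. -/
open Set MeasureTheory intervalIntegral Real
open scoped Interval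

/-- Continuity of the kernel on `[0,T]` when `x > 0`. -/
lemma kernel_contOn (T x c : ℝ) (hx : 0 < x) (φ : ℝ → ℝ)
    (hφ : ContinuousOn φ (Icc 0 T)) :
    ContinuousOn (fun s => (x + T - s) ^ c * φ s) (Icc 0 T) := by
  refine ContinuousOn.mul ?_ hφ
  refine ContinuousOn.rpow_const ((continuous_const.sub continuous_id).continuousOn) ?_
  intro s hs
  left
  have : x + T - s > 0 := by
    have := hs.2
    linarith
  exact ne_of_gt this

/-- Step-down lemma: if the family of integrals with exponent `γ < 0` vanishes,
so does the family with exponent `γ - 1`. -/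
lemma step_down (T : ℝ) (hT : 0 < T) (φ : ℝ → ℝ) (hφ : ContinuousOn φ (Icc 0 T))
    (γ : ℝ) (hγ : γ < 0)
    (h : ∀ t > (0:ℝ), ∫ s in (0:ℝ)..T, (t + T - s) ^ γ * φ s = 0) :
    ∀ t > (0:ℝ), ∫ s in (0:ℝ)..T, (t + T - s) ^ (γ - 1) * φ s = 0 := by
  obtain ⟨C, hC⟩ := isCompact_Icc.exists_bound_of_continuousOn hφ
  have hC0 : 0 ≤ C := le_trans (norm_nonneg _) (hC 0 ⟨le_rfl, hT.le⟩)
  intro t ht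
  have hε : (0:ℝ) < t / 2 := by linarith
  have hIoc : Ι (0:ℝ) T = Ioc 0 T := uIoc_of_le hT.le
  -- membership in the ball implies positivity
  have hball : ∀ x ∈ Metric.ball t (t/2), t / 2 < x := by
    intro x hx
    rw [Metric.mem_ball, Real.dist_eq, abs_lt] at hx
    linarith [hx.1]
  have hbase : ∀ x, t/2 < x → ∀ s ∈ Ι (0:ℝ) T, t/2 < x + T - s := by
    intro x hx s hs
    rw [hIoc] at hs
    have := hs.2
    linarith
  have key := intervalIntegral.hasDerivAt_integral_of_dominated_loc_of_deriv_le
    (F := fun x s => (x + T - s) ^ γ * φ s)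
    (F' := fun x s => γ * ((x + T - s) ^ (γ - 1) * φ s))
    (x₀ := t) (a := 0) (b := T) (μ := volume)
    (bound := fun _ => |γ| * ((t/2) ^ (γ - 1) * C)) (Metric.ball_mem_nhds t hε)
    ?_ ?_ ?_ ?_ ?_ ?_
  · obtain ⟨-, hD⟩ := key
    -- the function is eventually 0 near t
    have hev : (fun x => ∫ s in (0:ℝ)..T, (x + T - s) ^ γ * φ s) =ᶠ[nhds t] (fun _ => (0:ℝ)) := by
      filter_upwards [eventually_gt_nhds ht] with x hx
      exact h x hx
    have hD' : HasDerivAt (fun _ : ℝ => (0:ℝ))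
        (∫ s in (0:ℝ)..T, γ * ((t + T - s) ^ (γ - 1) * φ s)) t :=
      hD.congr_of_eventuallyEq hev.symm
    have h0 : (∫ s in (0:ℝ)..T, γ * ((t + T - s) ^ (γ - 1) * φ s)) = 0 :=
      ((hasDerivAt_const t (0:ℝ)).unique hD').symm
    rw [intervalIntegral.integral_const_mul] at h0
    exact (mul_eq_zero.mp h0).resolve_left (ne_of_lt hγ)
  · -- hF_meas
    filter_upwards [eventually_gt_nhds (half_lt_self ht)] with x hx
    have hx0 : 0 < x := lt_trans hε hx
    exact ((kernel_contOn T x γ hx0 φ hφ).mono (hIoc ▸ Ioc_subset_Icc_self)).aestronglyMeasurable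
      (by rw [hIoc]; exact measurableSet_Ioc)
  · -- hF_int
    exact ((kernel_contOn T t γ ht φ hφ).mono (by rw [uIcc_of_le hT.le])).intervalIntegrable
  · -- hF'_meas
    have : ContinuousOn (fun s => γ * ((t + T - s) ^ (γ - 1) * φ s)) (Icc 0 T) :=
      (continuousOn_const.mul (kernel_contOn T t (γ-1) ht φ hφ))
    exact (this.mono (hIoc ▸ Ioc_subset_Icc_self)).aestronglyMeasurable
      (by rw [hIoc]; exact measurableSet_Ioc)
  · -- h_bound
    refine Filter.Eventually.of_forall (fun s hs x hx => ?_)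
    have hxpos := hball x hx
    have hb := hbase x hxpos s hs
    have hbpos : (0:ℝ) < x + T - s := lt_trans hε hb
    rw [hIoc] at hs
    have hsIcc : s ∈ Icc (0:ℝ) T := Ioc_subset_Icc_self hs
    have h1 : (x + T - s) ^ (γ - 1) ≤ (t/2) ^ (γ - 1) :=
      Real.rpow_le_rpow_of_nonpos hε hb.le (by linarith)
    have h2 : ‖φ s‖ ≤ C := hC s hsIcc
    have hrpos : (0:ℝ) < (x + T - s) ^ (γ - 1) := Real.rpow_pos_of_pos hbpos _
    calc ‖γ * ((x + T - s) ^ (γ - 1) * φ s)‖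
        = |γ| * ((x + T - s) ^ (γ - 1) * ‖φ s‖) := by
          rw [norm_mul, norm_mul, Real.norm_eq_abs, Real.norm_eq_abs,
            abs_of_pos hrpos]
      _ ≤ |γ| * ((t/2) ^ (γ - 1) * C) := by
          apply mul_le_mul_of_nonneg_left _ (abs_nonneg _)
          exact mul_le_mul h1 h2 (norm_nonneg _) (le_of_lt (Real.rpow_pos_of_pos hε _))
  · -- bound integrable
    exact intervalIntegrable_const
  · -- h_diff
    refine Filter.Eventually.of_forall (fun s hs x hx => ?_)
    have hxpos := hball x hx
    have hb := hbase x hxpos s hs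
    have hbpos : (0:ℝ) < x + T - s := lt_trans hε hb
    have h1 : HasDerivAt (fun x : ℝ => x + T - s) 1 x := by
      have h0 := (hasDerivAt_id x).add_const (T - s)
      have : (fun y : ℝ => y + T - s) = (fun y : ℝ => id y + (T - s)) := by
        funext y; simp [id]; ring
      rw [this]
      exact h0
    have h2 : HasDerivAt (fun y : ℝ => y ^ γ) (γ * (x + T - s) ^ (γ - 1))
        (x + T - s) := Real.hasDerivAt_rpow_const (Or.inl (ne_of_gt hbpos))
    have h3 := (h2.comp x h1).mul_const (φ s)
    simpa [mul_comm, mul_assoc, mul_left_comm] using h3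

/-- All the shifted exponent integrals vanish. -/
lemma all_vanish (β : ℝ) (hβ1 : β < 1) (T : ℝ) (hT : 0 < T) (φ : ℝ → ℝ)
    (hφ : ContinuousOn φ (Icc 0 T))
    (hvanish : ∀ t > (0:ℝ), ∫ s in (0:ℝ)..T, (t + T - s) ^ (β - 1) * φ s = 0) :
    ∀ n : ℕ, ∀ t > (0:ℝ),
      ∫ s in (0:ℝ)..T, (t + T - s) ^ (β - 1 - n) * φ s = 0 := by
  intro n
  induction n with
  | zero => simpa using hvanish
  | succ n ih =>
    have hγ : β - 1 - n < 0 := by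
      have : (0:ℝ) ≤ n := Nat.cast_nonneg n
      linarith
    have := step_down T hT φ hφ (β - 1 - n) hγ ih
    intro t ht
    have heq : β - 1 - (n+1 : ℕ) = β - 1 - (n:ℝ) - 1 := by push_cast; ring
    rw [heq]
    exact this t ht

/-- Moments of the transformed function vanish. -/
lemma moments_vanish (β : ℝ) (hβ0 : 0 < β) (hβ1 : β < 1) (T : ℝ) (hT : 0 < T) (φ : ℝ → ℝ)
    (hφ : ContinuousOn φ (Icc 0 T))
    (hvanish : ∀ t > (0:ℝ), ∫ s in (0:ℝ)..T, (t + T - s) ^ (β - 1) * φ s = 0)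
    (n : ℕ) :
    ∫ v in ((1+T)⁻¹:ℝ)..1, (v:ℝ)^n * (v ^ (-(1+β)) * φ (1 + T - v⁻¹)) = 0 := by
  have h1T : (0:ℝ) < 1 + T := by linarith
  set a : ℝ := (1+T)⁻¹ with ha_def
  have ha0 : 0 < a := inv_pos.mpr h1T
  have ha1 : a < 1 := by
    rw [ha_def, inv_lt_one_iff₀]; right; linarith
  have huIcc : uIcc a 1 = Icc a 1 := uIcc_of_le ha1.le
  have hvpos : ∀ v ∈ Icc a 1, (0:ℝ) < v := fun v hv => lt_of_lt_of_le ha0 hv.1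
  set g : ℝ → ℝ := fun v => 1 + T - v⁻¹ with hg_def
  have hg_maps : ∀ v ∈ Icc a 1, g v ∈ Icc (0:ℝ) T := by
    intro v hv
    have hv0 := hvpos v hv
    constructor
    · have h2 : v⁻¹ ≤ a⁻¹ := inv_anti₀ ha0 hv.1
      rw [ha_def, inv_inv] at h2
      simp only [hg_def]; linarith
    · have h3 : (1:ℝ) ≤ v⁻¹ := (one_le_inv₀ hv0).2 hv.2
      simp only [hg_def]; linarith
  -- change of variables
  set f : ℝ → ℝ := fun s => (1 + T - s) ^ (β - 1 - n) * φ s with hf_def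
  have hf_cont : ContinuousOn f (Icc 0 T) := by
    have := kernel_contOn T 1 (β - 1 - n) one_pos φ hφ
    simpa [hf_def] using this
  have hder : ∀ v ∈ uIcc a 1, HasDerivAt g ((v^2)⁻¹) v := by
    intro v hv
    rw [huIcc] at hv
    have hv0 := hvpos v hv
    have h1 := (hasDerivAt_inv (ne_of_gt hv0)).const_sub (1 + T)
    simpa [hg_def] using h1
  have hder_cont : ContinuousOn (fun v => ((v:ℝ)^2)⁻¹) (uIcc a 1) := by
    rw [huIcc]
    apply ContinuousOn.inv₀ (by fun_prop)
    intro v hv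
    exact pow_ne_zero 2 (ne_of_gt (hvpos v hv))
  have himg : g '' uIcc a 1 ⊆ Icc 0 T := by
    rw [huIcc]
    rintro - ⟨v, hv, rfl⟩
    exact hg_maps v hv
  have hcov := intervalIntegral.integral_comp_smul_deriv' hder hder_cont (hf_cont.mono himg)
  have hga : g a = 0 := by simp [hg_def, ha_def]
  have hg1 : g 1 = T := by simp [hg_def]
  rw [hga, hg1] at hcov
  have hRHS : (∫ s in (0:ℝ)..T, f s) = 0 := by
    simpa [hf_def] using all_vanish β hβ1 T hT φ hφ hvanish n 1 one_pos
  rw [hRHS] at hcov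
  rw [← hcov]
  apply intervalIntegral.integral_congr
  intro v hv
  rw [huIcc] at hv
  have hv0 := hvpos v hv
  have hginv : (1:ℝ) + T - g v = v⁻¹ := by simp [hg_def]
  simp only [smul_eq_mul, Function.comp_apply, hf_def, hginv]
  -- now pure rpow algebra for v > 0
  have e1 : (v⁻¹) ^ (β - 1 - (n:ℝ)) = v ^ (-(β - 1 - (n:ℝ))) := by
    rw [Real.inv_rpow hv0.le, ← Real.rpow_neg hv0.le]
  have e2 : ((v:ℝ)^2)⁻¹ = v ^ (-2 : ℝ) := by
    rw [← Real.rpow_natCast v 2, ← Real.rpow_neg hv0.le]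
    norm_num
  have e3 : (v:ℝ)^n = v ^ (n:ℝ) := (Real.rpow_natCast v n).symm
  rw [e1, e2, e3, ← mul_assoc, ← mul_assoc, ← Real.rpow_add hv0, ← Real.rpow_add hv0]
  ring_nf
  rfl

/-- A continuous function on `[a,1]` all of whose moments vanish is zero. -/
lemma zero_of_moments (a : ℝ) (ha0 : 0 < a) (ha1 : a < 1) (w : ℝ → ℝ)
    (hw : ContinuousOn w (Icc a 1))
    (hmom : ∀ n : ℕ, ∫ v in a..1, v^n * w v = 0) :
    ∀ v ∈ Icc a 1, w v = 0 := by
  have huIcc : uIcc a 1 = Icc a 1 := uIcc_of_le ha1.le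
  have hIoc : Ι a 1 = Ioc a 1 := uIoc_of_le ha1.le
  -- integrability helper
  have hint : ∀ h : ℝ → ℝ, ContinuousOn h (Icc a 1) →
      IntervalIntegrable (fun v => h v * w v) volume a 1 := by
    intro h hh
    apply ContinuousOn.intervalIntegrable
    rw [huIcc]
    exact hh.mul hw
  have hpoly : ∀ p : Polynomial ℝ, ∫ v in a..1, p.eval v * w v = 0 := by
    intro p
    induction p using Polynomial.induction_on' with
    | add p q hp hq =>
      have heq : ∀ v : ℝ, (p+q).eval v * w v = p.eval v * w v + q.eval v * w v := by
        intro v; simp [add_mul]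
      rw [intervalIntegral.integral_congr (g := fun v => p.eval v * w v + q.eval v * w v)
        (fun v _ => heq v),
        intervalIntegral.integral_add (hint _ p.continuous.continuousOn)
          (hint _ q.continuous.continuousOn), hp, hq, add_zero]
    | monomial m c =>
      have heq : ∀ v : ℝ, (Polynomial.monomial m c).eval v * w v = c * (v^m * w v) := by
        intro v; simp [Polynomial.eval_monomial]; ring
      rw [intervalIntegral.integral_congr (g := fun v => c * (v^m * w v)) (fun v _ => heq v),
        intervalIntegral.integral_const_mul, hmom, mul_zero]
  -- bound on w
  obtain ⟨M, hM⟩ := isCompact_Icc.exists_bound_of_continuousOn hw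
  have hM0 : 0 ≤ M := le_trans (norm_nonneg _) (hM a ⟨le_rfl, ha1.le⟩)
  have hiww : IntervalIntegrable (fun v => w v * w v) volume a 1 := hint w hw
  -- the square integral vanishes
  have hsq : (∫ v in a..1, w v * w v) = 0 := by
    have hI : ∀ ε > (0:ℝ), |∫ v in a..1, w v * w v| ≤ ε := by
      intro ε hε
      set d : ℝ := M * (1 - a) with hd_def
      have hd0 : 0 ≤ d := mul_nonneg hM0 (by linarith)
      have hδ : (0:ℝ) < ε / (d + 1) := by positivity
      obtain ⟨p, hp⟩ := exists_polynomial_near_of_continuousOn a 1 w hw (ε / (d+1)) hδ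
      have hipw : IntervalIntegrable (fun v => p.eval v * w v) volume a 1 :=
        hint _ p.continuous.continuousOn
      have hEq : (∫ v in a..1, w v * w v)
          = ∫ v in a..1, (w v * w v - p.eval v * w v) := by
        rw [intervalIntegral.integral_sub hiww hipw, hpoly p, sub_zero]
      rw [hEq]
      have hb : ‖∫ v in a..1, (w v * w v - p.eval v * w v)‖ ≤ ε/(d+1) * M * |1 - a| := by
        apply intervalIntegral.norm_integral_le_of_norm_le_const
        intro v hv
        rw [hIoc] at hv
        have hvIcc : v ∈ Icc a 1 := Ioc_subset_Icc_self hv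
        have h1 : |p.eval v - w v| < ε/(d+1) := hp v hvIcc
        have h2 : ‖w v‖ ≤ M := hM v hvIcc
        have : w v * w v - p.eval v * w v = (w v - p.eval v) * w v := by ring
        rw [this, norm_mul]
        apply mul_le_mul _ h2 (norm_nonneg _) (le_of_lt hδ)
        rw [Real.norm_eq_abs, abs_sub_comm]
        exact le_of_lt h1
      rw [Real.norm_eq_abs] at hb
      refine le_trans hb ?_
      rw [abs_of_pos (by linarith)]
      rw [div_mul_eq_mul_div, div_mul_eq_mul_div, div_le_iff₀ (by linarith : (0:ℝ) < d + 1)]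
      have : ε * M * (1 - a) = ε * d := by rw [hd_def]; ring
      rw [this]
      nlinarith
    by_contra hne
    have habs : 0 < |∫ v in a..1, w v * w v| := abs_pos.mpr hne
    have := hI (|∫ v in a..1, w v * w v| / 2) (by linarith)
    linarith
  -- conclude w ≡ 0
  have hae : (fun v => w v * w v) =ᵐ[volume.restrict (Ioc a 1)] 0 := by
    rw [← intervalIntegral.integral_eq_zero_iff_of_le_of_nonneg_ae ha1.le
      (Filter.Eventually.of_forall (fun v => mul_self_nonneg (w v))) hiww]
    exact hsq
  have hae' : (fun v => w v * w v) =ᵐ[volume.restrict (Icc a 1)] 0 := by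
    rwa [MeasureTheory.Measure.restrict_congr_set MeasureTheory.Ioc_ae_eq_Icc] at hae
  have heq : EqOn (fun v => w v * w v) 0 (Icc a 1) :=
    MeasureTheory.Measure.eqOn_Icc_of_ae_eq volume (ne_of_lt ha1) hae' (hw.mul hw)
      continuousOn_const
  intro v hv
  have := heq hv
  simpa [mul_self_eq_zero] using this

theorem vanishing_integral_implies_zero
    (β : ℝ) (hβ0 : 0 < β) (hβ1 : β < 1)
    (T : ℝ) (hT : 0 < T) (φ : ℝ → ℝ)
    (hφ : ContinuousOn φ (Icc 0 T))
    (hvanish : ∀ t > (0:ℝ), ∫ s in (0:ℝ)..T, (t + T - s) ^ (β - 1) * φ s = 0) :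
    ∀ s ∈ Icc (0:ℝ) T, φ s = 0 := by
  have h1T : (0:ℝ) < 1 + T := by linarith
  set a : ℝ := (1+T)⁻¹ with ha_def
  have ha0 : 0 < a := inv_pos.mpr h1T
  have ha1 : a < 1 := by rw [ha_def, inv_lt_one_iff₀]; right; linarith
  set w : ℝ → ℝ := fun v => v ^ (-(1+β)) * φ (1 + T - v⁻¹) with hw_def
  have hw_cont : ContinuousOn w (Icc a 1) := by
    apply ContinuousOn.mul
    · apply ContinuousOn.rpow_const continuousOn_id
      intro v hv
      exact Or.inl (ne_of_gt (lt_of_lt_of_le ha0 hv.1))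
    · apply hφ.comp
      · apply ContinuousOn.sub continuousOn_const
        apply ContinuousOn.inv₀ continuousOn_id
        intro v hv
        exact ne_of_gt (lt_of_lt_of_le ha0 hv.1)
      · intro v hv
        have hv0 : 0 < v := lt_of_lt_of_le ha0 hv.1
        constructor
        · have h2 : v⁻¹ ≤ a⁻¹ := inv_anti₀ ha0 hv.1
          rw [ha_def, inv_inv] at h2
          simp only; linarith
        · have h3 : (1:ℝ) ≤ v⁻¹ := (one_le_inv₀ hv0).2 hv.2
          simp only; linarith
  have hw0 : ∀ v ∈ Icc a 1, w v = 0 := by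
    apply zero_of_moments a ha0 ha1 w hw_cont
    intro n
    exact moments_vanish β hβ0 hβ1 T hT φ hφ hvanish n
  intro s hs
  set v : ℝ := (1 + T - s)⁻¹ with hv_def
  have hbase : (1:ℝ) ≤ 1 + T - s := by linarith [hs.2]
  have hbase' : 1 + T - s ≤ 1 + T := by linarith [hs.1]
  have hbpos : (0:ℝ) < 1 + T - s := by linarith
  have hvmem : v ∈ Icc a 1 := by
    constructor
    · rw [ha_def, hv_def]
      exact inv_anti₀ hbpos hbase'
    · rw [hv_def]
      exact inv_le_one_of_one_le₀ hbase
  have := hw0 v hvmem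
  rw [hw_def] at this
  simp only at this
  have hvinv : v⁻¹ = 1 + T - s := by rw [hv_def, inv_inv]
  rw [hvinv] at this
  have hss : 1 + T - (1 + T - s) = s := by ring
  rw [hss] at this
  have hvpos : 0 < v := inv_pos.mpr hbpos
  have hrpos : (0:ℝ) < v ^ (-(1+β)) := Real.rpow_pos_of_pos hvpos _
  exact (mul_eq_zero.mp this).resolve_left (ne_of_gt hrpos)
end

section
/- Let α ∈ (0,∞) be non-integer, n = ⌊α⌋ + 1. If x : (0,∞) → ℝ is a non-constant T-periodic C^n function (T > 0), then the Riemann–Liouville derivative (RL_D^α x)(t) = (1/Γ(n-α)) (d/dt)^n ∫₀^t (t-s)^{n-α-1} x(s) ds is not a T-periodic function. -/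
open Set MeasureTheory intervalIntegral Filter Metric Topology
open scoped Interval

private lemma rpow_le_max {m M b e : ℝ} (hm : 0 < m) (hmb : m ≤ b) (hbM : b ≤ M) :
    b ^ e ≤ m ^ e + M ^ e := by
  rcases le_or_gt 0 e with he | he
  · calc b ^ e ≤ M ^ e := Real.rpow_le_rpow (hm.le.trans hmb) hbM he
    _ ≤ m ^ e + M ^ e := le_add_of_nonneg_left (Real.rpow_nonneg hm.le e)
  · calc b ^ e ≤ m ^ e := Real.rpow_le_rpow_of_nonpos hm hmb he.le
    _ ≤ m ^ e + M ^ e := le_add_of_nonneg_right (Real.rpow_nonneg ((hm.trans_le hmb).trans_le hbM).le e)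

private lemma aesm_of_continuousOn_Ioo {g : ℝ → ℝ} {a b : ℝ} (hab : a ≤ b)
    (h : ContinuousOn g (Ioo a b)) : AEStronglyMeasurable g (volume.restrict (Ι a b)) := by
  rw [uIoc_of_le hab, ← Measure.restrict_congr_set Ioo_ae_eq_Ioc]
  exact h.aestronglyMeasurable measurableSet_Ioo

private lemma intint_of_bound {g : ℝ → ℝ} {a b : ℝ} (hab : a ≤ b)
    (hm : AEStronglyMeasurable g (volume.restrict (Ι a b)))
    {bound : ℝ → ℝ} (hbound : IntervalIntegrable bound volume a b)
    (h : ∀ s ∈ Ioc a b, |g s| ≤ bound s) : IntervalIntegrable g volume a b := by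
  rw [intervalIntegrable_iff] at hbound ⊢
  rw [uIoc_of_le hab] at hbound hm ⊢
  exact hbound.mono' hm ((ae_restrict_iff' measurableSet_Ioc).2 (ae_of_all _ (by
    simpa [Real.norm_eq_abs] using h)))

private lemma iteratedDerivWithin_Ioi (f : ℝ → ℝ) (k : ℕ) {p : ℝ} (hp : (0:ℝ) < p) :
    iteratedDerivWithin k f (Ioi 0) p = iteratedDeriv k f p := by
  rw [iteratedDerivWithin_eq_iteratedFDerivWithin, iteratedDeriv_eq_iteratedFDeriv,
    iteratedFDerivWithin_of_isOpen k isOpen_Ioi hp]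

private lemma lemA {x : ℝ → ℝ} {T : ℝ} (hT : 0 < T)
    (hx : ContinuousOn x (Icc T (2*T))) (e t₀ : ℝ) (ht₀ : 0 < t₀) :
    HasDerivAt (fun t => ∫ r in T..(2*T), (t + (2*T - r)) ^ e * x r)
      (e * ∫ r in T..(2*T), (t₀ + (2*T - r)) ^ (e - 1) * x r) t₀ := by
  have hTT : T ≤ 2*T := by linarith
  obtain ⟨C, hC⟩ := isCompact_Icc.exists_bound_of_continuousOn hx
  have hC0 : 0 ≤ C := (norm_nonneg _).trans (hC T ⟨le_refl T, hTT⟩)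
  have hball : ∀ u ∈ ball t₀ (t₀/2), t₀/2 < u ∧ u < 3*t₀/2 := by
    intro u hu
    rw [mem_ball, Real.dist_eq, abs_lt] at hu
    constructor <;> linarith [hu.1, hu.2]
  have hbase : ∀ u ∈ ball t₀ (t₀/2), ∀ r ∈ Set.Ioc T (2*T),
      t₀/2 < u + (2*T - r) ∧ u + (2*T - r) < 3*t₀/2 + T := by
    intro u hu r hr
    obtain ⟨h1, h2⟩ := hball u hu
    constructor <;> [linarith [hr.2]; linarith [hr.1] ]
  have hmeas : ∀ u ∈ ball t₀ (t₀/2),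
      AEStronglyMeasurable (fun r => (u + (2*T - r)) ^ e * x r) (volume.restrict (Ι T (2*T))) := by
    intro u hu
    rw [uIoc_of_le hTT]
    refine (ContinuousOn.mul ?_ (hx.mono Ioc_subset_Icc_self)).aestronglyMeasurable
      measurableSet_Ioc
    refine ContinuousOn.rpow_const ?_ (fun r hr => Or.inl ?_)
    · exact (continuous_const.add (continuous_const.sub continuous_id)).continuousOn
    · exact ne_of_gt (lt_trans (half_pos ht₀) (hbase u hu r hr).1)
  have key := intervalIntegral.hasDerivAt_integral_of_dominated_loc_of_deriv_le
    (F := fun u r => (u + (2*T - r)) ^ e * x r)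
    (F' := fun u r => e * (u + (2*T - r)) ^ (e-1) * 1 * x r)
    (bound := fun _ => |e| * ((t₀/2) ^ (e-1) + (3*t₀/2 + T) ^ (e-1)) * C)
    (ball_mem_nhds t₀ (half_pos ht₀))
    (by filter_upwards [ball_mem_nhds t₀ (half_pos ht₀)] with u hu using hmeas u hu)
    (by
      apply ContinuousOn.intervalIntegrable
      rw [uIcc_of_le hTT]
      refine ContinuousOn.mul ?_ hx
      refine ContinuousOn.rpow_const
        ((continuous_const.add (continuous_const.sub continuous_id)).continuousOn)
        (fun r hr => Or.inl (ne_of_gt ?_))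
      have := hr.2; linarith)
    (by
      rw [uIoc_of_le hTT]
      refine (ContinuousOn.mul ?_ (hx.mono Ioc_subset_Icc_self)).aestronglyMeasurable
        measurableSet_Ioc
      refine ContinuousOn.mul ?_ continuousOn_const
      refine ContinuousOn.mul continuousOn_const ?_
      refine ContinuousOn.rpow_const
        ((continuous_const.add (continuous_const.sub continuous_id)).continuousOn)
        (fun r hr => Or.inl (ne_of_gt ?_))
      exact lt_trans (half_pos ht₀) (hbase t₀ (mem_ball_self (half_pos ht₀)) r hr).1)
    (by
      rw [uIoc_of_le hTT]
      refine ae_of_all _ (fun r hr u hu => ?_)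
      obtain ⟨hb1, hb2⟩ := hbase u hu r hr
      have hbpos : 0 < u + (2*T - r) := lt_trans (half_pos ht₀) hb1
      have h1 : (u + (2*T - r)) ^ (e-1) ≤ (t₀/2) ^ (e-1) + (3*t₀/2 + T) ^ (e-1) :=
        rpow_le_max (half_pos ht₀) hb1.le hb2.le
      have h2 : |x r| ≤ C := by
        have := hC r (Ioc_subset_Icc_self hr); rwa [Real.norm_eq_abs] at this
      calc ‖e * (u + (2*T - r)) ^ (e-1) * 1 * x r‖
          = |e| * (u + (2*T - r)) ^ (e-1) * |x r| := by
            rw [Real.norm_eq_abs, mul_one, abs_mul, abs_mul,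
              abs_of_nonneg (Real.rpow_nonneg hbpos.le _)]
        _ ≤ |e| * ((t₀/2) ^ (e-1) + (3*t₀/2 + T) ^ (e-1)) * C := by
            refine mul_le_mul (mul_le_mul_of_nonneg_left h1 (abs_nonneg e)) h2 (abs_nonneg _) ?_
            positivity)
    intervalIntegrable_const
    (by
      rw [uIoc_of_le hTT]
      refine ae_of_all _ (fun r hr u hu => ?_)
      have hbpos : 0 < u + (2*T - r) := lt_trans (half_pos ht₀) (hbase u hu r hr).1
      have h1 : HasDerivAt (fun t : ℝ => t + (2*T - r)) 1 u := (hasDerivAt_id u).add_const _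
      have h2 := (Real.hasDerivAt_rpow_const (x := u + (2*T - r)) (p := e) (Or.inl hbpos.ne')).comp u h1
      simpa using h2.mul_const (x r))
  have hval : (fun r => e * (t₀ + (2*T - r)) ^ (e-1) * 1 * x r)
      = fun r => e * ((t₀ + (2*T - r)) ^ (e-1) * x r) := by funext r; ring
  have := key.2
  rw [hval, intervalIntegral.integral_const_mul] at this
  exact this

private lemma lemB {x : ℝ → ℝ} {T : ℝ} (hT : 0 < T)
    (hx : ContinuousOn x (Icc T (2*T))) (k : ℕ) (e z₀ : ℝ) (hz₀ : z₀ < 1/(2*T)) :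
    HasDerivAt (fun z => ∫ r in T..(2*T), (r ^ k * x r) * (1 - z * r) ^ e)
      (-e * ∫ r in T..(2*T), (r ^ (k+1) * x r) * (1 - z₀ * r) ^ (e - 1)) z₀ := by
  have hTT : T ≤ 2*T := by linarith
  have h2T : (0:ℝ) < 2*T := by linarith
  obtain ⟨C, hC⟩ := isCompact_Icc.exists_bound_of_continuousOn hx
  have hC0 : 0 ≤ C := (norm_nonneg _).trans (hC T ⟨le_refl T, hTT⟩)
  set ε := (1/(2*T) - z₀)/2 with hεdef
  have hε : 0 < ε := by simp only [hεdef]; linarith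
  have hze : z₀ + ε < 1/(2*T) := by simp only [hεdef]; linarith
  have hze1 : (z₀ + ε) * (2*T) < 1 := by
    have := mul_lt_mul_of_pos_right hze h2T
    rwa [one_div_mul_cancel (ne_of_gt h2T)] at this
  set m := min 1 (1 - (z₀ + ε)*(2*T)) with hmdef
  set M := 1 + (|z₀| + ε)*(2*T) with hMdef
  have hm : 0 < m := lt_min one_pos (by linarith)
  have hbase : ∀ u ∈ ball z₀ ε, ∀ r ∈ Icc T (2*T), m ≤ 1 - u*r ∧ 1 - u*r ≤ M := by
    intro u hu r hr
    rw [mem_ball, Real.dist_eq] at hu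
    obtain ⟨hu1, hu2⟩ := abs_lt.mp hu
    have hr0 : 0 < r := lt_of_lt_of_le hT hr.1
    have habs : |u| ≤ |z₀| + ε := by
      have h := abs_sub_abs_le_abs_sub u z₀
      linarith
    constructor
    · rcases le_or_gt u 0 with hu0 | hu0
      · have : u * r ≤ 0 := mul_nonpos_iff.mpr (Or.inr ⟨hu0, hr0.le⟩)
        have hm1 : m ≤ 1 := min_le_left _ _
        linarith
      · have h1 : u * r < (z₀ + ε) * r := mul_lt_mul_of_pos_right (by linarith) hr0
        have h2 : (z₀ + ε) * r ≤ (z₀ + ε) * (2*T) :=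
          mul_le_mul_of_nonneg_left hr.2 (le_of_lt (lt_trans hu0 (by linarith)))
        have hm2 : m ≤ 1 - (z₀ + ε)*(2*T) := min_le_right _ _
        linarith
    · have h1 : -u ≤ |u| := neg_le_abs u
      have h2 : -(u * r) ≤ |u| * r := by nlinarith
      have h3 : |u| * r ≤ (|z₀| + ε) * (2*T) :=
        mul_le_mul habs hr.2 hr0.le (by positivity)
      simp only [hMdef]; linarith
  have hcont : ∀ u ∈ ball z₀ ε,
      ContinuousOn (fun r => (r ^ k * x r) * (1 - u * r) ^ e) (Icc T (2*T)) := by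
    intro u hu
    refine ContinuousOn.mul ((continuous_pow k).continuousOn.mul hx) ?_
    refine ContinuousOn.rpow_const
      ((continuous_const.sub (continuous_const.mul continuous_id)).continuousOn)
      (fun r hr => Or.inl (ne_of_gt (lt_of_lt_of_le hm (hbase u hu r hr).1)))
  have hcont' : ∀ u ∈ ball z₀ ε,
      ContinuousOn (fun r => (r ^ k * x r) * (e * (1 - u * r) ^ (e-1) * (-r))) (Icc T (2*T)) := by
    intro u hu
    refine ContinuousOn.mul ((continuous_pow k).continuousOn.mul hx) ?_
    refine ContinuousOn.mul (ContinuousOn.mul continuousOn_const ?_) (continuous_neg.continuousOn)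
    refine ContinuousOn.rpow_const
      ((continuous_const.sub (continuous_const.mul continuous_id)).continuousOn)
      (fun r hr => Or.inl (ne_of_gt (lt_of_lt_of_le hm (hbase u hu r hr).1)))
  have hz₀ball : z₀ ∈ ball z₀ ε := mem_ball_self hε
  have key := intervalIntegral.hasDerivAt_integral_of_dominated_loc_of_deriv_le
    (μ := volume)
    (F := fun u r => (r ^ k * x r) * (1 - u * r) ^ e)
    (F' := fun u r => (r ^ k * x r) * (e * (1 - u * r) ^ (e-1) * (-r)))
    (bound := fun _ => ((2*T)^k * C) * (|e| * (m ^ (e-1) + M ^ (e-1)) * (2*T)))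
    (ball_mem_nhds z₀ hε)
    (by
      filter_upwards [ball_mem_nhds z₀ hε] with u hu
      rw [uIoc_of_le hTT]
      exact ((hcont u hu).mono Ioc_subset_Icc_self).aestronglyMeasurable measurableSet_Ioc)
    (by
      apply ContinuousOn.intervalIntegrable
      rw [uIcc_of_le hTT]
      exact hcont z₀ hz₀ball)
    (by
      rw [uIoc_of_le hTT]
      exact ((hcont' z₀ hz₀ball).mono Ioc_subset_Icc_self).aestronglyMeasurable measurableSet_Ioc)
    (by
      rw [uIoc_of_le hTT]
      refine ae_of_all _ (fun r hr u hu => ?_)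
      have hrIcc := Ioc_subset_Icc_self hr
      have hr0 : 0 < r := lt_of_lt_of_le hT hrIcc.1
      obtain ⟨hb1, hb2⟩ := hbase u hu r hrIcc
      have hbpos : 0 < 1 - u*r := lt_of_lt_of_le hm hb1
      have h1 : (1 - u*r) ^ (e-1) ≤ m ^ (e-1) + M ^ (e-1) := rpow_le_max hm hb1 hb2
      have h2 : |x r| ≤ C := by
        have := hC r hrIcc; rwa [Real.norm_eq_abs] at this
      have h3 : r ^ k ≤ (2*T) ^ k := pow_le_pow_left₀ hr0.le hrIcc.2 k
      calc ‖(r ^ k * x r) * (e * (1 - u * r) ^ (e-1) * (-r))‖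
          = (r ^ k * |x r|) * (|e| * (1 - u*r) ^ (e-1) * r) := by
            rw [Real.norm_eq_abs, abs_mul, abs_mul, abs_mul, abs_mul, abs_neg,
              abs_of_nonneg (Real.rpow_nonneg hbpos.le _), abs_of_nonneg (pow_nonneg hr0.le _),
              abs_of_nonneg hr0.le]
        _ ≤ ((2*T)^k * C) * (|e| * (m ^ (e-1) + M ^ (e-1)) * (2*T)) := by
            refine mul_le_mul (mul_le_mul h3 h2 (abs_nonneg _) (by positivity)) ?_ (by positivity) (by positivity)
            refine mul_le_mul (mul_le_mul_of_nonneg_left h1 (abs_nonneg e)) hrIcc.2 hr0.le (by positivity))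
    intervalIntegrable_const
    (by
      rw [uIoc_of_le hTT]
      refine ae_of_all _ (fun r hr u hu => ?_)
      have hrIcc := Ioc_subset_Icc_self hr
      have hbpos : 0 < 1 - u*r := lt_of_lt_of_le hm (hbase u hu r hrIcc).1
      have h1 : HasDerivAt (fun z : ℝ => 1 - z * r) (-r) u :=
        (hasDerivAt_mul_const r).const_sub 1
      have h2 := (Real.hasDerivAt_rpow_const (x := 1 - u*r) (p := e) (Or.inl hbpos.ne')).comp u h1
      exact h2.const_mul (r ^ k * x r))
  have hval : (fun r => (r ^ k * x r) * (e * (1 - z₀ * r) ^ (e-1) * (-r)))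
      = fun r => -e * ((r ^ (k+1) * x r) * (1 - z₀ * r) ^ (e-1)) := by
    funext r; ring
  have h := key.2
  rw [hval, intervalIntegral.integral_const_mul] at h
  exact h

private lemma phi_cont_Ioo {β : ℝ} (k : ℕ) {D : ℝ → ℝ} (hD : ContinuousOn D (Ioi 0))
    {u : ℝ} (hu : 0 < u) :
    ContinuousOn (fun σ => (1-σ)^β * σ^k * D (u*σ)) (Ioo (0:ℝ) 1) := by
  refine ContinuousOn.mul (ContinuousOn.mul ?_ (continuous_pow k).continuousOn) ?_
  · exact ContinuousOn.rpow_const (continuous_const.sub continuous_id).continuousOn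
      (fun σ hσ => Or.inl (by have := hσ.2; intro h; simp only [sub_eq_zero] at h; linarith))
  · exact hD.comp (continuous_const.mul continuous_id).continuousOn
      (fun σ hσ => mul_pos hu hσ.1)

private lemma phi_integrable {β : ℝ} (hβ : -1 < β) (k : ℕ) {D : ℝ → ℝ}
    (hD : ContinuousOn D (Ioi 0)) {C M : ℝ}
    (hC : ∀ s, 0 < s → s ≤ M → |D s| ≤ C)
    {u : ℝ} (hu : 0 < u) (huM : u ≤ M) :
    IntervalIntegrable (fun σ => (1-σ)^β * σ^k * D (u*σ)) volume 0 1 := by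
  rw [intervalIntegrable_iff, uIoc_of_le zero_le_one]
  have hbint : IntegrableOn (fun σ => C * (1-σ)^β) (Ioc (0:ℝ) 1) volume := by
    have h1 : IntervalIntegrable (fun σ : ℝ => C * (1-σ)^β) volume 0 1 := by
      have := ((intervalIntegrable_rpow' (r := β) hβ (a := 0) (b := 1)).comp_sub_left 1)
      simpa using this.symm.const_mul C
    rwa [intervalIntegrable_iff, uIoc_of_le zero_le_one] at h1
  refine hbint.mono' ?_ ?_
  · have h2 : AEStronglyMeasurable (fun σ => (1-σ)^β * σ^k * D (u*σ))
        (volume.restrict (Ioo (0:ℝ) 1)) :=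
      (phi_cont_Ioo k hD hu (β := β)).aestronglyMeasurable measurableSet_Ioo
    rwa [Measure.restrict_congr_set Ioo_ae_eq_Ioc] at h2
  · rw [ae_restrict_iff' measurableSet_Ioc]
    refine ae_of_all _ (fun σ hσ => ?_)
    have h1σ : (0:ℝ) ≤ 1 - σ := by linarith [hσ.2]
    have hrp : (0:ℝ) ≤ (1-σ)^β := Real.rpow_nonneg h1σ β
    have hpow : σ^k ≤ 1 := pow_le_one₀ hσ.1.le hσ.2
    have hDb : |D (u*σ)| ≤ C := hC _ (mul_pos hu hσ.1) (by nlinarith [hσ.2])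
    have hC0 : 0 ≤ C := (abs_nonneg _).trans hDb
    calc ‖(1-σ)^β * σ^k * D (u*σ)‖ = (1-σ)^β * σ^k * |D (u*σ)| := by
          rw [Real.norm_eq_abs, abs_mul, abs_mul, abs_of_nonneg hrp,
            abs_of_nonneg (pow_nonneg hσ.1.le k)]
      _ ≤ (1-σ)^β * 1 * C := by
          refine mul_le_mul (mul_le_mul_of_nonneg_left hpow hrp) hDb (abs_nonneg _) ?_
          positivity
      _ = C * (1-σ)^β := by ring

private lemma phi_hasDerivAt {β : ℝ} (hβ : -1 < β) (k : ℕ) {D D' : ℝ → ℝ}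
    (hD : ContinuousOn D (Ioi 0)) (hD' : ContinuousOn D' (Ioi 0))
    (hDd : ∀ p, 0 < p → HasDerivAt D (D' p) p)
    {C C' : ℝ} {u₀ : ℝ} (hu₀ : 0 < u₀)
    (hbC : ∀ s, 0 < s → s ≤ 2*u₀ → |D s| ≤ C)
    (hbC' : ∀ s, 0 < s → s ≤ 2*u₀ → |D' s| ≤ C') :
    HasDerivAt (fun u => ∫ σ in (0:ℝ)..1, (1-σ)^β * σ^k * D (u*σ))
      (∫ σ in (0:ℝ)..1, (1-σ)^β * σ^k * (D' (u₀*σ) * σ)) u₀ := by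
  have hball : ∀ u ∈ ball u₀ (u₀/2), u₀/2 < u ∧ u < 2*u₀ := by
    intro u hu
    rw [mem_ball, Real.dist_eq, abs_lt] at hu
    constructor <;> linarith [hu.1, hu.2]
  have key := intervalIntegral.hasDerivAt_integral_of_dominated_loc_of_deriv_le
    (μ := volume)
    (F := fun u σ => (1-σ)^β * σ^k * D (u*σ))
    (F' := fun u σ => (1-σ)^β * σ^k * (D' (u*σ) * σ))
    (bound := fun σ => C' * (1-σ)^β)
    (ball_mem_nhds u₀ (half_pos hu₀))
    (by
      filter_upwards [ball_mem_nhds u₀ (half_pos hu₀)] with u hu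
      exact aesm_of_continuousOn_Ioo zero_le_one
        (phi_cont_Ioo k hD (lt_trans (half_pos hu₀) (hball u hu).1)))
    (by
      have := phi_integrable hβ k hD hbC hu₀ (by linarith)
      exact this)
    (by
      refine aesm_of_continuousOn_Ioo zero_le_one ?_
      refine ContinuousOn.mul (ContinuousOn.mul ?_ (continuous_pow k).continuousOn) ?_
      · exact ContinuousOn.rpow_const (continuous_const.sub continuous_id).continuousOn
          (fun σ hσ => Or.inl (by have := hσ.2; intro h; simp only [sub_eq_zero] at h; linarith))
      · refine ContinuousOn.mul ?_ continuous_id.continuousOn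
        exact hD'.comp (continuous_const.mul continuous_id).continuousOn
          (fun σ hσ => mul_pos hu₀ hσ.1))
    (by
      rw [uIoc_of_le zero_le_one]
      refine ae_of_all _ (fun σ hσ u hu => ?_)
      have h1σ : (0:ℝ) ≤ 1 - σ := by linarith [hσ.2]
      have hrp : (0:ℝ) ≤ (1-σ)^β := Real.rpow_nonneg h1σ β
      have hu' := hball u hu
      have huσ : 0 < u * σ := mul_pos (lt_trans (half_pos hu₀) hu'.1) hσ.1
      have hD'b : |D' (u*σ)| ≤ C' := hbC' _ huσ (by nlinarith [hσ.2, hu'.2, hσ.1.le])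
      have hC'0 : 0 ≤ C' := (abs_nonneg _).trans hD'b
      have hpow : σ^k * σ ≤ 1 := by
        have h3 : σ^k ≤ 1 := pow_le_one₀ hσ.1.le hσ.2
        nlinarith [hσ.2, hσ.1.le, pow_nonneg hσ.1.le k]
      calc ‖(1-σ)^β * σ^k * (D' (u*σ) * σ)‖ = (1-σ)^β * ((σ^k * σ) * |D' (u*σ)|) := by
            rw [Real.norm_eq_abs, abs_mul, abs_mul, abs_mul, abs_of_nonneg hrp,
              abs_of_nonneg (pow_nonneg hσ.1.le k), abs_of_nonneg hσ.1.le]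
            ring
        _ ≤ (1-σ)^β * (1 * C') := by
            refine mul_le_mul_of_nonneg_left ?_ hrp
            exact mul_le_mul hpow hD'b (abs_nonneg _) zero_le_one
        _ = C' * (1-σ)^β := by ring)
    (by
      have h1 : IntervalIntegrable (fun σ : ℝ => C' * (1-σ)^β) volume 0 1 := by
        have := ((intervalIntegrable_rpow' (r := β) hβ (a := 0) (b := 1)).comp_sub_left 1)
        simpa using this.symm.const_mul C'
      exact h1)
    (by
      rw [uIoc_of_le zero_le_one]
      refine ae_of_all _ (fun σ hσ u hu => ?_)
      have hu' := hball u hu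
      have hupos : 0 < u := lt_trans (half_pos hu₀) hu'.1
      have hin : HasDerivAt (fun v => D (v * σ)) (D' (u*σ) * σ) u :=
        (hDd (u*σ) (mul_pos hupos hσ.1)).comp u (hasDerivAt_mul_const σ)
      exact hin.const_mul ((1-σ)^β * σ^k))
  exact key.2

private lemma phi_continuousAt {β : ℝ} (hβ : -1 < β) (k : ℕ) {D : ℝ → ℝ}
    (hD : ContinuousOn D (Ioi 0)) {C : ℝ} {u₀ : ℝ} (hu₀ : 0 < u₀)
    (hbC : ∀ s, 0 < s → s ≤ 2*u₀ → |D s| ≤ C) :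
    ContinuousAt (fun u => ∫ σ in (0:ℝ)..1, (1-σ)^β * σ^k * D (u*σ)) u₀ := by
  have hball : ∀ u ∈ ball u₀ (u₀/2), u₀/2 < u ∧ u < 2*u₀ := by
    intro u hu
    rw [mem_ball, Real.dist_eq, abs_lt] at hu
    constructor <;> linarith [hu.1, hu.2]
  refine continuousAt_of_dominated_interval (μ := volume)
    (bound := fun σ => C * (1-σ)^β) ?_ ?_ ?_ ?_
  · filter_upwards [ball_mem_nhds u₀ (half_pos hu₀)] with u hu
    exact aesm_of_continuousOn_Ioo zero_le_one
      (phi_cont_Ioo k hD (lt_trans (half_pos hu₀) (hball u hu).1))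
  · filter_upwards [ball_mem_nhds u₀ (half_pos hu₀)] with u hu
    rw [uIoc_of_le zero_le_one]
    refine ae_of_all _ (fun σ hσ => ?_)
    have h1σ : (0:ℝ) ≤ 1 - σ := by linarith [hσ.2]
    have hrp : (0:ℝ) ≤ (1-σ)^β := Real.rpow_nonneg h1σ β
    have hu' := hball u hu
    have huσ : 0 < u * σ := mul_pos (lt_trans (half_pos hu₀) hu'.1) hσ.1
    have hDb : |D (u*σ)| ≤ C := hbC _ huσ (by nlinarith [hσ.2, hu'.2, hσ.1.le])
    calc ‖(1-σ)^β * σ^k * D (u*σ)‖ = (1-σ)^β * σ^k * |D (u*σ)| := by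
          rw [Real.norm_eq_abs, abs_mul, abs_mul, abs_of_nonneg hrp,
            abs_of_nonneg (pow_nonneg hσ.1.le k)]
      _ ≤ (1-σ)^β * 1 * C := by
          refine mul_le_mul (mul_le_mul_of_nonneg_left (pow_le_one₀ hσ.1.le hσ.2) hrp) hDb
            (abs_nonneg _) (by positivity)
      _ = C * (1-σ)^β := by ring
  · have h1 : IntervalIntegrable (fun σ : ℝ => C * (1-σ)^β) volume 0 1 := by
      have := ((intervalIntegrable_rpow' (r := β) hβ (a := 0) (b := 1)).comp_sub_left 1)
      simpa using this.symm.const_mul C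
    exact h1
  · rw [uIoc_of_le zero_le_one]
    refine ae_of_all _ (fun σ hσ => ?_)
    refine ContinuousAt.mul continuousAt_const ?_
    refine ContinuousAt.comp ?_ ?_
    · exact (hD (u₀ * σ) (mul_pos hu₀ hσ.1)).continuousAt
        (isOpen_Ioi.mem_nhds (mul_pos hu₀ hσ.1))
    · exact (continuous_id.mul continuous_const).continuousAt
set_option maxHeartbeats 1000000 in
theorem riemann_liouville_deriv_not_periodic
    (α : ℝ) (hα : 0 < α) (hαnotint : ∀ m : ℕ, α ≠ m)
    (n : ℕ) (hn : n = ⌊α⌋₊ + 1)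
    (T : ℝ) (hT : 0 < T) (x : ℝ → ℝ)
    (hC : ContDiffOn ℝ n x (Ioi 0))
    (hnc : ¬ ∃ c : ℝ, ∀ t > (0:ℝ), x t = c)
    (hper : ∀ t > (0:ℝ), x (t + T) = x t) :
    ¬ ∀ t > (0:ℝ),
        (1 / Real.Gamma (n - α)) *
            iteratedDeriv n
              (fun u : ℝ => ∫ s in (0:ℝ)..u, (u - s) ^ ((n : ℝ) - α - 1) * x s) (t + T)
          = (1 / Real.Gamma (n - α)) *
            iteratedDeriv n
              (fun u : ℝ => ∫ s in (0:ℝ)..u, (u - s) ^ ((n : ℝ) - α - 1) * x s) t := by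
  intro hP
  -- basic numeric facts
  have hn1 : 1 ≤ n := by omega
  have hnR : (n:ℝ) = (⌊α⌋₊ : ℝ) + 1 := by rw [hn]; push_cast; ring
  have hαlt : α < (n:ℝ) := by rw [hnR]; exact_mod_cast Nat.lt_floor_add_one α
  have hαgt : (n:ℝ) - 1 < α := by
    have h1 : (⌊α⌋₊:ℝ) ≤ α := Nat.floor_le hα.le
    have h2 : (⌊α⌋₊:ℝ) ≠ α := fun h => hαnotint ⌊α⌋₊ h.symm
    have h3 : (⌊α⌋₊:ℝ) < α := lt_of_le_of_ne h1 h2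
    rw [hnR]; linarith
  set β : ℝ := (n:ℝ) - α - 1 with hβdef
  have hβm1 : -1 < β := by rw [hβdef]; linarith
  have hβ0 : β < 0 := by rw [hβdef]; linarith
  have hβj : ∀ j : ℕ, j < n → β - (j:ℝ) ≠ 0 := by
    intro j hj h
    have hj' : j ≤ n - 1 := by omega
    refine hαnotint (n - 1 - j) ?_
    have e1 : ((n - 1 - j : ℕ) : ℝ) = (n:ℝ) - 1 - j := by
      rw [Nat.cast_sub hj', Nat.cast_sub hn1, Nat.cast_one]
    rw [e1]
    rw [hβdef] at h; linarith
  have hΓ : (1 : ℝ) / Real.Gamma ((n:ℝ) - α) ≠ 0 :=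
    one_div_ne_zero (Real.Gamma_pos_of_pos (by linarith)).ne'
  have hTT : T ≤ 2*T := by linarith
  -- derivative bundle for x
  have hxc : ∀ k, k ≤ n → ContinuousOn (iteratedDeriv k x) (Ioi 0) := by
    intro k hk
    have h1 : ContinuousOn (iteratedDerivWithin k x (Ioi 0)) (Ioi 0) :=
      hC.continuousOn_iteratedDerivWithin (by exact_mod_cast hk) isOpen_Ioi.uniqueDiffOn
    exact h1.congr (fun p hp => (iteratedDerivWithin_Ioi x k hp).symm)
  have hxc0 : ContinuousOn x (Ioi 0) := by
    have := hxc 0 (Nat.zero_le n); rwa [iteratedDeriv_zero] at this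
  have hxIcc : ContinuousOn x (Icc T (2*T)) :=
    hxc0.mono (fun r hr => lt_of_lt_of_le hT hr.1)
  have hxd : ∀ k, k < n → ∀ p, 0 < p →
      HasDerivAt (iteratedDeriv k x) (iteratedDeriv (k+1) x p) p := by
    intro k hk p hp
    have h1 : DifferentiableOn ℝ (iteratedDerivWithin k x (Ioi 0)) (Ioi 0) :=
      hC.differentiableOn_iteratedDerivWithin (by exact_mod_cast hk) isOpen_Ioi.uniqueDiffOn
    have heq : iteratedDerivWithin k x (Ioi 0) =ᶠ[𝓝 p] iteratedDeriv k x := by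
      filter_upwards [isOpen_Ioi.mem_nhds hp] with q hq
      exact iteratedDerivWithin_Ioi x k hq
    have h2 : DifferentiableAt ℝ (iteratedDeriv k x) p :=
      (Filter.EventuallyEq.differentiableAt_iff heq).mp
        ((h1 p hp).differentiableAt (isOpen_Ioi.mem_nhds hp))
    have h4 := h2.hasDerivAt
    rwa [← iteratedDeriv_succ] at h4
  have hxper : ∀ k : ℕ, ∀ s, 0 < s → iteratedDeriv k x (s + T) = iteratedDeriv k x s := by
    intro k s hs
    calc iteratedDeriv k x (s+T)
        = iteratedDeriv k (fun z => x (z + T)) s := (congrFun (iteratedDeriv_comp_add_const k x T) s).symm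
      _ = iteratedDeriv k x s := by
          refine Filter.EventuallyEq.iteratedDeriv_eq k ?_
          filter_upwards [isOpen_Ioi.mem_nhds hs] with u hu
          exact hper u hu
  have hxbd : ∀ k, k ≤ n → ∀ M : ℝ, 0 < M →
      ∃ C, 0 ≤ C ∧ ∀ s, 0 < s → s ≤ M → |iteratedDeriv k x s| ≤ C := by
    intro k hk M hM
    obtain ⟨C, hCb⟩ := (isCompact_Icc (a := T) (b := M + T)).exists_bound_of_continuousOn
      ((hxc k hk).mono (fun r hr => lt_of_lt_of_le hT hr.1))
    refine ⟨C, (norm_nonneg _).trans (hCb T ⟨le_refl T, by linarith⟩), fun s hs hsM => ?_⟩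
    rw [← hxper k s hs]
    have := hCb (s + T) ⟨by linarith, by linarith⟩
    rwa [Real.norm_eq_abs] at this
  -- the central objects
  set Fn : ℝ → ℝ := fun u : ℝ => ∫ s in (0:ℝ)..u, (u - s) ^ β * x s with hFdef
  have hFval : ∀ v : ℝ, Fn v = ∫ s in (0:ℝ)..v, (v - s) ^ β * x s := fun v => by rw [hFdef]
  set G₂ : ℝ → ℝ := fun t : ℝ => ∫ r in T..(2*T), (t + (2*T - r)) ^ β * x r with hGdef
  have hGval : ∀ t : ℝ, G₂ t = ∫ r in T..(2*T), (t + (2*T - r)) ^ β * x r := fun t => by rw [hGdef]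
  set Φ : ℕ → ℝ → ℝ := fun k u => ∫ σ in (0:ℝ)..1, (1-σ)^β * σ^k * iteratedDeriv k x (u*σ)
    with hΦdef
  have hΦval : ∀ k u, Φ k u = ∫ σ in (0:ℝ)..1, (1-σ)^β * σ^k * iteratedDeriv k x (u*σ) :=
    fun k u => by rw [hΦdef]
  have hH : ∀ t, 0 < t → iteratedDeriv n Fn (t+T) = iteratedDeriv n Fn t :=
    fun t ht => mul_left_cancel₀ hΓ (hP t ht)
  -- periodicity decomposition : Fn (u+T) = Fn u + G₂ u for u > 0
  have hsplit : ∀ u, 0 < u → Fn (u + T) = Fn u + G₂ u := by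
    intro u hu
    obtain ⟨C, hC0, hCb⟩ := hxbd 0 (Nat.zero_le n) (u + T) (by linarith)
    have hCx : ∀ s, 0 < s → s ≤ u + T → |x s| ≤ C := by
      intro s h1 h2; have := hCb s h1 h2; rwa [iteratedDeriv_zero] at this
    have hint1 : IntervalIntegrable (fun s => (u + T - s)^β * x s) volume 0 T := by
      refine intint_of_bound hT.le ?_ (_root_.intervalIntegrable_const (c := (u^β + (u+T)^β) * C)) ?_
      · rw [uIoc_of_le hT.le]
        refine (ContinuousOn.mul ?_ (hxc0.mono (fun s hs => hs.1))).aestronglyMeasurable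
          measurableSet_Ioc
        exact ContinuousOn.rpow_const (continuous_const.sub continuous_id).continuousOn
          (fun s hs => Or.inl (ne_of_gt (by linarith [hs.2] : (0:ℝ) < u + T - s)))
      · intro s hs
        have h1 : (u + T - s)^β ≤ u^β + (u+T)^β :=
          rpow_le_max hu (by linarith [hs.2]) (by linarith [hs.1])
        have h2 : |x s| ≤ C := hCx s hs.1 (by linarith [hs.2])
        calc |(u + T - s)^β * x s| = (u+T-s)^β * |x s| := by
              rw [abs_mul, abs_of_nonneg (Real.rpow_nonneg (by linarith [hs.2]) β)]
          _ ≤ (u^β + (u+T)^β) * C := mul_le_mul h1 h2 (abs_nonneg _) (by positivity)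
    have hbint2 : IntervalIntegrable (fun s => C * (u + T - s)^β) volume T (u + T) := by
      have h1 := (intervalIntegrable_rpow' (r := β) hβm1 (a := 0) (b := u)).comp_sub_left (u + T)
      have h2 := h1.symm.const_mul C
      simpa using h2
    have hint2 : IntervalIntegrable (fun s => (u + T - s)^β * x s) volume T (u + T) := by
      refine intint_of_bound (by linarith) ?_ hbint2 ?_
      · refine aesm_of_continuousOn_Ioo (by linarith) ?_
        refine ContinuousOn.mul ?_ (hxc0.mono (fun s hs => lt_trans hT hs.1))
        exact ContinuousOn.rpow_const (continuous_const.sub continuous_id).continuousOn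
          (fun s hs => Or.inl (ne_of_gt (by linarith [hs.2] : (0:ℝ) < u + T - s)))
      · intro s hs
        have h2 : |x s| ≤ C := hCx s (lt_trans hT hs.1) hs.2
        calc |(u + T - s)^β * x s| = (u+T-s)^β * |x s| := by
              rw [abs_mul, abs_of_nonneg (Real.rpow_nonneg (by linarith [hs.2]) β)]
          _ ≤ (u+T-s)^β * C :=
              mul_le_mul_of_nonneg_left h2 (Real.rpow_nonneg (by linarith [hs.2]) β)
          _ = C * (u+T-s)^β := mul_comm _ _
    have hadd := intervalIntegral.integral_add_adjacent_intervals hint1 hint2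
    have hpc2 : (∫ s in T..(u+T), (u + T - s)^β * x s) = Fn u := by
      have h1 := intervalIntegral.integral_comp_add_right (a := (0:ℝ)) (b := u)
        (fun s => (u + T - s)^β * x s) T
      rw [zero_add] at h1
      refine Eq.trans h1.symm ?_
      have h2 : (fun r => (u + T - (r + T))^β * x (r + T)) = fun r => (u - r)^β * x (r + T) := by
        funext r; rw [show u + T - (r + T) = u - r by ring]
      rw [h2, hFval u, intervalIntegral.integral_of_le hu.le,
        intervalIntegral.integral_of_le hu.le]
      exact MeasureTheory.setIntegral_congr_fun measurableSet_Ioc (fun r hr => by rw [hper r hr.1])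
    have hpc1 : (∫ s in (0:ℝ)..T, (u + T - s)^β * x s) = G₂ u := by
      have e1 : (∫ s in (0:ℝ)..T, (u + T - s)^β * x s)
          = ∫ s in (0:ℝ)..T, (u + (2*T - (s + T)))^β * x (s + T) := by
        rw [intervalIntegral.integral_of_le hT.le, intervalIntegral.integral_of_le hT.le]
        refine MeasureTheory.setIntegral_congr_fun measurableSet_Ioc (fun s hs => ?_)
        rw [hper s hs.1, show u + (2*T - (s + T)) = u + T - s by ring]
      have e2 := intervalIntegral.integral_comp_add_right (a := (0:ℝ)) (b := T)
        (fun r => (u + (2*T - r))^β * x r) T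
      rw [zero_add] at e2
      rw [hGval u]
      refine e1.trans (e2.trans ?_)
      rw [show T + T = 2*T by ring]
    rw [hFval (u + T), ← hadd, hpc1, hpc2]
    exact add_comm _ _
  -- substitution representation of Fn
  have hΦrep : ∀ u, 0 < u → Fn u = u^(β+1) * Φ 0 u := by
    intro u hu
    have h1 := intervalIntegral.smul_integral_comp_mul_right (a := (0:ℝ)) (b := 1)
      (fun s => (u - s)^β * x s) u
    rw [zero_mul, one_mul] at h1
    have h2 : (∫ σ in (0:ℝ)..1, (fun s => (u - s)^β * x s) (σ * u))
        = ∫ σ in (0:ℝ)..1, u^β * ((1-σ)^β * σ^(0:ℕ) * iteratedDeriv 0 x (u * σ)) := by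
      refine intervalIntegral.integral_congr (fun σ hσ => ?_)
      rw [uIcc_of_le zero_le_one] at hσ
      show (u - σ * u)^β * x (σ * u) = _
      rw [iteratedDeriv_zero, show u - σ * u = u * (1 - σ) by ring,
        Real.mul_rpow hu.le (by linarith [hσ.2] : (0:ℝ) ≤ 1 - σ),
        show σ * u = u * σ by ring]
      ring
    have h3 : u^(β+1) = u^β * u := by rw [Real.rpow_add hu, Real.rpow_one]
    rw [hFval u, ← h1, smul_eq_mul, h2, intervalIntegral.integral_const_mul, ← hΦval 0 u, h3]
    ring
  -- smoothness of Φ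
  have hΦd : ∀ k, k < n → ∀ u, 0 < u → HasDerivAt (Φ k) (Φ (k+1) u) u := by
    intro k hk u hu
    obtain ⟨C, hC0, hCb⟩ := hxbd k hk.le (2*u) (by linarith)
    obtain ⟨C', hC'0, hC'b⟩ := hxbd (k+1) hk (2*u) (by linarith)
    have key := phi_hasDerivAt hβm1 k (hxc k hk.le) (hxc (k+1) hk) (hxd k hk) hu hCb hC'b
    have hfun : (fun v => ∫ σ in (0:ℝ)..1, (1-σ)^β * σ^k * iteratedDeriv k x (v*σ)) = Φ k := by
      funext v; rw [hΦval]
    have hval2 : (∫ σ in (0:ℝ)..1, (1-σ)^β * σ^k * (iteratedDeriv (k+1) x (u*σ) * σ))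
        = Φ (k+1) u := by
      rw [hΦval]
      exact intervalIntegral.integral_congr (fun σ _ => by ring)
    rw [hfun, hval2] at key
    exact key
  have hΦc : ContinuousOn (Φ n) (Ioi 0) := by
    intro u hu
    obtain ⟨C, hC0, hCb⟩ := hxbd n le_rfl (2*u) (by have : (0:ℝ) < u := hu; linarith)
    have key := phi_continuousAt hβm1 n (hxc n le_rfl) hu hCb
    have hfun : (fun v => ∫ σ in (0:ℝ)..1, (1-σ)^β * σ^n * iteratedDeriv n x (v*σ)) = Φ n := by
      funext v; rw [hΦval]
    rw [hfun] at key
    exact key.continuousWithinAt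
  have hΦcd : ∀ j : ℕ, j ≤ n → ContDiffOn ℝ j (Φ (n - j)) (Ioi 0) := by
    intro j
    induction j with
    | zero => intro _; exact contDiffOn_zero.mpr hΦc
    | succ j IH =>
      intro hj
      have hj' : j ≤ n := by omega
      have hlt : n - (j+1) < n := by omega
      have hidx : n - (j+1) + 1 = n - j := by omega
      have hcast : ((j+1 : ℕ) : WithTop ℕ∞) = (j : ℕ) + 1 := by push_cast; rfl
      rw [hcast, contDiffOn_succ_iff_deriv_of_isOpen isOpen_Ioi]
      refine ⟨fun u hu => ((hΦd _ hlt u hu).differentiableAt).differentiableWithinAt,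
        fun h => absurd h (by simp), ?_⟩
      refine (IH hj').congr (fun u hu => ?_)
      rw [← hidx]
      exact (hΦd _ hlt u hu).deriv
  have hFcd : ContDiffOn ℝ n Fn (Ioi 0) := by
    have hΦn : ContDiffOn ℝ n (Φ 0) (Ioi 0) := by
      have := hΦcd n le_rfl; rwa [Nat.sub_self] at this
    have hrpow : ContDiffOn ℝ n (fun u : ℝ => u^(β+1)) (Ioi 0) := by
      intro u hu
      exact (Real.contDiffAt_rpow_const_of_ne (p := β+1) (ne_of_gt hu)).contDiffWithinAt
    exact (hrpow.mul hΦn).congr (fun u hu => hΦrep u hu)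
  -- smoothness of G₂
  have hGall : ∀ (m : ℕ) (e : ℝ), ContDiffOn ℝ m
      (fun t => ∫ r in T..(2*T), (t + (2*T - r)) ^ e * x r) (Ioi 0) := by
    intro m
    induction m with
    | zero =>
      intro e
      exact contDiffOn_zero.mpr
        (fun t ht => ((lemA hT hxIcc e t ht).continuousAt).continuousWithinAt)
    | succ m IH =>
      intro e
      have hcast : ((m+1 : ℕ) : WithTop ℕ∞) = (m : ℕ) + 1 := by push_cast; rfl
      rw [hcast, contDiffOn_succ_iff_deriv_of_isOpen isOpen_Ioi]
      refine ⟨fun t ht => ((lemA hT hxIcc e t ht).differentiableAt).differentiableWithinAt,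
        fun h => absurd h (by simp), ?_⟩
      exact (contDiffOn_const.mul (IH (e-1))).congr
        (fun t ht => (lemA hT hxIcc e t ht).deriv)
  have hGcd : ContDiffOn ℝ n G₂ (Ioi 0) := by
    rw [hGdef]; exact hGall n β
  -- periodicity of the RL derivative forces iteratedDeriv n G₂ = 0
  have hGzero : ∀ t, 0 < t → iteratedDeriv n G₂ t = 0 := by
    intro t ht
    have h1 : iteratedDeriv n Fn (t + T) = iteratedDeriv n (fun z => Fn (z + T)) t := by
      rw [iteratedDeriv_comp_add_const n Fn T]
    have h2 : iteratedDeriv n (fun z => Fn (z + T)) t = iteratedDeriv n (Fn + G₂) t := by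
      refine Filter.EventuallyEq.iteratedDeriv_eq n ?_
      filter_upwards [isOpen_Ioi.mem_nhds ht] with u hu
      simpa using hsplit u hu
    have h3 : iteratedDeriv n (Fn + G₂) t = iteratedDeriv n Fn t + iteratedDeriv n G₂ t := by
      rw [← iteratedDerivWithin_Ioi (Fn + G₂) n ht, ← iteratedDerivWithin_Ioi Fn n ht,
        ← iteratedDerivWithin_Ioi G₂ n ht]
      exact iteratedDerivWithin_add ht isOpen_Ioi.uniqueDiffOn (hFcd t ht) (hGcd t ht)
    have h4 := hH t ht
    rw [h1, h2, h3] at h4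
    linarith
  -- explicit formula for the iterated derivatives of G₂
  have hGform : ∀ k, k ≤ n → ∀ t, 0 < t →
      iteratedDeriv k G₂ t = (∏ j ∈ Finset.range k, (β - (j:ℝ))) *
        ∫ r in T..(2*T), (t + (2*T - r)) ^ (β - (k:ℝ)) * x r := by
    intro k
    induction k with
    | zero =>
      intro _ t ht
      simp only [iteratedDeriv_zero, Finset.range_zero, Finset.prod_empty, one_mul,
        Nat.cast_zero, sub_zero, hGval]
    | succ k IH =>
      intro hk t ht
      have hk' : k ≤ n := by omega
      rw [iteratedDeriv_succ]
      have heq : deriv (iteratedDeriv k G₂) t = deriv (fun t' => (∏ j ∈ Finset.range k, (β - (j:ℝ))) *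
          ∫ r in T..(2*T), (t' + (2*T - r)) ^ (β - (k:ℝ)) * x r) t := by
        refine Filter.EventuallyEq.deriv_eq ?_
        filter_upwards [isOpen_Ioi.mem_nhds ht] with u hu
        exact IH hk' u hu
      rw [heq]
      have hd := (lemA hT hxIcc (β - (k:ℝ)) t ht).const_mul (∏ j ∈ Finset.range k, (β - (j:ℝ)))
      rw [hd.deriv]
      rw [show β - (k:ℝ) - 1 = β - ((k+1 : ℕ):ℝ) by push_cast; ring, Finset.prod_range_succ]
      ring
  have hθ0 : ∀ t, 0 < t → (∫ r in T..(2*T), (t + (2*T - r)) ^ (β - (n:ℝ)) * x r) = 0 := by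
    intro t ht
    have h1 := hGzero t ht
    rw [hGform n le_rfl t ht] at h1
    have hne : (∏ j ∈ Finset.range n, (β - (j:ℝ))) ≠ 0 :=
      Finset.prod_ne_zero_iff.mpr (fun j hj => hβj j (Finset.mem_range.mp hj))
    exact (mul_eq_zero.mp h1).resolve_left hne
  have hθj : ∀ j : ℕ, ∀ t, 0 < t →
      (∫ r in T..(2*T), (t + (2*T - r)) ^ (β - (n:ℝ) - (j:ℝ)) * x r) = 0 := by
    intro j
    induction j with
    | zero => intro t ht; simpa using hθ0 t ht
    | succ j IH =>
      intro t ht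
      have h1 := lemA hT hxIcc (β - (n:ℝ) - (j:ℝ)) t ht
      have h2 : HasDerivAt (fun t' => ∫ r in T..(2*T),
          (t' + (2*T - r)) ^ (β - (n:ℝ) - (j:ℝ)) * x r) 0 t := by
        refine (hasDerivAt_const t (0:ℝ)).congr_of_eventuallyEq ?_
        filter_upwards [isOpen_Ioi.mem_nhds ht] with u hu
        exact IH u hu
      have h3 := h1.unique h2
      have hne : β - (n:ℝ) - (j:ℝ) ≠ 0 := by
        rw [hβdef]
        have : (0:ℝ) ≤ (j:ℝ) := Nat.cast_nonneg j
        intro h; linarith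
      rw [show β - (n:ℝ) - (j:ℝ) - 1 = β - (n:ℝ) - ((j+1:ℕ):ℝ) by push_cast; ring] at h3
      exact (mul_eq_zero.mp h3).resolve_left hne
  -- transfer to the kernel (1 - z r)^γ
  have hN0 : ∀ (j : ℕ) (z : ℝ), 0 < z → z < 1/(2*T) →
      (∫ r in T..(2*T), (r ^ (0:ℕ) * x r) * (1 - z * r) ^ (β - (n:ℝ) - (j:ℝ))) = 0 := by
    intro j z hz hz'
    have h2T : (0:ℝ) < 2*T := by linarith
    have h2Tz : 2*T < 1/z := by
      rw [lt_div_iff₀ hz]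
      have h5 := mul_lt_mul_of_pos_right hz' h2T
      rw [one_div_mul_cancel h2T.ne'] at h5
      linarith
    have ht : 0 < 1/z - 2*T := by linarith
    have hcongr : ∀ r ∈ uIcc T (2*T),
        (r ^ (0:ℕ) * x r) * (1 - z * r) ^ (β - (n:ℝ) - (j:ℝ))
          = z ^ (β - (n:ℝ) - (j:ℝ)) *
            (((1/z - 2*T) + (2*T - r)) ^ (β - (n:ℝ) - (j:ℝ)) * x r) := by
      intro r hr
      rw [uIcc_of_le hTT] at hr
      have hb : (0:ℝ) < 1/z - 2*T + (2*T - r) := by linarith [hr.2]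
      have hbase : 1 - z * r = z * ((1/z - 2*T) + (2*T - r)) := by
        have hzz : z * (1/z) = 1 := by field_simp
        linear_combination (-1 : ℝ) * hzz
      rw [hbase, Real.mul_rpow hz.le hb.le]
      ring
    rw [intervalIntegral.integral_congr hcongr, intervalIntegral.integral_const_mul,
      hθj j (1/z - 2*T) ht, mul_zero]
  have hQ : ∀ (k j : ℕ) (z : ℝ), 0 < z → z < 1/(2*T) →
      (∫ r in T..(2*T), (r ^ k * x r) * (1 - z * r) ^ (β - (n:ℝ) - ((j + k : ℕ):ℝ))) = 0 := by
    intro k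
    induction k with
    | zero => intro j z hz hz'; exact hN0 j z hz hz'
    | succ k IH =>
      intro j z hz hz'
      have hIoo : Ioo (0:ℝ) (1/(2*T)) ∈ 𝓝 z := isOpen_Ioo.mem_nhds ⟨hz, hz'⟩
      have h1 := lemB hT hxIcc k (β - (n:ℝ) - ((j + k : ℕ):ℝ)) z (by linarith)
      have h2 : HasDerivAt (fun z' => ∫ r in T..(2*T),
          (r ^ k * x r) * (1 - z' * r) ^ (β - (n:ℝ) - ((j + k:ℕ):ℝ))) 0 z := by
        refine (hasDerivAt_const z (0:ℝ)).congr_of_eventuallyEq ?_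
        filter_upwards [hIoo] with w hw
        exact IH j w hw.1 hw.2
      have h3 := h1.unique h2
      have hne : -(β - (n:ℝ) - ((j + k:ℕ):ℝ)) ≠ 0 := by
        rw [hβdef]
        have : (0:ℝ) ≤ ((j + k:ℕ):ℝ) := Nat.cast_nonneg _
        intro h; linarith
      rw [show β - (n:ℝ) - ((j + k:ℕ):ℝ) - 1 = β - (n:ℝ) - ((j + (k+1):ℕ):ℝ) by
        push_cast; ring] at h3
      exact (mul_eq_zero.mp h3).resolve_left hne
  -- all moments vanish
  have hMom : ∀ k : ℕ, (∫ r in T..(2*T), r ^ k * x r) = 0 := by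
    intro k
    have h2T : (0:ℝ) < 1/(2*T) := by positivity
    have hcont : ContinuousAt (fun z => ∫ r in T..(2*T),
        (r ^ k * x r) * (1 - z * r) ^ (β - (n:ℝ) - ((0 + k:ℕ):ℝ))) 0 :=
      (lemB hT hxIcc k (β - (n:ℝ) - ((0 + k:ℕ):ℝ)) 0 (by linarith)).continuousAt
    haveI hnb : (𝓝[Ioo (0:ℝ) (1/(2*T))] (0:ℝ)).NeBot := by
      refine mem_closure_iff_nhdsWithin_neBot.mp ?_
      rw [closure_Ioo (ne_of_lt h2T)]
      exact ⟨le_refl 0, h2T.le⟩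
    have h1 : Tendsto (fun z => ∫ r in T..(2*T),
        (r ^ k * x r) * (1 - z * r) ^ (β - (n:ℝ) - ((0 + k:ℕ):ℝ)))
        (𝓝[Ioo (0:ℝ) (1/(2*T))] 0)
        (𝓝 (∫ r in T..(2*T), (r ^ k * x r) * (1 - 0 * r) ^ (β - (n:ℝ) - ((0 + k:ℕ):ℝ)))) :=
      hcont.tendsto.mono_left nhdsWithin_le_nhds
    have h2 : Tendsto (fun z => ∫ r in T..(2*T),
        (r ^ k * x r) * (1 - z * r) ^ (β - (n:ℝ) - ((0 + k:ℕ):ℝ)))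
        (𝓝[Ioo (0:ℝ) (1/(2*T))] 0) (𝓝 0) := by
      refine Tendsto.congr' ?_ tendsto_const_nhds
      filter_upwards [eventually_mem_nhdsWithin] with z hz
      exact (hQ k 0 z hz.1 hz.2).symm
    have h3 := tendsto_nhds_unique h1 h2
    simp only [zero_mul, sub_zero, Real.one_rpow, mul_one] at h3
    exact h3
  -- Weierstrass: x vanishes on (T, 2T)
  have hPoly : ∀ p : Polynomial ℝ, (∫ r in T..(2*T), Polynomial.eval r p * x r) = 0 := by
    intro p
    have hrw : (fun r => Polynomial.eval r p * x r)
        = fun r => ∑ i ∈ Finset.range (p.natDegree + 1), p.coeff i * (r ^ i * x r) := by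
      funext r
      rw [Polynomial.eval_eq_sum_range, Finset.sum_mul]
      exact Finset.sum_congr rfl (fun i _ => by ring)
    rw [hrw, intervalIntegral.integral_finset_sum]
    · exact Finset.sum_eq_zero (fun i _ => by
        rw [intervalIntegral.integral_const_mul, hMom i, mul_zero])
    · intro i _
      apply ContinuousOn.intervalIntegrable
      rw [uIcc_of_le hTT]
      exact continuousOn_const.mul ((continuous_pow i).continuousOn.mul hxIcc)
  have habs_int : IntervalIntegrable (fun r => |x r|) volume T (2*T) := by
    apply ContinuousOn.intervalIntegrable; rw [uIcc_of_le hTT]; exact hxIcc.abs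
  have hxxint : IntervalIntegrable (fun r => x r * x r) volume T (2*T) := by
    apply ContinuousOn.intervalIntegrable; rw [uIcc_of_le hTT]; exact hxIcc.mul hxIcc
  have hC₁0 : 0 ≤ ∫ r in T..(2*T), |x r| :=
    intervalIntegral.integral_nonneg hTT (fun r _ => abs_nonneg _)
  have hxx : (∫ r in T..(2*T), x r * x r) = 0 := by
    by_contra hne0
    have hpos : 0 < |∫ r in T..(2*T), x r * x r| := abs_pos.mpr hne0
    have hkey : ∀ ε : ℝ, 0 < ε →
        |∫ r in T..(2*T), x r * x r| ≤ (∫ r in T..(2*T), |x r|) * ε := by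
      intro ε hε
      obtain ⟨p, hp⟩ := exists_polynomial_near_continuousMap T (2*T)
        ⟨(Icc T (2*T)).restrict x, hxIcc.restrict⟩ ε hε
      have hptle : ∀ r, r ∈ Icc T (2*T) → |x r - Polynomial.eval r p| ≤ ε := by
        intro r hr
        have h1 := (p.toContinuousMapOn (Icc T (2*T))
          - ⟨(Icc T (2*T)).restrict x, hxIcc.restrict⟩).norm_coe_le_norm ⟨r, hr⟩
        have h3 := h1.trans hp.le
        rw [abs_sub_comm]
        simp only [ContinuousMap.sub_apply, Polynomial.toContinuousMapOn_apply,
          Polynomial.toContinuousMap_apply, Real.norm_eq_abs] at h3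
        exact h3
      have hint1 : IntervalIntegrable (fun r => x r * (x r - Polynomial.eval r p))
          volume T (2*T) := by
        apply ContinuousOn.intervalIntegrable
        rw [uIcc_of_le hTT]
        exact hxIcc.mul (hxIcc.sub (p.continuous_aeval).continuousOn)
      have hint2 : IntervalIntegrable (fun r => Polynomial.eval r p * x r) volume T (2*T) := by
        apply ContinuousOn.intervalIntegrable
        rw [uIcc_of_le hTT]
        exact (p.continuous_aeval).continuousOn.mul hxIcc
      have heq : (fun r => x r * x r)
          = fun r => x r * (x r - Polynomial.eval r p) + Polynomial.eval r p * x r := by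
        funext r; ring
      rw [heq, intervalIntegral.integral_add hint1 hint2, hPoly p, add_zero]
      calc |∫ r in T..(2*T), x r * (x r - Polynomial.eval r p)|
          ≤ ∫ r in T..(2*T), |x r * (x r - Polynomial.eval r p)| :=
            intervalIntegral.abs_integral_le_integral_abs hTT
        _ ≤ ∫ r in T..(2*T), |x r| * ε := by
            refine intervalIntegral.integral_mono_on hTT hint1.abs (habs_int.mul_const ε) ?_
            intro r hr
            rw [abs_mul]
            exact mul_le_mul_of_nonneg_left (hptle r hr) (abs_nonneg _)
        _ = (∫ r in T..(2*T), |x r|) * ε := intervalIntegral.integral_mul_const ε _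
    set I := ∫ r in T..(2*T), x r * x r
    set C₁ := ∫ r in T..(2*T), |x r|
    have h1 := hkey (|I| / (2*(C₁+1))) (by positivity)
    have h2 : C₁ * (|I| / (2*(C₁+1))) < |I| := by
      rw [div_eq_mul_inv]
      have h3 : C₁ * (|I| * (2*(C₁+1))⁻¹) = |I| * (C₁ / (2*(C₁+1))) := by
        field_simp
      rw [h3]
      have h4 : C₁ / (2*(C₁+1)) < 1 := by
        rw [div_lt_one (by positivity)]; linarith
      nlinarith
    linarith
  have hzero_on : ∀ r ∈ Ioo T (2*T), x r = 0 := by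
    intro r₀ hr₀
    by_contra hne
    have hc : 0 < x r₀ * x r₀ := mul_self_pos.mpr hne
    have hcontxx : ContinuousAt (fun r => x r * x r) r₀ :=
      (hxc0.mul hxc0).continuousAt (isOpen_Ioi.mem_nhds (lt_trans hT hr₀.1))
    have hev : ∀ᶠ s in 𝓝 r₀, (x r₀ * x r₀)/2 < x s * x s ∧ s ∈ Ioo T (2*T) :=
      (hcontxx.tendsto.eventually (eventually_gt_nhds (by linarith))).and
        (isOpen_Ioo.mem_nhds hr₀)
    obtain ⟨δ', hδ', hδball⟩ := Metric.eventually_nhds_iff.mp hev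
    have hδ0 : 0 < δ'/2 := by positivity
    have hsub : ∀ s, s ∈ Icc (r₀ - δ'/2) (r₀ + δ'/2) →
        (x r₀ * x r₀)/2 ≤ x s * x s ∧ s ∈ Ioo T (2*T) := by
      intro s hs
      have hd : dist s r₀ < δ' := by
        rw [Real.dist_eq, abs_lt]; constructor <;> [linarith [hs.1]; linarith [hs.2] ]
      have h := hδball hd
      exact ⟨h.1.le, h.2⟩
    have hT1 : T < r₀ - δ'/2 := (hsub (r₀ - δ'/2) ⟨le_refl _, by linarith⟩).2.1
    have hT2 : r₀ + δ'/2 < 2*T := (hsub (r₀ + δ'/2) ⟨by linarith, le_refl _⟩).2.2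
    have hii : ∀ a b : ℝ, T ≤ a → b ≤ 2*T → a ≤ b →
        IntervalIntegrable (fun r => x r * x r) volume a b := by
      intro a b ha hb hab
      apply ContinuousOn.intervalIntegrable
      rw [uIcc_of_le hab]
      exact (hxIcc.mul hxIcc).mono (fun s hs => ⟨le_trans ha hs.1, le_trans hs.2 hb⟩)
    have hia := hii T (r₀ - δ'/2) le_rfl (by linarith) (by linarith)
    have hib := hii (r₀ - δ'/2) (r₀ + δ'/2) (by linarith) (by linarith) (by linarith)
    have hic := hii (r₀ + δ'/2) (2*T) (by linarith) le_rfl (by linarith)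
    have h1 := intervalIntegral.integral_add_adjacent_intervals hia hib
    have h2 := intervalIntegral.integral_add_adjacent_intervals
      (hii T (r₀ + δ'/2) le_rfl (by linarith) (by linarith)) hic
    have hnn1 : 0 ≤ ∫ r in T..(r₀ - δ'/2), x r * x r :=
      intervalIntegral.integral_nonneg (by linarith) (fun s _ => mul_self_nonneg _)
    have hnn2 : 0 ≤ ∫ r in (r₀ + δ'/2)..(2*T), x r * x r :=
      intervalIntegral.integral_nonneg (by linarith) (fun s _ => mul_self_nonneg _)
    have h4 := intervalIntegral.integral_mono_on (by linarith : r₀ - δ'/2 ≤ r₀ + δ'/2)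
      _root_.intervalIntegrable_const hib (fun s hs => (hsub s hs).1)
    rw [intervalIntegral.integral_const, smul_eq_mul] at h4
    have h5 : r₀ + δ'/2 - (r₀ - δ'/2) = δ' := by ring
    rw [h5] at h4
    have h6 : 0 < δ' * ((x r₀ * x r₀)/2) := by positivity
    linarith [hxx, h1, h2, hnn1, hnn2]
  -- propagate the vanishing of x
  have hzT : x T = 0 := by
    haveI hnb : (𝓝[Ioo T (2*T)] T).NeBot := by
      refine mem_closure_iff_nhdsWithin_neBot.mp ?_
      rw [closure_Ioo (by linarith : T ≠ 2*T)]
      exact ⟨le_refl T, hTT⟩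
    have h1 : Tendsto x (𝓝[Ioo T (2*T)] T) (𝓝 (x T)) :=
      ((hxc0.continuousAt (isOpen_Ioi.mem_nhds hT)).tendsto).mono_left nhdsWithin_le_nhds
    have h2 : Tendsto x (𝓝[Ioo T (2*T)] T) (𝓝 0) := by
      refine Tendsto.congr' ?_ tendsto_const_nhds
      filter_upwards [eventually_mem_nhdsWithin] with s hs
      exact (hzero_on s hs).symm
    exact tendsto_nhds_unique h1 h2
  have hz2 : ∀ s, 0 < s → s ≤ 2*T → x s = 0 := by
    intro s hs hs2
    rcases lt_trichotomy s T with h | h | h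
    · rw [← hper s hs]
      exact hzero_on (s + T) ⟨by linarith, by linarith⟩
    · rw [h]; exact hzT
    · rcases eq_or_lt_of_le hs2 with h2 | h2
      · rw [h2, show 2*T = T + T by ring, hper T hT]
        exact hzT
      · exact hzero_on s ⟨h, h2⟩
  have hstep : ∀ m : ℕ, ∀ s, 0 < s → s ≤ 2*T + m*T → x s = 0 := by
    intro m
    induction m with
    | zero => intro s hs h; exact hz2 s hs (by simpa using h)
    | succ m IH =>
      intro s hs h
      rcases le_or_gt s (2*T + m*T) with h2 | h2
      · exact IH s hs h2
      · have hmnn : (0:ℝ) ≤ (m:ℝ) * T := mul_nonneg (Nat.cast_nonneg m) hT.le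
        have hsT : 0 < s - T := by linarith
        have h3 := hper (s - T) hsT
        rw [sub_add_cancel] at h3
        rw [h3]
        refine IH (s - T) hsT ?_
        push_cast at h
        linarith
  refine hnc ⟨0, fun t ht => ?_⟩
  obtain ⟨m, hm⟩ := exists_nat_ge ((t - 2*T)/T)
  refine hstep m t ht ?_
  rw [div_le_iff₀ hT] at hm
  linarith
end

section
/- Consider an autonomous fractional differential system C_D^{α_i} x_i(t) = f_i(x(t), x'(t), ..., x^(m)(t)), i = 1,...,p, with each α_i ∈ (0,∞) non-integer, n_i = ⌊α_i⌋+1, f : ℝ^{p(m+1)} → ℝ^p. Then this system has no non-constant periodic solution x of class C^{(n_1,...,n_p)} (with each n_i ≥ m). -/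
open Set MeasureTheory intervalIntegral
open scoped Polynomial


lemma iterDeriv_eqOn {f : ℝ → ℝ} {s : Set ℝ} (hs : IsOpen s) (k : ℕ) :
    EqOn (iteratedDerivWithin k f s) (iteratedDeriv k f) s := fun x hx => by
  rw [iteratedDerivWithin_eq_iteratedFDerivWithin, iteratedDeriv_eq_iteratedFDeriv,
    iteratedFDerivWithin_of_isOpen k hs hx]

lemma const_of_hasDerivAt_zero {F : ℝ → ℝ}
    (hd : ∀ t ∈ Ioi (0:ℝ), HasDerivAt F 0 t) :
    ∀ a ∈ Ioi (0:ℝ), ∀ b ∈ Ioi (0:ℝ), F a = F b := by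
  have key : ∀ a b : ℝ, 0 < a → a < b → F a = F b := by
    intro a b ha hab
    have hcont : ContinuousOn F (Icc a b) := fun u hu =>
      (hd u (lt_of_lt_of_le ha hu.1)).continuousAt.continuousWithinAt
    obtain ⟨c, hc, hc'⟩ := exists_hasDerivAt_eq_slope F (fun _ => (0:ℝ)) hab hcont
      (fun u hu => hd u (lt_trans ha hu.1))
    have hba : b - a ≠ 0 := by linarith
    have : F b - F a = 0 := by
      have := hc'.symm
      rwa [div_eq_iff hba, zero_mul] at this
    linarith
  intro a ha b hb
  rcases lt_trichotomy a b with h | h | h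
  · exact key a b ha h
  · rw [h]
  · exact (key b a hb h).symm


lemma hasDerivAt_int (T : ℝ) (hT : 0 < T) (γ : ℝ) (hγ : γ < 1) (g : ℝ → ℝ)
    (hg : ContinuousOn g (Icc 0 T)) {r : ℝ} (hr : T < r) :
    HasDerivAt (fun ρ => ∫ s in (0:ℝ)..T, (ρ - s) ^ γ * g s)
      (∫ s in (0:ℝ)..T, (γ * (r - s) ^ (γ - 1)) * g s) r := by
  obtain ⟨C, hC⟩ := (isCompact_Icc (a := (0:ℝ)) (b := T)).exists_bound_of_continuousOn hg
  set ε := (r - T) / 2 with hε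
  have hεpos : 0 < ε := by simp [hε]; linarith
  have hball : ∀ x ∈ Metric.ball r ε, ∀ s ∈ Set.uIoc (0:ℝ) T, ε ≤ x - s := by
    intro x hx s hs
    rw [Metric.mem_ball, Real.dist_eq, abs_lt] at hx
    have hsT : s ≤ T := by
      rw [uIoc_of_le hT.le] at hs; exact hs.2
    simp only [hε] at *; linarith
  have hmeas : ∀ x : ℝ, x ∈ Metric.ball r ε →
      AEStronglyMeasurable (fun s => (x - s) ^ γ * g s) (volume.restrict (Set.uIoc (0:ℝ) T)) := by
    intro x hx
    rw [uIoc_of_le hT.le]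
    apply ContinuousOn.aestronglyMeasurable _ measurableSet_Ioc
    apply ContinuousOn.mul _ (hg.mono Ioc_subset_Icc_self)
    intro s hs
    have hxs : 0 < x - s := lt_of_lt_of_le hεpos (hball x hx s (by rwa [uIoc_of_le hT.le]))
    exact ((continuous_const.sub continuous_id).continuousWithinAt).rpow_const
      (Or.inl (ne_of_gt hxs))
  have main := hasDerivAt_integral_of_dominated_loc_of_deriv_le (μ := volume)
      (F := fun x s => (x - s) ^ γ * g s)
      (F' := fun x s => (γ * (x - s) ^ (γ - 1)) * g s)
      (x₀ := r) (a := 0) (b := T)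
      (bound := fun _ => |γ| * ε ^ (γ - 1) * C) (Metric.ball_mem_nhds r hεpos)
      ?_ ?_ ?_ ?_ ?_ ?_
  · exact main.2
  · filter_upwards [Metric.ball_mem_nhds r hεpos] with x hx using hmeas x hx
  · apply ContinuousOn.intervalIntegrable
    rw [uIcc_of_le hT.le]
    apply ContinuousOn.mul _ hg
    intro s hs
    have hxs : 0 < r - s := by linarith [hs.2]
    exact ((continuous_const.sub continuous_id).continuousWithinAt).rpow_const
      (Or.inl (ne_of_gt hxs))
  · rw [uIoc_of_le hT.le]
    apply ContinuousOn.aestronglyMeasurable _ measurableSet_Ioc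
    apply ContinuousOn.mul _ (hg.mono Ioc_subset_Icc_self)
    intro s hs
    apply ContinuousWithinAt.mul continuousWithinAt_const
    have hxs : 0 < r - s := by linarith [hs.2]
    exact ((continuous_const.sub continuous_id).continuousWithinAt).rpow_const
      (Or.inl (ne_of_gt hxs))
  · apply ae_of_all
    intro s hs x hx
    have hxs : ε ≤ x - s := hball x hx s hs
    have hxspos : 0 < x - s := lt_of_lt_of_le hεpos hxs
    have hsIcc : s ∈ Icc 0 T := by
      rw [uIoc_of_le hT.le] at hs; exact Ioc_subset_Icc_self hs
    have hb1 : (x - s) ^ (γ - 1) ≤ ε ^ (γ - 1) :=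
      Real.rpow_le_rpow_of_nonpos hεpos hxs (by linarith)
    have hgC : ‖g s‖ ≤ C := hC s hsIcc
    have hCnn : (0:ℝ) ≤ C := le_trans (norm_nonneg _) hgC
    rw [norm_mul, norm_mul, Real.norm_eq_abs γ,
      Real.norm_eq_abs ((x - s) ^ (γ - 1)), abs_of_pos (Real.rpow_pos_of_pos hxspos _)]
    calc |γ| * (x - s) ^ (γ - 1) * ‖g s‖
        ≤ |γ| * ε ^ (γ - 1) * ‖g s‖ := by
          apply mul_le_mul_of_nonneg_right _ (norm_nonneg _)
          exact mul_le_mul_of_nonneg_left hb1 (abs_nonneg _)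
      _ ≤ |γ| * ε ^ (γ - 1) * C := by
          apply mul_le_mul_of_nonneg_left hgC
          positivity
  · exact intervalIntegrable_const
  · apply ae_of_all
    intro s hs x hx
    have hxs : 0 < x - s := lt_of_lt_of_le hεpos (hball x hx s hs)
    have h1 : HasDerivAt (fun z : ℝ => z - s) 1 x := (hasDerivAt_id x).sub_const s
    have h2 := h1.rpow_const (p := γ) (Or.inl (ne_of_gt hxs))
    simpa using h2.mul_const (g s)

lemma eq_zero_of_integral_rpow (T : ℝ) (hT : 0 < T) (β : ℝ) (hβ1 : β < 1)
    (g : ℝ → ℝ) (hg : ContinuousOn g (Icc 0 T))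
    (H : ∀ r ∈ Ioo T (2*T), ∫ s in (0:ℝ)..T, (r - s) ^ (β-1) * g s = 0) :
    ∀ s ∈ Icc (0:ℝ) T, g s = 0 := by
  -- Step 1: all "inverse-power moments" vanish
  have key : ∀ k : ℕ, ∀ r ∈ Ioo T (2*T),
      ∫ s in (0:ℝ)..T, (r - s) ^ (β - 1 - k) * g s = 0 := by
    intro k
    induction k with
    | zero => simpa using H
    | succ k ih =>
      intro r hr
      set γ := β - 1 - k with hγdef
      have hγ1 : γ < 1 := by
        have : (0:ℝ) ≤ k := Nat.cast_nonneg k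
        simp only [hγdef]; linarith
      have hγ0 : γ < 0 := by
        have : (0:ℝ) ≤ k := Nat.cast_nonneg k
        simp only [hγdef]; linarith
      have hd := hasDerivAt_int T hT γ hγ1 g hg hr.1
      have h0 : HasDerivAt (fun ρ => ∫ s in (0:ℝ)..T, (ρ - s) ^ γ * g s) 0 r := by
        apply HasDerivAt.congr_of_eventuallyEq (hasDerivAt_const r 0)
        filter_upwards [isOpen_Ioo.mem_nhds hr] with ρ hρ
        exact ih ρ hρ
      have huniq : (∫ s in (0:ℝ)..T, (γ * (r - s) ^ (γ - 1)) * g s) = 0 := hd.unique h0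
      have h2 : γ * ∫ s in (0:ℝ)..T, (r - s) ^ (γ - 1) * g s = 0 := by
        rw [← intervalIntegral.integral_const_mul]
        rw [← huniq]
        congr 1; funext s; ring
      have h3 := (mul_eq_zero.mp h2).resolve_left (ne_of_lt hγ0)
      have hexp : β - 1 - ((k:ℝ) + 1) = γ - 1 := by simp [hγdef]; ring
      rw [show ((k+1 : ℕ) : ℝ) = (k:ℝ) + 1 by push_cast; ring, hexp]
      exact h3
  set r₀ : ℝ := 3*T/2 with hr₀
  have hr₀mem : r₀ ∈ Ioo T (2*T) := by constructor <;> (simp only [hr₀]; linarith)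
  have hpos : ∀ s ∈ Icc (0:ℝ) T, 0 < r₀ - s := by
    intro s hs; have := hs.2; simp only [hr₀]; linarith
  set G : ℝ → ℝ := fun s => (r₀ - s) ^ (β - 1) * g s with hG
  have hGcont : ContinuousOn G (Icc 0 T) := by
    apply ContinuousOn.mul _ hg
    intro s hs
    exact ((continuous_const.sub continuous_id).continuousWithinAt).rpow_const
      (Or.inl (ne_of_gt (hpos s hs)))
  -- moments of G against powers of (r₀ - s)⁻¹
  have mom : ∀ k : ℕ, ∫ s in (0:ℝ)..T, ((r₀ - s)⁻¹) ^ k * G s = 0 := by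
    intro k
    have step : (∫ s in (0:ℝ)..T, ((r₀ - s)⁻¹) ^ k * G s)
        = ∫ s in (0:ℝ)..T, (r₀ - s) ^ (β - 1 - k) * g s := by
      apply intervalIntegral.integral_congr
      intro s hs
      rw [uIcc_of_le hT.le] at hs
      have h1 : 0 < r₀ - s := hpos s hs
      simp only [hG]
      rw [show β - 1 - (k:ℝ) = β - 1 + (-(k:ℝ)) by ring, Real.rpow_add h1,
        Real.rpow_neg h1.le, Real.rpow_natCast, inv_pow]
      ring
    rw [step]
    exact key k r₀ hr₀mem
  -- integrals against polynomials in (r₀ - s)⁻¹ vanish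
  have poly : ∀ q : ℝ[X], ∫ s in (0:ℝ)..T, q.eval ((r₀ - s)⁻¹) * G s = 0 := by
    intro q
    have hint : ∀ k : ℕ, IntervalIntegrable
        (fun s => q.coeff k * (((r₀ - s)⁻¹) ^ k * G s)) volume 0 T := by
      intro k
      apply ContinuousOn.intervalIntegrable
      rw [uIcc_of_le hT.le]
      apply ContinuousOn.mul continuousOn_const
      apply ContinuousOn.mul _ hGcont
      apply ContinuousOn.pow
      intro s hs
      exact ((continuous_const.sub continuous_id).continuousWithinAt).inv₀
        (ne_of_gt (hpos s hs))
    have : (∫ s in (0:ℝ)..T, q.eval ((r₀ - s)⁻¹) * G s)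
        = ∑ k ∈ Finset.range (q.natDegree + 1),
            ∫ s in (0:ℝ)..T, q.coeff k * (((r₀ - s)⁻¹) ^ k * G s) := by
      rw [← intervalIntegral.integral_finset_sum (fun k _ => hint k)]
      apply intervalIntegral.integral_congr
      intro s _
      simp only [Polynomial.eval_eq_sum_range, Finset.sum_mul]
      exact Finset.sum_congr rfl (fun k _ => by ring)
    rw [this]
    apply Finset.sum_eq_zero
    intro k _
    rw [intervalIntegral.integral_const_mul, mom k, mul_zero]
  haveI : CompactSpace (Icc (0:ℝ) T) := isCompact_iff_compactSpace.mp isCompact_Icc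
  have hφcont : Continuous (fun z : Icc (0:ℝ) T => (r₀ - (z:ℝ))⁻¹) := by
    apply Continuous.inv₀ (continuous_const.sub continuous_subtype_val)
    intro z; exact ne_of_gt (hpos z z.2)
  set φc : C(Icc (0:ℝ) T, ℝ) := ⟨fun z => (r₀ - (z:ℝ))⁻¹, hφcont⟩ with hφc
  have hsep : (Algebra.adjoin ℝ ({φc} : Set C(Icc (0:ℝ) T, ℝ))).SeparatesPoints := by
    intro u v huv
    refine ⟨_, ⟨φc, Algebra.subset_adjoin (mem_singleton _), rfl⟩, ?_⟩
    simp only [hφc, ContinuousMap.coe_mk]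
    intro hEq
    apply huv
    have h1 : 0 < r₀ - (u:ℝ) := hpos _ u.2
    have h2 : 0 < r₀ - (v:ℝ) := hpos _ v.2
    have h3 : r₀ - (u:ℝ) = r₀ - (v:ℝ) := inv_injective hEq
    exact Subtype.ext (by linarith)
  set Gc : C(Icc (0:ℝ) T, ℝ) := ⟨(Icc (0:ℝ) T).restrict G, hGcont.restrict⟩ with hGc
  obtain ⟨M, hM⟩ := (isCompact_Icc (a := (0:ℝ)) (b := T)).exists_bound_of_continuousOn hGcont
  have hM0 : 0 ≤ M := le_trans (norm_nonneg (G 0)) (hM 0 ⟨le_refl 0, hT.le⟩)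
  have habs : ∀ ε > (0:ℝ), |∫ s in (0:ℝ)..T, G s * G s| ≤ ε * (M * T) := by
    intro ε hε
    obtain ⟨qA, hqA⟩ := ContinuousMap.exists_mem_subalgebra_near_continuousMap_of_separatesPoints
      (Algebra.adjoin ℝ ({φc} : Set C(Icc (0:ℝ) T, ℝ))) hsep Gc ε hε
    obtain ⟨v, hv⟩ := qA
    obtain ⟨P, hP⟩ : ∃ P : ℝ[X], Polynomial.aeval φc P = v := by
      rw [Algebra.adjoin_singleton_eq_range_aeval, AlgHom.mem_range] at hv
      exact hv
    have hq_eval : ∀ z : Icc (0:ℝ) T, v z = P.eval ((r₀ - (z:ℝ))⁻¹) := by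
      intro z
      rw [← hP]
      have h4 := Polynomial.aeval_algHom_apply (ContinuousMap.evalAlgHom ℝ ℝ z) φc P
      have h5 : (ContinuousMap.evalAlgHom ℝ ℝ z) φc = (r₀ - (z:ℝ))⁻¹ := rfl
      rw [h5] at h4
      have h6 : ((Polynomial.aeval φc) P) z
          = (ContinuousMap.evalAlgHom ℝ ℝ z) ((Polynomial.aeval φc) P) := rfl
      rw [h6, ← h4, Polynomial.coe_aeval_eq_eval]
    have hIsub : (∫ s in (0:ℝ)..T, G s * G s)
        = ∫ s in (0:ℝ)..T, (G s - P.eval ((r₀ - s)⁻¹)) * G s := by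
      have hint1 : IntervalIntegrable (fun s => G s * G s) volume 0 T := by
        apply ContinuousOn.intervalIntegrable
        rw [uIcc_of_le hT.le]; exact hGcont.mul hGcont
      have hint2 : IntervalIntegrable (fun s => P.eval ((r₀ - s)⁻¹) * G s) volume 0 T := by
        apply ContinuousOn.intervalIntegrable
        rw [uIcc_of_le hT.le]
        apply ContinuousOn.mul _ hGcont
        apply Continuous.comp_continuousOn (Polynomial.continuous_aeval P)
        apply ContinuousOn.inv₀ (continuous_const.sub continuous_id).continuousOn
        intro s hs; exact ne_of_gt (hpos s hs)
      have : (∫ s in (0:ℝ)..T, (G s - P.eval ((r₀ - s)⁻¹)) * G s)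
          = (∫ s in (0:ℝ)..T, G s * G s) - ∫ s in (0:ℝ)..T, P.eval ((r₀ - s)⁻¹) * G s := by
        rw [← intervalIntegral.integral_sub hint1 hint2]
        congr 1; funext s; ring
      rw [this, poly P, sub_zero]
    rw [hIsub]
    have hb : ∀ s ∈ Set.uIoc (0:ℝ) T, ‖(G s - P.eval ((r₀ - s)⁻¹)) * G s‖ ≤ ε * M := by
      intro s hs
      rw [uIoc_of_le hT.le] at hs
      have hsIcc : s ∈ Icc (0:ℝ) T := Ioc_subset_Icc_self hs
      set z : Icc (0:ℝ) T := ⟨s, hsIcc⟩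
      have h6 : G s - P.eval ((r₀ - s)⁻¹) = -((v - Gc) z) := by
        simp [hq_eval z, hGc, Set.restrict]
        rfl
      rw [norm_mul, h6, norm_neg]
      apply mul_le_mul _ (hM s hsIcc) (norm_nonneg _) hε.le
      calc ‖(v - Gc) z‖ ≤ ‖v - Gc‖ := ContinuousMap.norm_coe_le_norm _ z
        _ ≤ ε := hqA.le
    calc |∫ s in (0:ℝ)..T, (G s - P.eval ((r₀ - s)⁻¹)) * G s| ≤ (ε * M) * |T - 0| :=
          intervalIntegral.norm_integral_le_of_norm_le_const hb
      _ = ε * (M * T) := by rw [sub_zero, abs_of_pos hT]; ring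
  have hnonneg : 0 ≤ ∫ s in (0:ℝ)..T, G s * G s :=
    intervalIntegral.integral_nonneg hT.le (fun s _ => mul_self_nonneg _)
  have hGG0 : (∫ s in (0:ℝ)..T, G s * G s) = 0 := by
    by_contra hne
    have hpos' : 0 < ∫ s in (0:ℝ)..T, G s * G s := lt_of_le_of_ne hnonneg (Ne.symm hne)
    set I := ∫ s in (0:ℝ)..T, G s * G s
    have h7 := habs (I / (2 * (M * T) + 1)) (by positivity)
    rw [abs_of_pos hpos'] at h7
    have hMT : 0 ≤ M * T := mul_nonneg hM0 hT.le
    rw [div_mul_eq_mul_div, le_div_iff₀ (by positivity)] at h7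
    nlinarith [hpos', hMT]
  -- from zero integral to pointwise zero
  have hae : ∀ᵐ s ∂volume, s ∈ Ioc (0:ℝ) T → G s * G s = 0 := by
    have hint1 : IntervalIntegrable (fun s => G s * G s) volume 0 T := by
      apply ContinuousOn.intervalIntegrable
      rw [uIcc_of_le hT.le]; exact hGcont.mul hGcont
    have h8 := (intervalIntegral.integral_eq_zero_iff_of_nonneg_ae
      (f := fun s => G s * G s) (μ := volume) (a := 0) (b := T) ?_ hint1).mp hGG0
    · have h9 : Ioc T (0:ℝ) = ∅ := Ioc_eq_empty (by linarith)
      rw [h9, union_empty] at h8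
      exact (ae_restrict_iff' measurableSet_Ioc).mp h8
    · have h9 : Ioc T (0:ℝ) = ∅ := Ioc_eq_empty (by linarith)
      rw [h9, union_empty]
      apply (ae_restrict_iff' measurableSet_Ioc).mpr
      exact ae_of_all _ (fun s _ => mul_self_nonneg _)
  have hGzero : ∀ s ∈ Icc (0:ℝ) T, G s = 0 := by
    intro s0 hs0
    by_contra hne
    have hc : 0 < |G s0| := abs_pos.mpr hne
    obtain ⟨δ, hδ, hδ'⟩ := Metric.continuousWithinAt_iff.mp (hGcont s0 hs0) (|G s0|/2) (by linarith)
    set c1 := max 0 (s0 - δ)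
    set d1 := min T (s0 + δ)
    have hc1d1 : c1 < d1 := by
      simp only [c1, d1, lt_min_iff, max_lt_iff]
      exact ⟨⟨hT, by linarith [hs0.2]⟩, ⟨by linarith [hs0.1], by linarith⟩⟩
    have hsub : Ioo c1 d1 ⊆ {s | ¬ (s ∈ Ioc (0:ℝ) T → G s * G s = 0)} := by
      intro s hs
      simp only [mem_setOf_eq]
      intro hcon
      have hs1 : s ∈ Ioc (0:ℝ) T := by
        constructor
        · exact lt_of_le_of_lt (le_max_left _ _) hs.1
        · exact le_trans hs.2.le (min_le_left _ _)
      have hsball : dist s s0 < δ := by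
        rw [Real.dist_eq, abs_lt]
        constructor
        · have := lt_of_le_of_lt (le_max_right 0 (s0 - δ)) hs.1; linarith
        · have := lt_of_lt_of_le hs.2 (min_le_right T (s0 + δ)); linarith
      have h10 := hδ' (Ioc_subset_Icc_self hs1) hsball
      rw [Real.dist_eq] at h10
      have h11 := hcon hs1
      rw [mul_self_eq_zero] at h11
      rw [h11] at h10
      simp at h10
      linarith
    have hnull : volume {s | ¬ (s ∈ Ioc (0:ℝ) T → G s * G s = 0)} = 0 := hae
    have := measure_mono_null hsub hnull
    rw [Real.volume_Ioo] at this
    have := ENNReal.ofReal_eq_zero.mp this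
    linarith
  intro s hs
  have h12 := hGzero s hs
  rw [hG] at h12
  simp only at h12
  rcases mul_eq_zero.mp h12 with h | h
  · exact absurd h (ne_of_gt (Real.rpow_pos_of_pos (hpos s hs) _))
  · exact h

lemma component_constant (T : ℝ) (hT : 0 < T) (β : ℝ) (hβ0 : 0 < β) (hβ1 : β < 1)
    (N : ℕ) (hN : 1 ≤ N) (y : ℝ → ℝ)
    (hCy : ContDiffOn ℝ N y (Ioi 0))
    (hpery : ∀ k : ℕ, ∀ s : ℝ, 0 < s → iteratedDeriv k y (s + T) = iteratedDeriv k y s)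
    (hint : ∀ t : ℝ, 0 < t → t ≤ T →
      (∫ s in (0:ℝ)..(t+T), (t + T - s)^(β-1) * iteratedDeriv N y s)
        = ∫ s in (0:ℝ)..t, (t - s)^(β-1) * iteratedDeriv N y s) :
    ∀ a ∈ Ioi (0:ℝ), ∀ b ∈ Ioi (0:ℝ), y a = y b := by
  have hopen : IsOpen (Ioi (0:ℝ)) := isOpen_Ioi
  have hu : UniqueDiffOn ℝ (Ioi (0:ℝ)) := hopen.uniqueDiffOn
  set h : ℝ → ℝ := iteratedDeriv N y with hh
  have hperh : ∀ s : ℝ, 0 < s → h (s + T) = h s := fun s hs => hpery N s hs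
  -- continuity of h on (0, ∞)
  have hhc : ContinuousOn h (Ioi 0) := by
    have h1 := hCy.continuousOn_iteratedDerivWithin (m := N) (by exact_mod_cast le_rfl) hu
    exact h1.congr ((iterDeriv_eqOn hopen N).symm)
  -- F1 : derivatives
  have hF1 : ∀ k : ℕ, k < N → ∀ t ∈ Ioi (0:ℝ),
      HasDerivAt (iteratedDeriv k y) (iteratedDeriv (k+1) y t) t := by
    intro k hk t ht
    have hdo : DifferentiableOn ℝ (iteratedDerivWithin k y (Ioi 0)) (Ioi 0) :=
      hCy.differentiableOn_iteratedDerivWithin (by exact_mod_cast hk) hu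
    have hda : DifferentiableAt ℝ (iteratedDerivWithin k y (Ioi 0)) t :=
      (hdo t ht).differentiableAt (hopen.mem_nhds ht)
    have heq : iteratedDeriv k y =ᶠ[nhds t] iteratedDerivWithin k y (Ioi 0) := by
      filter_upwards [hopen.mem_nhds ht] with u hu' using (iterDeriv_eqOn hopen k hu').symm
    have hda' : DifferentiableAt ℝ (iteratedDeriv k y) t := hda.congr_of_eventuallyEq heq
    have h2 := hda'.hasDerivAt
    rwa [show deriv (iteratedDeriv k y) t = iteratedDeriv (k+1) y t from
      (congrFun (iteratedDeriv_succ (n := k)) t).symm] at h2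
  -- the periodized version g
  set g : ℝ → ℝ := fun s => h (s + T) with hg
  have hgh : ∀ s : ℝ, 0 < s → g s = h s := fun s hs => hperh s hs
  have hgcont : ContinuousOn g (Icc 0 T) := by
    apply ContinuousOn.comp (t := Ioi (0:ℝ)) hhc
      ((continuous_id.add continuous_const).continuousOn)
    intro s hs
    simp only [mem_Ioi, id_eq, Pi.add_apply]
    linarith [hs.1]
  -- main vanishing identity
  have key : ∀ r ∈ Ioo T (2*T), ∫ s in (0:ℝ)..T, (r - s) ^ (β-1) * g s = 0 := by
    rintro r ⟨hr1, hr2⟩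
    set t : ℝ := r - T with htdef
    have ht0 : 0 < t := by simp only [htdef]; linarith
    have htT : t ≤ T := by simp only [htdef]; linarith
    have hrt : r = t + T := by simp only [htdef]; ring
    -- integrability pieces
    have hkerA1 : ContinuousOn (fun s => (t + T - s)^(β-1) * g s) (Icc 0 T) := by
      apply ContinuousOn.mul _ hgcont
      intro s hs
      exact ((continuous_const.sub continuous_id).continuousWithinAt).rpow_const
        (Or.inl (ne_of_gt (show (0:ℝ) < t + T - s by linarith [hs.2])))
    have intA1' : IntervalIntegrable (fun s => (t + T - s)^(β-1) * g s) volume 0 T := by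
      apply ContinuousOn.intervalIntegrable
      rwa [uIcc_of_le hT.le]
    have haeA1 : (fun s => (t + T - s)^(β-1) * g s)
        =ᵐ[volume.restrict (Set.uIoc (0:ℝ) T)] (fun s => (t + T - s)^(β-1) * h s) := by
      rw [uIoc_of_le hT.le]
      apply (ae_restrict_iff' measurableSet_Ioc).mpr
      apply ae_of_all
      intro s hs
      show (t + T - s)^(β-1) * g s = (t + T - s)^(β-1) * h s
      rw [hgh s hs.1]
    have intA1 : IntervalIntegrable (fun s => (t + T - s)^(β-1) * h s) volume 0 T :=
      intA1'.congr_ae haeA1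
    have intA2 : IntervalIntegrable (fun s => (t + T - s)^(β-1) * h s) volume T (t+T) := by
      have hker : IntervalIntegrable (fun s => (t + T - s)^(β-1)) volume T (t+T) := by
        have h3 : IntervalIntegrable (fun u : ℝ => u ^ (β-1)) volume 0 t :=
          intervalIntegral.intervalIntegrable_rpow' (by linarith)
        have h4 := h3.comp_sub_left (t + T)
        simpa using h4.symm
      obtain ⟨C, hC⟩ := (isCompact_Icc (a := T) (b := t+T)).exists_bound_of_continuousOn
        (hhc.mono (fun u hu' => lt_of_lt_of_le hT hu'.1))
      rw [intervalIntegrable_iff, uIoc_of_le (by linarith : T ≤ t + T)] at hker ⊢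
      have hmeas : AEStronglyMeasurable h (volume.restrict (Ioc T (t+T))) :=
        (hhc.mono (fun u hu' => lt_trans hT hu'.1)).aestronglyMeasurable measurableSet_Ioc
      have hbdd : ∀ᵐ s ∂(volume.restrict (Ioc T (t+T))), ‖h s‖ ≤ C := by
        apply (ae_restrict_iff' measurableSet_Ioc).mpr
        exact ae_of_all _ (fun s hs => hC s (Ioc_subset_Icc_self hs))
      have h5 := MeasureTheory.Integrable.bdd_mul hker hmeas hbdd
      exact h5.congr (ae_of_all _ (fun s => mul_comm _ _))
    have intB : IntervalIntegrable (fun s => (t - s)^(β-1) * h s) volume 0 t := by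
      have hker : IntervalIntegrable (fun s => (t - s)^(β-1)) volume 0 t := by
        have h3 : IntervalIntegrable (fun u : ℝ => u ^ (β-1)) volume 0 t :=
          intervalIntegral.intervalIntegrable_rpow' (by linarith)
        have h4 := h3.comp_sub_left t
        simpa using h4.symm
      obtain ⟨C, hC⟩ := (isCompact_Icc (a := (0:ℝ)) (b := T)).exists_bound_of_continuousOn hgcont
      rw [intervalIntegrable_iff, uIoc_of_le ht0.le] at hker ⊢
      have hmeas : AEStronglyMeasurable h (volume.restrict (Ioc 0 t)) :=
        (hhc.mono (fun u hu' => hu'.1)).aestronglyMeasurable measurableSet_Ioc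
      have hbdd : ∀ᵐ s ∂(volume.restrict (Ioc 0 t)), ‖h s‖ ≤ C := by
        apply (ae_restrict_iff' measurableSet_Ioc).mpr
        apply ae_of_all
        intro s hs
        rw [← hgh s hs.1]
        exact hC s ⟨hs.1.le, le_trans hs.2 htT⟩
      have h5 := MeasureTheory.Integrable.bdd_mul hker hmeas hbdd
      exact h5.congr (ae_of_all _ (fun s => mul_comm _ _))
    -- splitting
    have hsplit : (∫ s in (0:ℝ)..T, (t + T - s)^(β-1) * h s)
        + (∫ s in T..(t+T), (t + T - s)^(β-1) * h s)
        = ∫ s in (0:ℝ)..(t+T), (t + T - s)^(β-1) * h s :=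
      intervalIntegral.integral_add_adjacent_intervals intA1 intA2
    -- change of variables on the second piece
    have hshift : (∫ s in T..(t+T), (t + T - s)^(β-1) * h s)
        = ∫ s in (0:ℝ)..t, (t - s)^(β-1) * h s := by
      have h6 := intervalIntegral.integral_comp_add_right
        (a := (0:ℝ)) (b := t) (fun s => (t + T - s)^(β-1) * h s) T
      rw [zero_add] at h6
      rw [← h6]
      apply intervalIntegral.integral_congr_ae
      apply ae_of_all
      intro s hs
      rw [uIoc_of_le ht0.le] at hs
      show (t + T - (s + T))^(β-1) * h (s + T) = (t - s)^(β-1) * h s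
      rw [show t + T - (s + T) = t - s by ring, hperh s hs.1]
    -- conclude A1 = 0
    have hA1 : (∫ s in (0:ℝ)..T, (t + T - s)^(β-1) * h s) = 0 := by
      have h7 := hint t ht0 htT
      rw [← hsplit, hshift] at h7
      linarith
    -- convert to g and to r
    rw [hrt]
    calc (∫ s in (0:ℝ)..T, (t + T - s)^(β-1) * g s)
        = ∫ s in (0:ℝ)..T, (t + T - s)^(β-1) * h s := by
          apply intervalIntegral.integral_congr_ae
          apply ae_of_all
          intro s hs
          rw [uIoc_of_le hT.le] at hs
          show (t + T - s)^(β-1) * g s = (t + T - s)^(β-1) * h s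
          rw [hgh s hs.1]
      _ = 0 := hA1
  -- g vanishes on [0,T], hence h vanishes on (0,∞)
  have hgzero := eq_zero_of_integral_rpow T hT β hβ1 g hgcont key
  have hhzero : ∀ s : ℝ, 0 < s → h s = 0 := by
    have hbase : ∀ s : ℝ, 0 < s → s ≤ T → h s = 0 := by
      intro s hs hsT
      rw [← hgh s hs]
      exact hgzero s ⟨hs.le, hsT⟩
    have hstep : ∀ k : ℕ, ∀ s : ℝ, 0 < s → s ≤ (k+1) * T → h s = 0 := by
      intro k
      induction k with
      | zero =>
        intro s hs hsT
        apply hbase s hs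
        push_cast at hsT
        linarith
      | succ k ih =>
        intro s hs hsT
        rcases le_or_gt s ((k+1) * T) with hle | hlt
        · exact ih s hs hle
        · have hsT' : 0 < s - T := by
            have hk0 : (0:ℝ) ≤ (k:ℝ) := Nat.cast_nonneg k
            nlinarith [hT.le]
          have := hperh (s - T) hsT'
          rw [sub_add_cancel] at this
          rw [this]
          apply ih (s - T) hsT'
          push_cast at hsT ⊢
          linarith
    intro s hs
    obtain ⟨k, hk⟩ := exists_nat_gt (s / T)
    apply hstep k s hs
    have : s < k * T := by
      rw [div_lt_iff₀ hT] at hk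
      exact hk
    push_cast
    nlinarith [hT.le]
  -- downward induction killing all derivatives
  have down : ∀ d : ℕ, ∀ j : ℕ, j + d = N → 1 ≤ j →
      ∀ s : ℝ, 0 < s → iteratedDeriv j y s = 0 := by
    intro d
    induction d with
    | zero =>
      intro j hj _ s hs
      have : j = N := by omega
      rw [this]
      exact hhzero s hs
    | succ d ih =>
      intro j hj hj1 s hs
      have hnext : ∀ u : ℝ, 0 < u → iteratedDeriv (j+1) y u = 0 :=
        fun u hu => ih (j+1) (by omega) (by omega) u hu
      have hconst : ∀ a ∈ Ioi (0:ℝ), ∀ b ∈ Ioi (0:ℝ),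
          iteratedDeriv j y a = iteratedDeriv j y b := by
        apply const_of_hasDerivAt_zero
        intro u hu
        have h8 := hF1 j (by omega) u hu
        rwa [hnext u hu] at h8
      set c := iteratedDeriv j y T with hc
      have hcval : ∀ u : ℝ, 0 < u → iteratedDeriv j y u = c :=
        fun u hu' => hconst u hu' T hT
      obtain ⟨j', rfl⟩ : ∃ j', j = j' + 1 := ⟨j - 1, by omega⟩
      have hFd : ∀ u ∈ Ioi (0:ℝ),
          HasDerivAt (fun v => iteratedDeriv j' y v - c * v) 0 u := by
        intro u hu'
        have h9 := hF1 j' (by omega) u hu'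
        rw [hcval u hu'] at h9
        have h9' : HasDerivAt (fun v => iteratedDeriv j' y v - c * v) (c - c * 1) u :=
          h9.sub ((hasDerivAt_id u).const_mul c)
        rwa [mul_one, sub_self] at h9'
      have h10 := const_of_hasDerivAt_zero hFd T hT (T + T) (by simp only [mem_Ioi]; linarith)
      have h11 : iteratedDeriv j' y (T + T) = iteratedDeriv j' y T := hpery j' T hT
      have hc0 : c = 0 := by
        try simp only at h10
        rw [h11] at h10
        have hTc : c * T = 0 := by linarith
        rcases mul_eq_zero.mp hTc with h | h
        · exact h
        · exact absurd h (ne_of_gt hT)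
      rw [hcval s hs, hc0]
  -- finish : y' = 0 everywhere on (0,∞)
  have hyder : ∀ u ∈ Ioi (0:ℝ), HasDerivAt y 0 u := by
    intro u hu'
    have h12 := hF1 0 (by omega) u hu'
    rw [iteratedDeriv_zero] at h12
    rwa [down (N - 1) 1 (by omega) le_rfl u hu'] at h12
  exact const_of_hasDerivAt_zero hyder

theorem autonomous_fractional_system_no_periodic_solution
    (p m : ℕ) (α : Fin p → ℝ)
    (hα : ∀ i, 0 < α i) (hαnotint : ∀ i, ∀ k : ℕ, α i ≠ k)
    (n : Fin p → ℕ) (hn : ∀ i, n i = ⌊α i⌋₊ + 1) (hnm : ∀ i, m ≤ n i)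
    (f : (Fin (m + 1) → Fin p → ℝ) → Fin p → ℝ)
    (x : ℝ → Fin p → ℝ)
    (hC : ∀ i, ContDiffOn ℝ (n i) (fun t => x t i) (Ioi 0))
    (hsol : ∀ t > (0:ℝ), ∀ i,
      (1 / Real.Gamma (n i - α i)) *
          ∫ s in (0:ℝ)..t,
            (t - s) ^ ((n i : ℝ) - α i - 1) * iteratedDeriv (n i) (fun u => x u i) s
        = f (fun j i' => iteratedDeriv (j : ℕ) (fun u => x u i') t) i)
    (T : ℝ) (hT : 0 < T)
    (hper : ∀ t > (0:ℝ), x (t + T) = x t) :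
    ∃ c : Fin p → ℝ, ∀ t > (0:ℝ), x t = c := by
  -- periodicity of iterated derivatives of every component
  have hperk : ∀ (k : ℕ) (i' : Fin p) (s : ℝ), 0 < s →
      iteratedDeriv k (fun u => x u i') (s + T) = iteratedDeriv k (fun u => x u i') s := by
    intro k i' s hs
    have h1 : iteratedDeriv k (fun z => (fun u => x u i') (z + T)) s
        = iteratedDeriv k (fun u => x u i') (s + T) :=
      congrFun (iteratedDeriv_comp_add_const k (fun u => x u i') T) s
    rw [← h1]
    apply Filter.EventuallyEq.iteratedDeriv_eq
    filter_upwards [isOpen_Ioi.mem_nhds hs] with u hu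
    show x (u + T) i' = x u i'
    rw [hper u hu]
  refine ⟨x T, fun t ht => funext (fun i => ?_)⟩
  -- parameters for component i
  have hβ0 : 0 < (n i : ℝ) - α i := by
    rw [hn i]
    push_cast
    linarith [Nat.lt_floor_add_one (α i)]
  have hβ1 : (n i : ℝ) - α i < 1 := by
    rw [hn i]
    push_cast
    have h1 : (⌊α i⌋₊ : ℝ) ≤ α i := Nat.floor_le (hα i).le
    have h2 : (⌊α i⌋₊ : ℝ) ≠ α i := fun hEq => hαnotint i ⌊α i⌋₊ hEq.symm
    have h3 : (⌊α i⌋₊ : ℝ) < α i := lt_of_le_of_ne h1 h2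
    linarith
  have hGam : (1 / Real.Gamma ((n i : ℝ) - α i)) ≠ 0 :=
    one_div_ne_zero (ne_of_gt (Real.Gamma_pos_of_pos hβ0))
  have hint : ∀ t : ℝ, 0 < t → t ≤ T →
      (∫ s in (0:ℝ)..(t+T), (t + T - s)^((n i : ℝ) - α i - 1)
          * iteratedDeriv (n i) (fun u => x u i) s)
        = ∫ s in (0:ℝ)..t, (t - s)^((n i : ℝ) - α i - 1)
          * iteratedDeriv (n i) (fun u => x u i) s := by
    intro t ht0 htT
    have h1 := hsol (t + T) (by linarith) i
    have h2 := hsol t ht0 i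
    have harg : (fun j : Fin (m+1) => fun i' => iteratedDeriv (j : ℕ) (fun u => x u i') (t + T))
        = (fun j : Fin (m+1) => fun i' => iteratedDeriv (j : ℕ) (fun u => x u i') t) := by
      funext j i'
      exact hperk (j : ℕ) i' t ht0
    rw [harg, ← h2] at h1
    exact mul_left_cancel₀ hGam h1
  have hmain := component_constant T hT ((n i : ℝ) - α i) hβ0 hβ1 (n i)
    (by rw [hn i]; omega) (fun u => x u i) (hC i)
    (fun k s hs => hperk k i s hs) hint
  exact hmain t ht T hT
end

section
/- Let f : [0,∞) × ℝ^p → ℝ^p be T-periodic in its first argument, α ∈ (0,1)^p non-integer entries, and k a positive integer. Then the system C_D^{α_i} x_i(t) = f_i(t, x(t)) has no non-constant kT-periodic C^1 solution. -/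
open Set MeasureTheory intervalIntegral Polynomial

private lemma ker_intInt {t β a b : ℝ} (hβ : β < 1) :
    IntervalIntegrable (fun s => (t - s) ^ (-β)) volume a b := by
  have h := intervalIntegrable_rpow' (a := t - a) (b := t - b) (r := -β) (by linarith)
  simpa using h.comp_sub_left t

private lemma mul_bdd_intInt {K g : ℝ → ℝ} {a b C : ℝ}
    (hK : IntervalIntegrable K volume a b) (hg : Measurable g)
    (hb : ∀ s ∈ Set.uIoc a b, |g s| ≤ C) :
    IntervalIntegrable (fun s => K s * g s) volume a b := by
  rw [intervalIntegrable_iff] at hK ⊢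
  have hbd : ∀ᵐ s ∂(volume.restrict (Set.uIoc a b)), ‖g s‖ ≤ C := by
    rw [ae_restrict_iff' measurableSet_uIoc]
    exact MeasureTheory.ae_of_all _ fun s hs => by simpa [Real.norm_eq_abs] using hb s hs
  have h2 := MeasureTheory.Integrable.bdd_mul hK (hg.aestronglyMeasurable.restrict) hbd
  exact h2.congr (MeasureTheory.ae_of_all _ fun s => mul_comm _ _)

private lemma periodic_reduce {S : ℝ} (hS : 0 < S) {g : ℝ → ℝ}
    (hper : ∀ s, 0 < s → g (s + S) = g s) :
    ∀ t, 0 < t → ∃ s ∈ Set.Icc S (2 * S), g t = g s := by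
  have key : ∀ n : ℕ, ∀ t, 0 < t → t ≤ ((n : ℝ) + 1) * S →
      ∃ s ∈ Set.Icc S (2 * S), g t = g s := by
    intro n
    induction n with
    | zero =>
      intro t ht hle
      norm_num at hle
      exact ⟨t + S, ⟨by linarith, by linarith⟩, (hper t ht).symm⟩
    | succ n ih =>
      intro t ht hle
      rcases le_or_gt t (((n : ℝ) + 1) * S) with h | h
      · exact ih t ht h
      · have hn0 : (0:ℝ) ≤ (n : ℝ) := Nat.cast_nonneg n
        have h1 : 0 < t - S := by nlinarith
        obtain ⟨s, hs, he⟩ := ih (t - S) h1 (by push_cast at hle ⊢; linarith)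
        refine ⟨s, hs, ?_⟩
        rw [← he, ← hper (t - S) h1, sub_add_cancel]
  intro t ht
  obtain ⟨n, hn⟩ := exists_nat_ge (t / S)
  rw [div_le_iff₀ hS] at hn
  exact key n t ht (by nlinarith)

private lemma kernel_contOn_s19 {S e : ℝ} (r : ℝ) (hr : S < r) :
    ContinuousOn (fun s : ℝ => (r - s) ^ e) (Icc 0 S) := by
  apply ContinuousOn.rpow_const (by fun_prop)
  intro s hs
  exact Or.inl (ne_of_gt (by linarith [hs.2]))

private lemma moment_step {S b : ℝ} (hS : 0 < S) (hb : 0 < b) {G : ℝ → ℝ}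
    (hG : ContinuousOn G (Icc 0 S))
    (h : ∀ r, S < r → ∫ s in (0:ℝ)..S, (r - s) ^ (-b) * G s = 0) :
    ∀ r, S < r → ∫ s in (0:ℝ)..S, (r - s) ^ (-b - 1) * G s = 0 := by
  intro r hr
  set ε := (r - S) / 2 with hε
  have hε0 : 0 < ε := by simp [hε]; linarith
  obtain ⟨C, hC⟩ := (isCompact_Icc (a := (0:ℝ)) (b := S)).exists_bound_of_continuousOn hG
  have hkey : ∀ ρ ∈ Metric.ball r ε, ∀ s ∈ Icc 0 S, ε ≤ ρ - s := by
    intro ρ hρ s hs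
    rw [Metric.mem_ball, Real.dist_eq, abs_lt] at hρ
    have := hs.2
    simp only [hε] at *
    linarith
  have hsub : Set.uIoc (0:ℝ) S ⊆ Icc 0 S := by
    rw [Set.uIoc_of_le hS.le]
    exact Ioc_subset_Icc_self
  have hFd : HasDerivAt (fun ρ => ∫ s in (0:ℝ)..S, (ρ - s) ^ (-b) * G s)
      (∫ s in (0:ℝ)..S, (-b) * (r - s) ^ (-b - 1) * G s) r := by
    have := (hasDerivAt_integral_of_dominated_loc_of_deriv_le (F := fun ρ s => (ρ - s) ^ (-b) * G s)
      (F' := fun ρ s => (-b) * (ρ - s) ^ (-b - 1) * G s) (x₀ := r)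
      (a := (0:ℝ)) (b := S) (μ := volume)
      (bound := fun _ => b * ε ^ (-b - 1) * C) (Metric.ball_mem_nhds r hε0) ?_ ?_ ?_ ?_ ?_ ?_).2
    · exact this
    · filter_upwards [Metric.ball_mem_nhds r hε0] with ρ hρ
      apply ContinuousOn.aestronglyMeasurable _ measurableSet_uIoc
      apply ContinuousOn.mono _ hsub
      have hρ' : S < ρ := by
        rw [Metric.mem_ball, Real.dist_eq, abs_lt] at hρ
        simp only [hε] at hρ
        linarith [hρ.1]
      exact (kernel_contOn_s19 (e := -b) ρ hρ').mul hG
    · apply ContinuousOn.intervalIntegrable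
      rw [Set.uIcc_of_le hS.le]
      exact (kernel_contOn_s19 (e := -b) r hr).mul hG
    · apply ContinuousOn.aestronglyMeasurable _ measurableSet_uIoc
      apply ContinuousOn.mono _ hsub
      exact (continuousOn_const.mul (kernel_contOn_s19 (e := -b-1) r hr)).mul hG
    · apply MeasureTheory.ae_of_all
      intro s hs ρ hρ
      have hs' : s ∈ Icc 0 S := hsub hs
      have h1 : ε ≤ ρ - s := hkey ρ hρ s hs'
      have h2 : (ρ - s) ^ (-b - 1) ≤ ε ^ (-b - 1) :=
        Real.rpow_le_rpow_of_nonpos hε0 h1 (by linarith)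
      have h3 : 0 ≤ (ρ - s) ^ (-b - 1) := Real.rpow_nonneg (by linarith) _
      have h4 : ‖G s‖ ≤ C := hC s hs'
      have h5 : (0:ℝ) ≤ C := le_trans (norm_nonneg _) h4
      calc ‖(-b) * (ρ - s) ^ (-b - 1) * G s‖
          = b * (ρ - s) ^ (-b - 1) * ‖G s‖ := by
            rw [norm_mul, norm_mul]
            simp [abs_of_pos hb, abs_of_nonneg h3, Real.norm_eq_abs]
        _ ≤ b * ε ^ (-b - 1) * C := by
            apply mul_le_mul (mul_le_mul_of_nonneg_left h2 hb.le) h4 (norm_nonneg _)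
            positivity
    · exact intervalIntegrable_const
    · apply MeasureTheory.ae_of_all
      intro s hs ρ hρ
      have h1 : ε ≤ ρ - s := hkey ρ hρ s (hsub hs)
      have hd : HasDerivAt (fun y : ℝ => y ^ (-b)) ((-b) * (ρ - s) ^ (-b - 1)) (ρ - s) := by
        simpa using Real.hasDerivAt_rpow_const (x := ρ - s) (p := -b) (Or.inl (by linarith))
      have hd2 := (hd.comp_sub_const ρ s)
      exact hd2.mul_const (G s)
  have hzero : HasDerivAt (fun ρ => ∫ s in (0:ℝ)..S, (ρ - s) ^ (-b) * G s) 0 r := by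
    apply (hasDerivAt_const r (0:ℝ)).congr_of_eventuallyEq
    filter_upwards [isOpen_Ioi.mem_nhds (show r ∈ Ioi S from hr)] with ρ hρ
    exact h ρ hρ
  have hu : ∫ s in (0:ℝ)..S, (-b) * (r - s) ^ (-b - 1) * G s = 0 := hFd.unique hzero
  have hu2 : ∫ s in (0:ℝ)..S, (-b) * ((r - s) ^ (-b - 1) * G s) = 0 := by
    rw [← hu]; congr 1; ext s; ring
  rw [intervalIntegral.integral_const_mul] at hu2
  have hbne : (-b) ≠ 0 := by linarith
  exact (mul_eq_zero.mp hu2).resolve_left hbne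

private lemma weierstrass_zero {S a : ℝ} (hS : 0 < S) (ha : 0 < a) {G : ℝ → ℝ}
    (hG : ContinuousOn G (Icc 0 S))
    (h : ∀ n : ℕ, ∫ s in (0:ℝ)..S, (2 * S - s) ^ (-(a + (n:ℝ))) * G s = 0) :
    ∀ s ∈ Icc 0 S, G s = 0 := by
  set w : ℝ → ℝ := fun s => (2 * S - s) ^ (-a) with hw
  set u : ℝ → ℝ := fun s => (2 * S - s)⁻¹ with hu
  have hbase : ∀ s ∈ Icc (0:ℝ) S, S ≤ 2 * S - s ∧ 2 * S - s ≤ 2 * S := by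
    intro s hs; exact ⟨by linarith [hs.2], by linarith [hs.1]⟩
  have hwc : ContinuousOn w (Icc 0 S) := kernel_contOn_s19 (2 * S) (by linarith)
  have huc : ContinuousOn u (Icc 0 S) := by
    apply ContinuousOn.inv₀ (by fun_prop)
    intro s hs; exact ne_of_gt (lt_of_lt_of_le hS (hbase s hs).1)
  have huIcc : Set.uIcc (0:ℝ) S = Icc 0 S := Set.uIcc_of_le hS.le
  have key : ∀ n : ℕ, ∫ s in (0:ℝ)..S, w s * (u s) ^ n * G s = 0 := by
    intro n
    refine Eq.trans (intervalIntegral.integral_congr ?_) (h n)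
    intro s hs
    rw [huIcc] at hs
    have hp : 0 < 2 * S - s := lt_of_lt_of_le hS (hbase s hs).1
    simp only [hw, hu]
    rw [neg_add, Real.rpow_add hp, Real.rpow_neg hp.le ((n:ℝ)), Real.rpow_natCast, ← inv_pow]
  have hpoly : ∀ q : ℝ[X], ∫ s in (0:ℝ)..S, w s * q.eval (u s) * G s = 0 := by
    intro q
    have hrw : ∀ s ∈ Set.uIcc (0:ℝ) S,
        w s * q.eval (u s) * G s
          = ∑ i ∈ Finset.range (q.natDegree + 1), q.coeff i * (w s * (u s) ^ i * G s) := by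
      intro s _
      rw [Polynomial.eval_eq_sum_range, Finset.mul_sum, Finset.sum_mul]
      apply Finset.sum_congr rfl
      intro i _; ring
    rw [intervalIntegral.integral_congr hrw, intervalIntegral.integral_finset_sum]
    · refine Finset.sum_eq_zero fun i _ => ?_
      rw [intervalIntegral.integral_const_mul, key i, mul_zero]
    · intro i _
      apply ContinuousOn.intervalIntegrable
      rw [huIcc]
      exact ((continuousOn_const (c := q.coeff i)).mul ((hwc.mul (huc.pow i)).mul hG)).congr
        (fun s hs => by simp only [Pi.mul_apply, Pi.pow_apply])
  obtain ⟨M, hM⟩ := (isCompact_Icc (a := (0:ℝ)) (b := S)).exists_bound_of_continuousOn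
    (hwc.mul hG)
  have hM0 : 0 ≤ M := le_trans (norm_nonneg _) (hM 0 ⟨le_refl _, hS.le⟩)
  set I := ∫ s in (0:ℝ)..S, w s * G s * G s with hI
  have hIle : ∀ ε > (0:ℝ), |I| ≤ M * ε * S := by
    intro ε hε
    have hmap : ∀ y ∈ Icc (2 * S)⁻¹ S⁻¹, 2 * S - y⁻¹ ∈ Icc (0:ℝ) S := by
      intro y hy
      have h2S : (0:ℝ) < (2 * S)⁻¹ := by positivity
      have hy0 : 0 < y := lt_of_lt_of_le h2S hy.1
      have h1 : y⁻¹ ≤ 2 * S := (inv_le_comm₀ hy0 (by linarith)).mpr hy.1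
      have h2 : S ≤ y⁻¹ := (le_inv_comm₀ hS hy0).mpr hy.2
      exact ⟨by linarith, by linarith⟩
    have hφ : ContinuousOn (fun y : ℝ => G (2 * S - y⁻¹)) (Icc (2 * S)⁻¹ S⁻¹) := by
      apply hG.comp
      · apply ContinuousOn.sub continuousOn_const
        apply ContinuousOn.inv₀ continuousOn_id
        intro y hy
        have h2S : (0:ℝ) < (2 * S)⁻¹ := by positivity
        exact ne_of_gt (lt_of_lt_of_le h2S hy.1)
      · exact hmap
    obtain ⟨q, hq⟩ := exists_polynomial_near_of_continuousOn (2 * S)⁻¹ S⁻¹ _ hφ ε hε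
    have happrox : ∀ s ∈ Icc (0:ℝ) S, |q.eval (u s) - G s| < ε := by
      intro s hs
      have hp : 0 < 2 * S - s := lt_of_lt_of_le hS (hbase s hs).1
      have humem : u s ∈ Icc (2 * S)⁻¹ S⁻¹ := by
        constructor
        · exact inv_anti₀ (lt_of_lt_of_le hS (hbase s hs).1) (hbase s hs).2
        · rw [hu]
          exact inv_anti₀ hS (hbase s hs).1
      have := hq (u s) humem
      rwa [show (u s)⁻¹ = 2 * S - s by rw [hu]; simp, show 2 * S - (2 * S - s) = s by ring]
        at this
    have hsplit : I = ∫ s in (0:ℝ)..S, w s * G s * (G s - q.eval (u s)) := by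
      have h1 : I - ∫ s in (0:ℝ)..S, w s * q.eval (u s) * G s
          = ∫ s in (0:ℝ)..S, (w s * G s * G s - w s * q.eval (u s) * G s) := by
        rw [intervalIntegral.integral_sub]
        · apply ContinuousOn.intervalIntegrable; rw [huIcc]
          exact (hwc.mul hG).mul hG
        · apply ContinuousOn.intervalIntegrable; rw [huIcc]
          exact (hwc.mul ((Polynomial.continuous q).comp_continuousOn huc)).mul hG
      rw [hpoly q, sub_zero] at h1
      rw [h1]
      apply intervalIntegral.integral_congr
      intro s _; ring
    rw [hsplit]
    have := intervalIntegral.norm_integral_le_of_norm_le_const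
      (a := (0:ℝ)) (b := S) (C := M * ε)
      (f := fun s => w s * G s * (G s - q.eval (u s))) ?_
    · rw [Real.norm_eq_abs] at this
      calc |∫ s in (0:ℝ)..S, w s * G s * (G s - q.eval (u s))| ≤ M * ε * |S - 0| := this
        _ = M * ε * S := by rw [sub_zero, abs_of_pos hS]
    · intro s hs
      rw [Set.uIoc_of_le hS.le] at hs
      have hs' : s ∈ Icc (0:ℝ) S := ⟨hs.1.le, hs.2⟩
      rw [Real.norm_eq_abs, abs_mul]
      apply mul_le_mul (by rw [← Real.norm_eq_abs]; exact hM s hs')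
        (by rw [abs_sub_comm]; exact (happrox s hs').le) (abs_nonneg _) hM0
  have hIzero : I = 0 := by
    by_contra hne
    have hpos : 0 < |I| := abs_pos.mpr hne
    have hMS : 0 ≤ M * S := by positivity
    rcases eq_or_lt_of_le hMS with heq | hlt
    · have := hIle 1 one_pos
      nlinarith
    · have h1 := hIle (|I| / (2 * (M * S))) (by positivity)
      have h2 : M * (|I| / (2 * (M * S))) * S = |I| / 2 := by
        have hMne : M ≠ 0 := fun h => by simp [h] at hlt
        field_simp
      nlinarith
  intro s0 hs0
  by_contra hne
  set hfun : ℝ → ℝ := fun s => w s * G s * G s with hh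
  have hwpos : ∀ s ∈ Icc (0:ℝ) S, 0 < w s :=
    fun s hs => Real.rpow_pos_of_pos (lt_of_lt_of_le hS (hbase s hs).1) _
  have hwnn : ∀ s ∈ Icc (0:ℝ) S, 0 ≤ hfun s := by
    intro s hs
    have h1 := (hwpos s hs).le
    have h2 : 0 ≤ G s * G s := mul_self_nonneg _
    calc (0:ℝ) ≤ w s * (G s * G s) := mul_nonneg h1 h2
      _ = hfun s := by rw [hh]; ring
  have hc : 0 < hfun s0 := by
    have h1 := hwpos s0 hs0
    have h2 : 0 < G s0 * G s0 := mul_self_pos.mpr hne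
    calc (0:ℝ) < w s0 * (G s0 * G s0) := mul_pos h1 h2
      _ = hfun s0 := by rw [hh]; ring
  have hhc : ContinuousOn hfun (Icc 0 S) := (hwc.mul hG).mul hG
  have hev : {y | hfun s0 / 2 < hfun y} ∈ nhdsWithin s0 (Icc 0 S) := by
    have := (hhc s0 hs0).preimage_mem_nhdsWithin
      (Ioi_mem_nhds (show hfun s0 / 2 < hfun s0 by linarith))
    simpa [Set.preimage] using this
  rw [mem_nhdsWithin] at hev
  obtain ⟨U, hUopen, hUs0, hUsub⟩ := hev
  obtain ⟨δ, hδ0, hball⟩ := Metric.isOpen_iff.mp hUopen s0 hUs0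
  set l := max 0 (s0 - δ / 2) with hl
  set r := min S (s0 + δ / 2) with hrr
  have hl0 : 0 ≤ l := le_max_left _ _
  have hls0 : l ≤ s0 := max_le hs0.1 (by linarith)
  have hs0r : s0 ≤ r := le_min hs0.2 (by linarith)
  have hrS : r ≤ S := min_le_left _ _
  have hlr : l < r := by
    rcases lt_or_ge s0 S with hcase | hcase
    · have : s0 < r := lt_min hcase (by linarith)
      linarith
    · have hs0S : s0 = S := le_antisymm hs0.2 hcase
      have h1 : l < S := max_lt hS (by linarith)
      have h2 : S ≤ r := le_min (le_refl _) (by linarith)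
      linarith
  have hIccsub : Icc l r ⊆ Icc 0 S := fun y hy => ⟨le_trans hl0 hy.1, le_trans hy.2 hrS⟩
  have hballsub : ∀ y ∈ Icc l r, y ∈ Metric.ball s0 δ := by
    intro y hy
    rw [Metric.mem_ball, Real.dist_eq, abs_lt]
    constructor
    · have := le_trans (le_max_right 0 (s0 - δ / 2)) hy.1
      linarith
    · have := le_trans hy.2 (min_le_right S (s0 + δ / 2))
      linarith
  have hlow : ∀ y ∈ Icc l r, hfun s0 / 2 ≤ hfun y := by
    intro y hy
    exact (hUsub ⟨hball (hballsub y hy), hIccsub hy⟩).le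
  have hint : ∀ u v : ℝ, 0 ≤ u → u ≤ v → v ≤ S → IntervalIntegrable hfun volume u v := by
    intro u v h1 h2 h3
    apply ContinuousOn.intervalIntegrable
    apply hhc.mono
    rw [Set.uIcc_of_le h2]
    exact fun y hy => ⟨le_trans h1 hy.1, le_trans hy.2 h3⟩
  have hsplit2 : I = (∫ s in (0:ℝ)..l, hfun s) + (∫ s in l..r, hfun s)
      + (∫ s in r..S, hfun s) := by
    rw [hI]
    rw [intervalIntegral.integral_add_adjacent_intervals
      (hint 0 l (le_refl 0) hl0 (le_trans hls0 hs0.2)) (hint l r hl0 hlr.le hrS)]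
    rw [intervalIntegral.integral_add_adjacent_intervals
      (hint 0 r (le_refl 0) (hl0.trans (hls0.trans hs0r)) hrS)
      (hint r S (hl0.trans (hls0.trans hs0r)) hrS (le_refl S))]
  have hp1 : 0 ≤ ∫ s in (0:ℝ)..l, hfun s :=
    intervalIntegral.integral_nonneg hl0
      (fun y hy => hwnn y ⟨hy.1, le_trans hy.2 (le_trans hls0 hs0.2)⟩)
  have hp3 : 0 ≤ ∫ s in r..S, hfun s :=
    intervalIntegral.integral_nonneg hrS
      (fun y hy => hwnn y ⟨le_trans (hl0.trans (hls0.trans hs0r)) hy.1, hy.2⟩)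
  have hp2 : hfun s0 / 2 * (r - l) ≤ ∫ s in l..r, hfun s := by
    have := intervalIntegral.integral_mono_on (a := l) (b := r) (f := fun _ => hfun s0 / 2)
      (g := hfun) hlr.le intervalIntegrable_const (hint l r hl0 hlr.le hrS) hlow
    rwa [intervalIntegral.integral_const, smul_eq_mul, mul_comm] at this
  have hfinal : 0 < I := by
    rw [hsplit2]
    have : 0 < hfun s0 / 2 * (r - l) := mul_pos (by linarith) (by linarith)
    linarith
  rw [hIzero] at hfinal
  exact lt_irrefl 0 hfinal

theorem nonautonomous_fractional_system_no_periodic_solution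
    (p : ℕ) (α : Fin p → ℝ) (hα0 : ∀ i, 0 < α i) (hα1 : ∀ i, α i < 1)
    (T : ℝ) (hT : 0 < T)
    (f : ℝ → (Fin p → ℝ) → Fin p → ℝ)
    (hfper : ∀ t : ℝ, ∀ y : Fin p → ℝ, f (t + T) y = f t y)
    (k : ℕ) (hk : 0 < k)
    (x : ℝ → Fin p → ℝ)
    (hC : ∀ i, ContDiffOn ℝ 1 (fun t => x t i) (Ioi 0))
    (hsol : ∀ t > (0:ℝ), ∀ i,
      (1 / Real.Gamma (1 - α i)) *
          ∫ s in (0:ℝ)..t, (t - s) ^ (-(α i)) * deriv (fun u => x u i) s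
        = f t (x t) i)
    (hper : ∀ t > (0:ℝ), x (t + (k : ℝ) * T) = x t) :
    ∃ c : Fin p → ℝ, ∀ t > (0:ℝ), x t = c := by
  set S : ℝ := (k : ℝ) * T with hSdef
  have hS : 0 < S := mul_pos (by exact_mod_cast hk) hT
  have hfS : ∀ t y, f (t + S) y = f t y := by
    intro t y
    have hn : ∀ n : ℕ, f (t + (n : ℝ) * T) y = f t y := by
      intro n
      induction n with
      | zero => simp
      | succ n ih =>
        have he : t + ((n : ℝ) + 1) * T = (t + (n : ℝ) * T) + T := by ring
        push_cast
        rw [he, hfper, ih]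
    exact hn k
  refine ⟨x T, fun t ht => ?_⟩
  funext i
  -- the fixed coordinate
  set g : ℝ → ℝ := deriv (fun u => x u i) with hgdef
  have hgc : ContinuousOn g (Ioi 0) := (hC i).continuousOn_deriv_of_isOpen isOpen_Ioi le_rfl
  have hgm : Measurable g := measurable_deriv _
  have hgper : ∀ s, 0 < s → g (s + S) = g s := by
    intro s hs
    have heq : (fun y => x (y + S) i) =ᶠ[nhds s] (fun y => x y i) := by
      filter_upwards [isOpen_Ioi.mem_nhds hs] with y hy
      exact congrFun (hper y hy) i
    have h1 := heq.deriv_eq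
    have h2 : deriv (fun y => x (y + S) i) s = g (s + S) :=
      deriv_comp_add_const (fun u => x u i) S s
    rw [← h2, h1]
  obtain ⟨C, hC2⟩ := (isCompact_Icc (a := S) (b := 2*S)).exists_bound_of_continuousOn
    (hgc.mono (fun y hy => lt_of_lt_of_le hS hy.1))
  have hgb : ∀ s, 0 < s → |g s| ≤ C := by
    intro s hs
    obtain ⟨σ, hσ, he⟩ := periodic_reduce hS hgper s hs
    rw [he, ← Real.norm_eq_abs]
    exact hC2 σ hσ
  have hK : ∀ (t' u v : ℝ), 0 ≤ u → 0 ≤ v →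
      IntervalIntegrable (fun s => (t' - s) ^ (-(α i)) * g s) volume u v := by
    intro t' u v hu hv
    apply mul_bdd_intInt (ker_intInt (hα1 i)) hgm
    intro s hs
    exact hgb s (lt_of_le_of_lt (le_min hu hv) hs.1)
  have hGamma : (1 / Real.Gamma (1 - α i)) ≠ 0 := by
    have := Real.Gamma_pos_of_pos (show 0 < 1 - α i by linarith [hα1 i])
    positivity
  have hI : ∀ t', 0 < t' →
      (∫ s in (0:ℝ)..(t'+S), (t' + S - s) ^ (-(α i)) * g s)
        = ∫ s in (0:ℝ)..t', (t' - s) ^ (-(α i)) * g s := by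
    intro t' ht'
    have h1 := hsol t' ht' i
    have h2 := hsol (t' + S) (by linarith) i
    rw [← hgdef] at h1 h2
    rw [hper t' ht', hfS, ← h1] at h2
    exact mul_left_cancel₀ hGamma h2
  have hB : ∀ r, S < r → ∫ s in (0:ℝ)..S, (r - s) ^ (-(α i)) * g s = 0 := by
    intro r hr
    set t' := r - S with ht'def
    have ht' : 0 < t' := by simp only [ht'def]; linarith
    have hrt : r = t' + S := by simp only [ht'def]; ring
    have hsplit : (∫ s in (0:ℝ)..(t'+S), (t' + S - s) ^ (-(α i)) * g s)
        = (∫ s in (0:ℝ)..S, (t' + S - s) ^ (-(α i)) * g s)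
          + ∫ s in S..(t'+S), (t' + S - s) ^ (-(α i)) * g s :=
      (intervalIntegral.integral_add_adjacent_intervals
        (hK _ 0 S (le_refl 0) hS.le) (hK _ S (t'+S) hS.le (by linarith))).symm
    have hshift : (∫ s in S..(t'+S), (t' + S - s) ^ (-(α i)) * g s)
        = ∫ u in (0:ℝ)..t', (t' - u) ^ (-(α i)) * g (u + S) := by
      have hcomp := intervalIntegral.integral_comp_add_right (a := (0:ℝ)) (b := t')
        (f := fun s => (t' + S - s) ^ (-(α i)) * g s) S
      rw [zero_add] at hcomp
      rw [← hcomp]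
      apply intervalIntegral.integral_congr
      intro u _
      show (t' + S - (u + S)) ^ (-(α i)) * g (u + S) = (t' - u) ^ (-(α i)) * g (u + S)
      have he : t' + S - (u + S) = t' - u := by ring
      rw [he]
    have hgper' : (∫ u in (0:ℝ)..t', (t' - u) ^ (-(α i)) * g (u + S))
        = ∫ u in (0:ℝ)..t', (t' - u) ^ (-(α i)) * g u := by
      apply intervalIntegral.integral_congr_ae
      apply MeasureTheory.ae_of_all
      intro u hu
      rw [Set.uIoc_of_le ht'.le] at hu
      rw [hgper u hu.1]
    have hIeq := hI t' ht'
    rw [hsplit, hshift, hgper'] at hIeq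
    have h0 : ∫ s in (0:ℝ)..S, (t' + S - s) ^ (-(α i)) * g s = 0 := by linarith
    rw [hrt]
    exact h0
  set G : ℝ → ℝ := fun s => g (s + S) with hGdef
  have hGc : ContinuousOn G (Icc 0 S) := by
    apply hgc.comp (by fun_prop)
    intro s hs
    have hpos : (0:ℝ) < s + S := by linarith [hs.1]
    simpa using hpos
  have hmain : ∀ n : ℕ, ∀ r, S < r →
      ∫ s in (0:ℝ)..S, (r - s) ^ (-(α i + (n:ℝ))) * G s = 0 := by
    intro n
    induction n with
    | zero =>
      intro r hr
      have hBr := hB r hr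
      refine Eq.trans (intervalIntegral.integral_congr_ae ?_) hBr
      apply MeasureTheory.ae_of_all
      intro s hs
      rw [Set.uIoc_of_le hS.le] at hs
      have hGs : G s = g s := by
        simp only [hGdef]
        rw [hgper s hs.1]
      rw [hGs, show -(α i + ((0:ℕ):ℝ)) = -(α i) by push_cast; ring]
    | succ n ih =>
      intro r hr
      have hb : 0 < α i + (n:ℝ) := by
        have := Nat.cast_nonneg (α := ℝ) n
        linarith [hα0 i]
      have hstep := moment_step hS hb hGc ih r hr
      rw [show -(α i + ((n:ℕ):ℝ)) - 1 = -(α i + (((n+1):ℕ):ℝ)) by push_cast; ring] at hstep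
      exact hstep
  have hBG : ∀ n : ℕ, ∫ s in (0:ℝ)..S, (2*S - s) ^ (-(α i + (n:ℝ))) * G s = 0 :=
    fun n => hmain n (2*S) (by linarith)
  have hGzero : ∀ s ∈ Icc (0:ℝ) S, G s = 0 := weierstrass_zero hS (hα0 i) hGc hBG
  have hgbase : ∀ σ ∈ Icc S (2*S), g σ = 0 := by
    intro σ hσ
    have := hGzero (σ - S) ⟨by linarith [hσ.1], by linarith [hσ.2]⟩
    rw [hGdef] at this
    simpa [sub_add_cancel] using this
  have hgzero : ∀ t', 0 < t' → g t' = 0 := by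
    intro t' ht'
    obtain ⟨σ, hσ, he⟩ := periodic_reduce hS hgper t' ht'
    rw [he]
    exact hgbase σ hσ
  -- conclude constancy
  rcases eq_or_ne t T with rfl | htT
  · rfl
  have hm : 0 < min t T := lt_min ht hT
  have hmM : min t T < max t T := min_lt_max.mpr htT
  have hsub : Icc (min t T) (max t T) ⊆ Ioi (0:ℝ) := fun y hy => lt_of_lt_of_le hm hy.1
  have hdiff : DifferentiableOn ℝ (fun u => x u i) (Icc (min t T) (max t T)) :=
    ((hC i).differentiableOn one_ne_zero).mono hsub
  have hzero : ∀ y ∈ Ico (min t T) (max t T),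
      derivWithin (fun u => x u i) (Icc (min t T) (max t T)) y = 0 := by
    intro y hy
    have hy0 : 0 < y := lt_of_lt_of_le hm hy.1
    have hda : DifferentiableAt ℝ (fun u => x u i) y :=
      ((hC i).differentiableOn one_ne_zero).differentiableAt (isOpen_Ioi.mem_nhds hy0)
    rw [hda.derivWithin ((uniqueDiffOn_Icc hmM) y ⟨hy.1, hy.2.le⟩)]
    exact hgzero y hy0
  have h1 := constant_of_derivWithin_zero hdiff hzero
  have h2 := h1 t ⟨min_le_left t T, le_max_left t T⟩
  have h3 := h1 T ⟨min_le_right t T, le_max_right t T⟩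
  rw [h2, h3]
end
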